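/- arXiv:2206.09234 — 6 statements merged into one kernel-verified Lean document; each statement's English description precedes it below -/
import Mathlib

section
/- Let z ∈ ℂ with |z| ≤ 1 and z ≠ 1, and let w ∈ ℂ∖ℤ_{≤0}. Then there exists an entire function f : ℂ → ℂ such that f(s) = Φ₀(z,s,w) for all s with Re(s) > 1. -/
open Complex

/-- The Lerch zeta series `Φ₀(z,s,w) = ∑_{n=0}^∞ z^n (n+w)^{−s}` (complex power). -/
noncomputable def lerch (z s w : ℂ) : ℂ := ∑' n : ℕ, z ^ n * ((n : ℂ) + w) ^ (-s)

/-- The non-positive integers viewed inside `ℂ`. -/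
def negInts : Set ℂ := {w : ℂ | ∃ n : ℕ, w = -(n : ℂ)}

namespace LerchAux

/-- Iterated forward differences of `x ↦ (x+w)^{-s}`. -/
noncomputable def A (w : ℂ) : ℕ → ℝ → ℂ → ℂ
  | 0 => fun x s => ((x : ℂ) + w) ^ (-s)
  | (k+1) => fun x s => A w k x s - A w k (x + 1) s

/-- Majorant constant. -/
noncomputable def M : ℕ → ℂ → ℝ
  | 0 => fun s => Real.exp (Real.pi * |s.im|)
  | (k+1) => fun s => ‖s‖ * M k (s + 1)

lemma M_nonneg (k : ℕ) (s : ℂ) : 0 ≤ M k s := by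
  induction k generalizing s with
  | zero => exact (Real.exp_pos _).le
  | succ k ih => exact mul_nonneg (norm_nonneg _) (ih _)

lemma abs_lower (w : ℂ) (x : ℝ) (hx : 0 ≤ x) :
    x - ‖w‖ ≤ ‖(x : ℂ) + w‖ := by
  have h1 : ‖(x:ℂ)‖ ≤ ‖(x:ℂ) + w‖ + ‖w‖ := by
    simpa using norm_add_le ((x:ℂ) + w) (-w)
  have h2 : ‖(x:ℂ)‖ = x := by
    rw [Complex.norm_real, Real.norm_of_nonneg hx]
  linarith

lemma abs_upper (w : ℂ) (x : ℝ) (hx : 0 ≤ x) :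
    ‖(x : ℂ) + w‖ ≤ x + ‖w‖ := by
  have h1 := norm_add_le ((x:ℂ)) w
  have h2 : ‖(x:ℂ)‖ = x := by
    rw [Complex.norm_real, Real.norm_of_nonneg hx]
  linarith

lemma ne_zero_of_big (w : ℂ) (x : ℝ) (hx : ‖w‖ + 1 ≤ x) : (x : ℂ) + w ≠ 0 := by
  intro h
  have h0 : (0:ℝ) ≤ ‖w‖ := norm_nonneg w
  have := abs_lower w x (by linarith)
  rw [h, norm_zero] at this
  linarith

lemma slit_of_big (w : ℂ) (x : ℝ) (hx : ‖w‖ + 1 ≤ x) :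
    ((x : ℂ) + w) ∈ Complex.slitPlane := by
  rw [Complex.mem_slitPlane_iff]
  left
  have : -‖w‖ ≤ w.re := by
    have := Complex.abs_re_le_norm w
    have := neg_abs_le w.re
    linarith [abs_le.1 (le_refl |w.re|)]
  simp only [Complex.add_re, Complex.ofReal_re]
  linarith

/-- Derivative of `A` in the real variable. -/
lemma A_deriv (w : ℂ) (k : ℕ) : ∀ (s : ℂ) (x : ℝ), ‖w‖ + 1 ≤ x →
    HasDerivAt (fun y : ℝ => A w k y s) (-s * A w k x (s + 1)) x := by
  induction k with
  | zero =>
    intro s x hx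
    have hmem := slit_of_big w x hx
    have h1 : HasDerivAt (fun u : ℂ => (u + w) ^ (-s))
        ((-s) * ((x:ℂ) + w) ^ (-s - 1) * 1) (x : ℝ) :=
      ((hasDerivAt_id ((x:ℝ):ℂ)).add_const w).cpow_const hmem
    have h2 := h1.comp_ofReal
    have : (-s) * ((x:ℂ) + w) ^ (-s - 1) * 1 = -s * A w 0 x (s + 1) := by
      rw [mul_one]
      congr 1
      show ((x:ℂ) + w) ^ (-s - 1) = ((x:ℂ) + w) ^ (-(s+1))
      ring_nf
    rw [this] at h2
    exact h2
  | succ k ih =>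
    intro s x hx
    have h1 := ih s x hx
    have h2 : HasDerivAt (fun y : ℝ => A w k (y + 1) s) (-s * A w k (x + 1) (s + 1)) x := by
      have hx1 : ‖w‖ + 1 ≤ x + 1 := by linarith
      have := (ih s (x + 1) hx1).scomp x ((hasDerivAt_id x).add_const 1)
      simpa [Function.comp_def] using this
    have h3 := h1.sub h2
    have : -s * A w k x (s+1) - -s * A w k (x+1) (s+1) = -s * A w (k+1) x (s + 1) := by
      show _ = -s * (A w k x (s+1) - A w k (x+1) (s+1))
      ring
    rw [this] at h3
    exact h3

lemma rpow_le_max {a b t c : ℝ} (ha : 0 < a) (hat : a ≤ t) (htb : t ≤ b) :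
    t ^ c ≤ max (a ^ c) (b ^ c) := by
  rcases le_or_gt 0 c with hc | hc
  · exact le_max_of_le_right (Real.rpow_le_rpow (by linarith) htb hc)
  · exact le_max_of_le_left (Real.rpow_le_rpow_of_nonpos ha hat hc.le)

/-- The key bound on iterated differences. -/
lemma A_bound (w : ℂ) (k : ℕ) : ∀ (s : ℂ) (x : ℝ), ‖w‖ + 1 ≤ x →
    ‖A w k x s‖ ≤ M k s * max ((x - ‖w‖) ^ (-s.re - k))
      ((x + ‖w‖ + k) ^ (-s.re - k)) := by
  set R := ‖w‖ with hR
  have hR0 : 0 ≤ R := norm_nonneg w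
  induction k with
  | zero =>
    intro s x hx
    have hx0 : (0:ℝ) ≤ x := by linarith
    have hne := ne_zero_of_big w x hx
    have habs : ‖A w 0 x s‖ =
        ‖(x:ℂ) + w‖ ^ (-s.re) / Real.exp (Complex.arg ((x:ℂ)+w) * (-s).im) := by
      show ‖((x:ℂ) + w) ^ (-s)‖ = _
      rw [Complex.norm_cpow_of_ne_zero hne]
      norm_num
    have hexp : (Real.exp (Complex.arg ((x:ℂ)+w) * (-s).im))⁻¹ ≤ Real.exp (Real.pi * |s.im|) := by
      rw [← Real.exp_neg]
      apply Real.exp_le_exp.2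
      have h1 : |Complex.arg ((x:ℂ)+w) * (-s).im| ≤ Real.pi * |s.im| := by
        rw [abs_mul]
        apply mul_le_mul (Complex.abs_arg_le_pi _) (by simp) (abs_nonneg _) Real.pi_pos.le
      have := neg_abs_le (Complex.arg ((x:ℂ)+w) * (-s).im)
      have := le_abs_self (Complex.arg ((x:ℂ)+w) * (-s).im)
      linarith
    have hbase : ‖(x:ℂ)+w‖ ^ (-s.re) ≤
        max ((x - R) ^ (-s.re)) ((x + R) ^ (-s.re)) :=
      rpow_le_max (by linarith) (abs_lower w x hx0) (abs_upper w x hx0)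
    calc ‖A w 0 x s‖ = ‖(x:ℂ)+w‖ ^ (-s.re) *
          (Real.exp (Complex.arg ((x:ℂ)+w) * (-s).im))⁻¹ := by rw [habs, div_eq_mul_inv]
      _ ≤ (max ((x - R) ^ (-s.re)) ((x + R) ^ (-s.re))) * Real.exp (Real.pi * |s.im|) := by
          apply mul_le_mul hbase hexp (by positivity)
            (le_trans (Real.rpow_nonneg (by linarith : (0:ℝ) ≤ x - R) (-s.re)) (le_max_left _ _))
      _ = M 0 s * max ((x - R) ^ (-s.re - (0:ℕ))) ((x + R + (0:ℕ)) ^ (-s.re - (0:ℕ))) := by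
          show _ = Real.exp (Real.pi * |s.im|) * _
          push_cast
          ring_nf
      _ = _ := by norm_num
  | succ k ih =>
    intro s x hx
    have hx0 : 0 < x - R := by linarith
    set e : ℝ := -s.re - (k+1 : ℕ) with he
    have heval : e = -(s+1).re - k := by
      rw [he]; push_cast; simp [Complex.add_re]; ring
    set C : ℝ := ‖s‖ * M k (s+1) * max ((x - R) ^ e) ((x + R + (k+1:ℕ)) ^ e) with hC
    have bound : ∀ y ∈ Set.Icc x (x+1), ‖-s * A w k y (s+1)‖ ≤ C := by
      intro y hy
      obtain ⟨hy1, hy2⟩ := hy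
      have hyx : ‖w‖ + 1 ≤ y := le_trans hx hy1
      have h1 := ih (s+1) y hyx
      have harm1 : (y - R) ^ (-(s+1).re - k) ≤ max ((x - R) ^ e) ((x + R + (k+1:ℕ)) ^ e) := by
        rw [← heval]
        apply rpow_le_max hx0 (by linarith)
        push_cast; linarith
      have harm2 : (y + R + k) ^ (-(s+1).re - k) ≤ max ((x - R) ^ e) ((x + R + (k+1:ℕ)) ^ e) := by
        rw [← heval]
        apply rpow_le_max hx0 (by linarith)
        push_cast; linarith
      have h2 : max ((y - R) ^ (-(s+1).re - k)) ((y + R + k) ^ (-(s+1).re - k)) ≤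
          max ((x - R) ^ e) ((x + R + (k+1:ℕ)) ^ e) := max_le harm1 harm2
      calc ‖-s * A w k y (s+1)‖ = ‖s‖ * ‖A w k y (s+1)‖ := by
            rw [norm_mul, norm_neg]
        _ ≤ ‖s‖ * (M k (s+1) * max ((y - R) ^ (-(s+1).re - k)) ((y + R + k) ^ (-(s+1).re - k))) :=
            mul_le_mul_of_nonneg_left h1 (norm_nonneg _)
        _ ≤ ‖s‖ * (M k (s+1) * max ((x - R) ^ e) ((x + R + (k+1:ℕ)) ^ e)) := by
            apply mul_le_mul_of_nonneg_left _ (norm_nonneg _)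
            exact mul_le_mul_of_nonneg_left h2 (M_nonneg _ _)
        _ = C := by rw [hC]; ring
    have hmv := Convex.norm_image_sub_le_of_norm_hasDerivWithin_le
      (f := fun y : ℝ => A w k y s) (f' := fun y => -s * A w k y (s+1))
      (s := Set.Icc x (x+1)) (C := C)
      (fun y hy => (A_deriv w k s y (le_trans hx hy.1)).hasDerivWithinAt)
      bound (convex_Icc _ _)
      (Set.mem_Icc.2 ⟨le_refl x, by linarith⟩)
      (Set.mem_Icc.2 ⟨by linarith, le_refl (x+1)⟩)
    have : ‖A w (k+1) x s‖ = ‖A w k (x+1) s - A w k x s‖ := by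
      show ‖A w k x s - A w k (x+1) s‖ = _
      rw [norm_sub_rev]
    rw [this]
    calc ‖A w k (x+1) s - A w k x s‖ ≤ C * ‖(x+1) - x‖ := hmv
      _ = C := by norm_num
      _ = M (k+1) s * max ((x - R) ^ (-s.re - (k+1:ℕ))) ((x + R + (k+1:ℕ)) ^ (-s.re - (k+1:ℕ))) := by
          rw [hC, he]
          show _ = ‖s‖ * M k (s+1) * _
          ring

/-- `A` is entire in `s`. -/
lemma A_diff_s (w : ℂ) (k : ℕ) : ∀ x : ℝ, (∀ j : ℕ, (x : ℂ) + j + w ≠ 0) →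
    Differentiable ℂ (fun s => A w k x s) := by
  induction k with
  | zero =>
    intro x hx
    have h0 : (x:ℂ) + w ≠ 0 := by simpa using hx 0
    have : Differentiable ℂ (fun s : ℂ => ((x:ℂ) + w) ^ (-s)) :=
      (differentiable_id.neg).const_cpow (Or.inl h0)
    exact this
  | succ k ih =>
    intro x hx
    have hx1 : ∀ j : ℕ, ((x + 1 : ℝ) : ℂ) + j + w ≠ 0 := by
      intro j hc
      apply hx (j + 1)
      rw [← hc]
      push_cast
      ring
    exact (ih x hx).sub (ih (x+1) hx1)

variable (z w : ℂ)

/-- The `k`-th differenced Lerch series. -/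
noncomputable def D (k : ℕ) (s : ℂ) : ℂ := ∑' n : ℕ, z ^ n * A w k (n : ℝ) s

lemma summable_A (hz1 : ‖z‖ ≤ 1) (k : ℕ) (s : ℂ) (c : ℝ) (hc : 0 ≤ c)
    (hs : 1 - (k:ℝ) < s.re) : Summable (fun n : ℕ => z ^ n * A w k ((n : ℝ) + c) s) := by
  set R := ‖w‖ with hR
  have hR0 : 0 ≤ R := norm_nonneg w
  set p : ℝ := s.re + k with hp
  have hp1 : 1 < p := by rw [hp]; linarith
  apply Summable.of_norm_bounded_eventually_nat (g := fun n => (M k s * (2:ℝ) ^ p) * (n:ℝ) ^ (-p))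
  · exact ((Real.summable_nat_rpow.2 (by linarith)).mul_left _)
  · rw [Filter.eventually_atTop]
    refine ⟨⌈2*R+2⌉₊, fun n hn => ?_⟩
    have hn' : 2*R+2 ≤ (n:ℝ) := le_trans (Nat.le_ceil _) (Nat.cast_le.2 hn)
    have hx : R + 1 ≤ (n:ℝ) + c := by linarith
    have h1 : ‖z ^ n * A w k ((n:ℝ) + c) s‖ ≤ ‖A w k ((n:ℝ) + c) s‖ := by
      rw [norm_mul, norm_pow]
      have : ‖z‖ ^ n ≤ 1 := pow_le_one₀ (norm_nonneg z) hz1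
      calc ‖z‖ ^ n * ‖A w k ((n:ℝ) + c) s‖ ≤ 1 * ‖A w k ((n:ℝ) + c) s‖ :=
            mul_le_mul_of_nonneg_right this (norm_nonneg _)
        _ = _ := one_mul _
    have h2 := A_bound w k s ((n:ℝ) + c) hx
    have hbase : 0 < (n:ℝ) + c - R := by linarith
    have harm : ((n:ℝ) + c + R + k) ^ (-s.re - k) ≤ ((n:ℝ) + c - R) ^ (-s.re - k) := by
      have hk : (0:ℝ) ≤ (k:ℝ) := Nat.cast_nonneg k
      apply Real.rpow_le_rpow_of_nonpos hbase (by linarith) (by linarith)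
    have hmax : max (((n:ℝ) + c - R) ^ (-s.re - k)) (((n:ℝ) + c + R + k) ^ (-s.re - k)) =
        ((n:ℝ) + c - R) ^ (-s.re - k) := max_eq_left harm
    have h3 : ((n:ℝ) + c - R) ^ (-s.re - k) ≤ (2:ℝ) ^ p * (n:ℝ) ^ (-p) := by
      have hnp : 0 < (n:ℝ) := by linarith
      have hhalf : (n:ℝ)/2 ≤ (n:ℝ) + c - R := by linarith
      have e1 : -s.re - (k:ℝ) = -p := by rw [hp]; ring
      rw [e1]
      calc ((n:ℝ) + c - R) ^ (-p) ≤ ((n:ℝ)/2) ^ (-p) :=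
            Real.rpow_le_rpow_of_nonpos (by linarith) hhalf (by linarith)
        _ = (n:ℝ) ^ (-p) / (2:ℝ) ^ (-p) := Real.div_rpow hnp.le (by norm_num : (0:ℝ) ≤ 2) (-p)
        _ = (2:ℝ) ^ p * (n:ℝ) ^ (-p) := by
            rw [Real.rpow_neg (by norm_num : (0:ℝ) ≤ 2), div_inv_eq_mul]
            ring
    calc ‖z ^ n * A w k ((n:ℝ) + c) s‖ ≤ ‖A w k ((n:ℝ) + c) s‖ := h1
      _ ≤ M k s * (((n:ℝ) + c - R) ^ (-s.re - k)) := by rw [hmax] at h2; exact h2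
      _ ≤ M k s * ((2:ℝ) ^ p * (n:ℝ) ^ (-p)) := mul_le_mul_of_nonneg_left h3 (M_nonneg _ _)
      _ = (M k s * (2:ℝ) ^ p) * (n:ℝ) ^ (-p) := by ring

lemma summable_A0 (hz1 : ‖z‖ ≤ 1) (k : ℕ) (s : ℂ)
    (hs : 1 - (k:ℝ) < s.re) : Summable (fun n : ℕ => z ^ n * A w k (n : ℝ) s) := by
  have := summable_A z w hz1 k s 0 le_rfl hs
  simpa using this

/-- The fundamental recursion. -/
lemma D_rec (hz1 : ‖z‖ ≤ 1) (k : ℕ) (s : ℂ) (hs : 1 - (k:ℝ) < s.re) :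
    (1 - z) * D z w k s = A w k 0 s - z * D z w (k+1) s := by
  have h0 : Summable (fun n : ℕ => z ^ n * A w k (n:ℝ) s) := summable_A0 z w hz1 k s hs
  have h1 : Summable (fun n : ℕ => z ^ n * A w k ((n:ℝ) + 1) s) :=
    summable_A z w hz1 k s 1 zero_le_one hs
  have e2 : D z w k s = A w k 0 s + ∑' n : ℕ, z ^ (n+1) * A w k ((n:ℝ) + 1) s := by
    rw [D, h0.tsum_eq_zero_add]
    congr 1
    · norm_num
    · apply tsum_congr; intro n; push_cast; ring_nf
  have e1 : z * D z w k s = ∑' n : ℕ, z ^ (n+1) * A w k (n:ℝ) s := by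
    rw [D, ← tsum_mul_left]
    apply tsum_congr; intro n; ring
  have hs1 : Summable (fun n : ℕ => z ^ (n+1) * A w k ((n:ℝ)+1) s) := by
    apply Summable.congr (h1.mul_left z)
    intro n; ring
  have hs2 : Summable (fun n : ℕ => z ^ (n+1) * A w k (n:ℝ) s) := by
    apply Summable.congr (h0.mul_left z)
    intro n; ring
  have e3 : ∑' n : ℕ, z ^ (n+1) * A w k (n:ℝ) s - ∑' n : ℕ, z ^ (n+1) * A w k ((n:ℝ)+1) s
      = z * D z w (k+1) s := by
    rw [← hs2.tsum_sub hs1, D, ← tsum_mul_left]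
    apply tsum_congr; intro n
    show z ^ (n+1) * A w k (n:ℝ) s - z ^ (n+1) * A w k ((n:ℝ)+1) s
      = z * (z ^ n * (A w k (n:ℝ) s - A w k ((n:ℝ)+1) s))
    ring
  have expand : (1 - z) * D z w k s = D z w k s - z * D z w k s := by ring
  rw [expand, e1, e2, ← e3]
  ring

lemma M_le (k : ℕ) : ∀ (s : ℂ) (r t : ℝ), ‖s‖ ≤ r → |s.im| ≤ t →
    M k s ≤ (r + k) ^ k * Real.exp (Real.pi * t) := by
  induction k with
  | zero =>
    intro s r t hr ht
    simp only [M, Nat.cast_zero, add_zero, pow_zero, one_mul]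
    exact Real.exp_le_exp.2 (mul_le_mul_of_nonneg_left ht Real.pi_pos.le)
  | succ k ih =>
    intro s r t hr ht
    have hr0 : 0 ≤ r := le_trans (norm_nonneg s) hr
    have h1 : ‖s + 1‖ ≤ r + 1 := by
      calc ‖s + 1‖ ≤ ‖s‖ + ‖(1:ℂ)‖ := norm_add_le s 1
        _ = ‖s‖ + 1 := by norm_num
        _ ≤ r + 1 := by linarith
    have h2 : |(s+1).im| ≤ t := by
      simpa [Complex.add_im] using ht
    have h3 := ih (s+1) (r+1) t h1 h2
    show ‖s‖ * M k (s+1) ≤ _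
    calc ‖s‖ * M k (s+1) ≤ r * ((r + 1 + k) ^ k * Real.exp (Real.pi * t)) := by
          apply mul_le_mul hr h3 (M_nonneg _ _) hr0
      _ ≤ (r + (k+1:ℕ)) * ((r + (k+1:ℕ)) ^ k * Real.exp (Real.pi * t)) := by
          apply mul_le_mul (by push_cast; linarith) _ (by positivity) (by push_cast; linarith)
          apply mul_le_mul_of_nonneg_right _ (Real.exp_pos _).le
          apply pow_le_pow_left₀ (by linarith) (by push_cast; linarith)
      _ = (r + (k+1:ℕ)) ^ (k+1) * Real.exp (Real.pi * t) := by ring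

lemma shift_ne (hw : w ∉ negInts) (m : ℕ) : ∀ j : ℕ, ((m:ℝ) : ℂ) + j + w ≠ 0 := by
  intro j hc
  apply hw
  refine ⟨m + j, ?_⟩
  push_cast
  push_cast at hc
  linear_combination hc

lemma D_diffAt (hz1 : ‖z‖ ≤ 1) (hw : w ∉ negInts) (k : ℕ) (s₀ : ℂ)
    (hs : 1 - (k:ℝ) < s₀.re) : DifferentiableAt ℂ (D z w k) s₀ := by
  set R := ‖w‖ with hRdef
  have hR0 : 0 ≤ R := norm_nonneg w
  set δ : ℝ := (s₀.re - (1 - (k:ℝ))) / 2 with hδdef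
  have hδ0 : 0 < δ := by rw [hδdef]; linarith
  set σ : ℝ := s₀.re - δ with hσdef
  have hσ : 1 - (k:ℝ) < σ := by rw [hσdef, hδdef]; linarith
  set N : ℕ := ⌈2*R+2⌉₊ with hNdef
  have hN : 2*R+2 ≤ (N:ℝ) := Nat.le_ceil _
  set B : ℝ := (‖s₀‖ + δ + k) ^ k * Real.exp (Real.pi * (|s₀.im| + δ)) with hBdef
  have memball : ∀ s ∈ Metric.ball s₀ δ, σ < s.re ∧ ‖s‖ ≤ ‖s₀‖ + δ ∧ |s.im| ≤ |s₀.im| + δ := by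
    intro s hs'
    rw [Metric.mem_ball, dist_eq_norm] at hs'
    have hre : |(s - s₀).re| ≤ ‖s - s₀‖ := Complex.abs_re_le_norm _
    have him : |(s - s₀).im| ≤ ‖s - s₀‖ := Complex.abs_im_le_norm _
    rw [Complex.sub_re] at hre
    rw [Complex.sub_im] at him
    have h1 := abs_le.1 hre
    have h2 := abs_le.1 him
    refine ⟨by rw [hσdef]; linarith [h1.1], ?_, ?_⟩
    · calc ‖s‖ = ‖s₀ + (s - s₀)‖ := by ring_nf
        _ ≤ ‖s₀‖ + ‖s - s₀‖ := norm_add_le _ _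
        _ ≤ ‖s₀‖ + δ := by linarith
    · have := abs_le.1 (le_refl |s₀.im|)
      have habs : |s.im| ≤ |s₀.im| + |s.im - s₀.im| := by
        calc |s.im| = |s₀.im + (s.im - s₀.im)| := by ring_nf
          _ ≤ |s₀.im| + |s.im - s₀.im| := abs_add_le _ _
      linarith [abs_le.2 h2]
  set g : ℂ → ℂ := fun s => ∑' n : ℕ, z ^ (n + N) * A w k (((n + N : ℕ) : ℝ)) s with hgdef
  have hg : DifferentiableOn ℂ g (Metric.ball s₀ δ) := by
    apply differentiableOn_tsum_of_summable_norm
      (u := fun n : ℕ => B * ((n:ℝ) + 1) ^ (-(σ + k)))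
    · apply Summable.mul_left
      have base : Summable (fun n : ℕ => ((n:ℝ)) ^ (-(σ + k))) :=
        Real.summable_nat_rpow.2 (by linarith)
      have := (summable_nat_add_iff 1).2 base
      apply Summable.congr this
      intro n; push_cast; norm_num
    · intro n
      apply Differentiable.differentiableOn
      exact (A_diff_s w k _ (shift_ne w hw (n + N))).const_mul _
    · exact Metric.isOpen_ball
    · intro n s hs'
      obtain ⟨hre, hnorm, him⟩ := memball s hs'
      have hMle : M k s ≤ B := M_le k s (‖s₀‖ + δ) (|s₀.im| + δ) hnorm him
      have hB0 : 0 ≤ B := le_trans (M_nonneg k s) hMle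
      have hx : R + 1 ≤ ((n + N : ℕ) : ℝ) := by
        push_cast; linarith
      have h2 := A_bound w k s ((n + N : ℕ) : ℝ) hx
      have hbase0 : 0 < ((n + N : ℕ) : ℝ) - R := by push_cast; linarith
      have hbig : 1 ≤ ((n + N : ℕ) : ℝ) - R := by push_cast; linarith
      have hpk : 0 < s.re + k := by linarith
      have harm : (((n + N : ℕ) : ℝ) + R + k) ^ (-s.re - k) ≤
          (((n + N : ℕ) : ℝ) - R) ^ (-s.re - k) :=
        Real.rpow_le_rpow_of_nonpos hbase0 (by push_cast; linarith) (by linarith)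
      have hmax := max_eq_left harm
      have step1 : ‖z ^ (n + N) * A w k (((n + N : ℕ)):ℝ) s‖ ≤
          M k s * ((((n + N : ℕ) : ℝ) - R) ^ (-s.re - k)) := by
        rw [hmax] at h2
        calc ‖z ^ (n + N) * A w k (((n + N : ℕ)):ℝ) s‖
            ≤ ‖A w k (((n + N : ℕ)):ℝ) s‖ := by
              rw [norm_mul, norm_pow]
              have : ‖z‖ ^ (n+N) ≤ 1 := pow_le_one₀ (norm_nonneg z) hz1
              calc ‖z‖ ^ (n+N) * ‖A w k (((n + N : ℕ)):ℝ) s‖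
                  ≤ 1 * ‖A w k (((n + N : ℕ)):ℝ) s‖ :=
                    mul_le_mul_of_nonneg_right this (norm_nonneg _)
                _ = _ := one_mul _
          _ ≤ _ := h2
      have step2 : ((((n + N : ℕ) : ℝ) - R)) ^ (-s.re - k) ≤ ((n:ℝ) + 1) ^ (-(σ + k)) := by
        calc ((((n + N : ℕ) : ℝ) - R)) ^ (-s.re - k)
            ≤ ((((n + N : ℕ) : ℝ) - R)) ^ (-(σ + k)) := by
              apply Real.rpow_le_rpow_of_exponent_le hbig
              linarith
          _ ≤ ((n:ℝ) + 1) ^ (-(σ + k)) := by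
              apply Real.rpow_le_rpow_of_nonpos (by positivity) (by push_cast; linarith)
              linarith
      calc ‖z ^ (n + N) * A w k (((n + N : ℕ)):ℝ) s‖
          ≤ M k s * ((((n + N : ℕ) : ℝ) - R) ^ (-s.re - k)) := step1
        _ ≤ B * (((n:ℝ) + 1) ^ (-(σ + k))) := by
            apply mul_le_mul hMle step2 (by positivity) hB0
  have heq : ∀ s ∈ Metric.ball s₀ δ,
      D z w k s = (∑ n ∈ Finset.range N, z ^ n * A w k (n:ℝ) s) + g s := by
    intro s hs'
    obtain ⟨hre, -, -⟩ := memball s hs'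
    have hsum : Summable (fun n : ℕ => z ^ n * A w k (n:ℝ) s) :=
      summable_A0 z w hz1 k s (by linarith)
    rw [D, ← hsum.sum_add_tsum_nat_add N]
  have hgd : DifferentiableAt ℂ g s₀ :=
    hg.differentiableAt (Metric.isOpen_ball.mem_nhds (Metric.mem_ball_self hδ0))
  have hfin : DifferentiableAt ℂ
      (fun s => (∑ n ∈ Finset.range N, z ^ n * A w k (n:ℝ) s)) s₀ := by
    apply DifferentiableAt.fun_sum
    intro n _
    exact ((A_diff_s w k _ (shift_ne w hw n)).const_mul _).differentiableAt
  apply DifferentiableAt.congr_of_eventuallyEq (hfin.add hgd)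
  filter_upwards [Metric.isOpen_ball.mem_nhds (Metric.mem_ball_self hδ0)] with s hs'
  exact heq s hs'

/-- The analytic continuation pieces. -/
noncomputable def F (k : ℕ) (s : ℂ) : ℂ :=
  (∑ j ∈ Finset.range k, (-z) ^ j / (1 - z) ^ (j+1) * A w j 0 s) +
    (-z) ^ k / (1 - z) ^ k * D z w k s

lemma F_succ (hz1 : ‖z‖ ≤ 1) (hz2 : z ≠ 1) (k : ℕ) (s : ℂ)
    (hs : 1 - (k:ℝ) < s.re) : F z w (k+1) s = F z w k s := by
  have h1z : (1:ℂ) - z ≠ 0 := sub_ne_zero.2 (Ne.symm hz2)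
  have hrec := D_rec z w hz1 k s hs
  have hD : D z w k s = (A w k 0 s - z * D z w (k+1) s) / (1 - z) := by
    rw [eq_div_iff h1z]
    linear_combination hrec
  rw [F, F, Finset.sum_range_succ, hD]
  field_simp
  ring

lemma F_congr (hz1 : ‖z‖ ≤ 1) (hz2 : z ≠ 1) (k m : ℕ) (h : k ≤ m) (s : ℂ)
    (hs : 1 - (k:ℝ) < s.re) : F z w m s = F z w k s := by
  induction m, h using Nat.le_induction with
  | base => rfl
  | succ m hm ih =>
    rw [← ih]
    apply F_succ z w hz1 hz2 m s
    have : (k:ℝ) ≤ m := Nat.cast_le.2 hm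
    linarith

lemma F_diffAt (hz1 : ‖z‖ ≤ 1) (hw : w ∉ negInts) (k : ℕ) (s₀ : ℂ)
    (hs : 1 - (k:ℝ) < s₀.re) : DifferentiableAt ℂ (F z w k) s₀ := by
  apply DifferentiableAt.add
  · apply DifferentiableAt.fun_sum
    intro j _
    have h0 : ((0:ℕ):ℝ) = (0:ℝ) := by norm_num
    have := (A_diff_s w j ((0:ℕ):ℝ) (shift_ne w hw 0)).const_mul ((-z) ^ j / (1 - z) ^ (j+1))
    simpa using this.differentiableAt
  · exact (D_diffAt z w hz1 hw k s₀ hs).const_mul _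

end LerchAux

open LerchAux in
theorem lerch_entire_in_s (z : ℂ) (hz1 : ‖z‖ ≤ 1) (hz2 : z ≠ 1)
    (w : ℂ) (hw : w ∉ negInts) :
    ∃ f : ℂ → ℂ, Differentiable ℂ f ∧ ∀ s : ℂ, 1 < s.re → f s = lerch z s w := by
  refine ⟨fun s => F z w ⌈2 - s.re⌉₊ s, ?_, ?_⟩
  · intro s₀
    set K : ℕ := ⌈3 - s₀.re⌉₊ with hKdef
    have hK : 3 - s₀.re ≤ (K:ℝ) := Nat.le_ceil _
    have hKs : 1 - (K:ℝ) < s₀.re := by linarith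
    have heq : ∀ s : ℂ, dist s s₀ < 1/2 → F z w ⌈2 - s.re⌉₊ s = F z w K s := by
      intro s hs'
      rw [dist_eq_norm] at hs'
      have hre : |(s - s₀).re| ≤ ‖s - s₀‖ := Complex.abs_re_le_norm _
      rw [Complex.sub_re] at hre
      have h1 := abs_le.1 hre
      have hklek : ⌈2 - s.re⌉₊ ≤ K := by
        apply Nat.ceil_le_ceil
        linarith [h1.1, h1.2]
      have hs2 : 1 - ((⌈2 - s.re⌉₊ : ℕ) : ℝ) < s.re := by
        have := Nat.le_ceil (2 - s.re)
        linarith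
      exact (F_congr z w hz1 hz2 ⌈2 - s.re⌉₊ K hklek s hs2).symm
    have hFd := F_diffAt z w hz1 hw K s₀ hKs
    apply DifferentiableAt.congr_of_eventuallyEq hFd
    filter_upwards [Metric.ball_mem_nhds s₀ (by norm_num : (0:ℝ) < 1/2)] with s hs'
    exact heq s (Metric.mem_ball.1 hs')
  · intro s hs
    have hs0 : 1 - ((⌈2 - s.re⌉₊ : ℕ) : ℝ) < s.re := by
      have := Nat.le_ceil (2 - s.re)
      linarith
    have h0 : 1 - ((0:ℕ):ℝ) < s.re := by norm_num; linarith
    show F z w ⌈2 - s.re⌉₊ s = lerch z s w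
    rw [F_congr z w hz1 hz2 0 ⌈2 - s.re⌉₊ (Nat.zero_le _) s h0]
    have hF0 : F z w 0 s = D z w 0 s := by simp [F]
    rw [hF0, lerch, D]
    refine tsum_congr fun n => ?_
    show z ^ n * ((((n:ℕ):ℝ):ℂ) + w) ^ (-s) = _
    norm_num
end

section
/- Let z ∈ ℂ be fixed with |z| = 1 and z ≠ 1. Then there exists a function G : ℂ×ℂ → ℂ that is holomorphic in each of its two variables separately on the domain ℂ × (ℂ∖(−∞,0]), such that G(s,w) = Φ₀(z,s,w) whenever Re(s) > 1 and w ∈ ℂ∖(−∞,0]. -/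
open Complex

/-- The real half-line `(−∞,0]` viewed inside `ℂ`. -/
def negRay : Set ℂ := {w : ℂ | ∃ x : ℝ, x ≤ 0 ∧ (x : ℂ) = w}

/-- Iterated forward difference of `x ↦ (x+w)^{-s}`. -/
noncomputable def AA : ℕ → ℂ → ℂ → ℝ → ℂ
  | 0, s, w, x => ((x : ℂ) + w) ^ (-s)
  | (k+1), s, w, x => AA k s w (x+1) - AA k s w x

lemma notMem_negRay_iff {w : ℂ} : w ∉ negRay ↔ (0 < w.re ∨ w.im ≠ 0) := by
  constructor
  · intro h
    by_contra h'
    push_neg at h'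
    exact h ⟨w.re, h'.1, by apply Complex.ext <;> simp [h'.2]⟩
  · rintro h ⟨x, hx, rfl⟩
    simp only [Complex.ofReal_re, Complex.ofReal_im, ne_eq, not_true_eq_false, or_false] at h
    linarith

lemma slit_add {w : ℂ} (hw : w ∉ negRay) {x : ℝ} (hx : 0 ≤ x) :
    ((x : ℂ) + w) ∈ Complex.slitPlane := by
  rw [Complex.mem_slitPlane_iff]
  rcases notMem_negRay_iff.1 hw with h | h
  · left; simp only [Complex.add_re, Complex.ofReal_re]; linarith
  · right; simpa using h

lemma exists_c {w : ℂ} (hw : w ∉ negRay) :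
    ∃ c : ℝ, 0 < c ∧ c ≤ 1 ∧ ∀ y : ℝ, 0 ≤ y → c * (1 + y) ≤ ‖(y : ℂ) + w‖ := by
  set M : ℝ := max 1 (2 * ‖w‖) with hM
  have hM1 : (1:ℝ) ≤ M := le_max_left _ _
  have hcont : ContinuousOn (fun y : ℝ => ‖(y:ℂ) + w‖ / (1 + y)) (Set.Icc 0 M) := by
    apply ContinuousOn.div
    · exact (continuous_norm.comp ((Complex.continuous_ofReal.add continuous_const))).continuousOn
    · exact (continuous_const.add continuous_id).continuousOn
    · intro y hy; have := hy.1; positivity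
  obtain ⟨y₁, hy₁, hmin⟩ := isCompact_Icc.exists_isMinOn ⟨0, by constructor <;> [rfl; linarith]⟩ hcont
  have hne : ((y₁:ℂ) + w) ≠ 0 := by
    intro h0
    exact hw ⟨-y₁, by linarith [hy₁.1], by push_cast; linear_combination -h0⟩
  have hc₁ : 0 < ‖(y₁:ℂ) + w‖ / (1 + y₁) := by
    have h1 : 0 < ‖(y₁:ℂ) + w‖ := norm_pos_iff.2 hne
    have := hy₁.1
    positivity
  refine ⟨min (min (‖(y₁:ℂ) + w‖ / (1 + y₁)) (1/4)) 1,
    by positivity, min_le_right _ _, ?_⟩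
  intro y hy
  set c := min (min (‖(y₁:ℂ) + w‖ / (1 + y₁)) (1/4)) 1 with hc
  rcases le_or_gt y M with hyM | hyM
  · have h2 := hmin ⟨hy, hyM⟩
    simp only [Set.mem_setOf_eq] at h2
    have h3 : c ≤ ‖(y:ℂ) + w‖ / (1 + y) :=
      le_trans (le_trans (min_le_left _ _) (min_le_left _ _)) h2
    calc c * (1 + y) ≤ (‖(y:ℂ) + w‖ / (1 + y)) * (1 + y) := by
          apply mul_le_mul_of_nonneg_right h3; linarith
      _ = ‖(y:ℂ) + w‖ := by field_simp
  · have hy1 : 1 ≤ y := le_trans hM1 hyM.le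
    have habs : ‖w‖ ≤ y / 2 := by
      have : 2 * ‖w‖ ≤ M := le_max_right _ _
      linarith
    have h4 : y - ‖w‖ ≤ ‖(y:ℂ) + w‖ := by
      have := norm_add_le ((y:ℂ) + w) (-w)
      simp only [add_neg_cancel_right, norm_neg, Complex.norm_real, Real.norm_eq_abs] at this
      rw [_root_.abs_of_nonneg hy] at this
      linarith [this]
    have h5 : c * (1 + y) ≤ (1/4) * (1 + y) := by
      apply mul_le_mul_of_nonneg_right (le_trans (min_le_left _ _) (min_le_right _ _))
      linarith
    calc c * (1 + y) ≤ (1/4) * (1 + y) := h5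
      _ ≤ y / 2 := by linarith
      _ ≤ ‖(y:ℂ) + w‖ := by linarith

lemma AA_hasDerivAt (k : ℕ) (s w : ℂ) (hw : w ∉ negRay) (x : ℝ) (hx : 0 ≤ x) :
    HasDerivAt (fun t => AA k s w t) (-s * AA k (s+1) w x) x := by
  induction k generalizing s x with
  | zero =>
    have h2 : HasDerivAt (fun u : ℂ => u + w) 1 (x:ℂ) := (hasDerivAt_id _).add_const w
    have h1 : HasDerivAt (fun u : ℂ => (u + w) ^ (-s)) (-s * ((x:ℂ) + w) ^ (-s - 1)) (x:ℂ) := by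
      have := HasDerivAt.comp (h₂ := fun u : ℂ => u ^ (-s)) (h := fun u : ℂ => u + w) (x:ℂ)
        ((Complex.hasStrictDerivAt_cpow_const (c := -s) (slit_add hw hx)).hasDerivAt) h2
      exact this.congr_deriv (by ring)
    have h3 := h1.comp_ofReal
    show HasDerivAt (fun t : ℝ => ((t:ℂ) + w) ^ (-s)) (-s * ((x:ℂ) + w) ^ (-(s+1))) x
    convert h3 using 1
    ring_nf
  | succ k ih =>
    have hx1 : (0:ℝ) ≤ x + 1 := by linarith
    have ha : HasDerivAt (fun t : ℝ => AA k s w (t + 1)) (-s * AA k (s+1) w (x+1)) x := by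
      exact HasDerivAt.comp_add_const x 1 (ih s (x+1) hx1)
    have hb := ih s x hx
    have := ha.sub hb
    show HasDerivAt (fun t : ℝ => AA k s w (t+1) - AA k s w t) _ x
    convert this using 1
    show -s * (AA k (s+1) w (x+1) - AA k (s+1) w x) = _
    ring
    all_goals rfl

lemma AA_bound (k : ℕ) (s w : ℂ) (hw : w ∉ negRay) {c : ℝ} (hc0 : 0 < c)
    (hcle : ∀ y : ℝ, 0 ≤ y → c * (1 + y) ≤ ‖(y : ℂ) + w‖) (x : ℝ) (hx : 0 ≤ x)
    (hks : 0 ≤ s.re + k) :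
    ‖AA k s w x‖ ≤ Real.exp (Real.pi * (‖s‖ + k)) * (‖s‖ + k) ^ k * (c * (1 + x)) ^ (-(s.re + k)) := by
  induction k generalizing s x with
  | zero =>
    have hcx : 0 < c * (1 + x) := by positivity
    have h1 : ‖AA 0 s w x‖ ≤ ‖(x:ℂ) + w‖ ^ (-s.re) * Real.exp (Complex.arg ((x:ℂ)+w) * s.im) := by
      have := Complex.norm_cpow_le ((x:ℂ) + w) (-s)
      rw [div_eq_mul_inv, ← Real.exp_neg] at this
      show ‖((x:ℂ) + w) ^ (-s)‖ ≤ _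
      convert this using 3 <;> simp
    have h2 : ‖(x:ℂ) + w‖ ^ (-s.re) ≤ (c * (1 + x)) ^ (-s.re) := by
      apply Real.rpow_le_rpow_of_nonpos hcx (hcle x hx)
      simpa using hks
    have h3 : Real.exp (Complex.arg ((x:ℂ)+w) * s.im) ≤ Real.exp (Real.pi * ‖s‖) := by
      apply Real.exp_le_exp.2
      calc Complex.arg ((x:ℂ)+w) * s.im ≤ |Complex.arg ((x:ℂ)+w) * s.im| := le_abs_self _
        _ = |Complex.arg ((x:ℂ)+w)| * |s.im| := abs_mul _ _
        _ ≤ Real.pi * ‖s‖ := by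
            apply mul_le_mul (Complex.abs_arg_le_pi _) ?_ (abs_nonneg _) Real.pi_pos.le
            exact (Complex.abs_im_le_norm s)
    calc ‖AA 0 s w x‖ ≤ ‖(x:ℂ) + w‖ ^ (-s.re) * Real.exp (Complex.arg ((x:ℂ)+w) * s.im) := h1
      _ ≤ (c * (1 + x)) ^ (-s.re) * Real.exp (Real.pi * ‖s‖) := by
          apply mul_le_mul h2 h3 (Real.exp_pos _).le (Real.rpow_nonneg hcx.le _)
      _ = Real.exp (Real.pi * (‖s‖ + (0:ℕ))) * (‖s‖ + (0:ℕ)) ^ (0:ℕ) * (c * (1 + x)) ^ (-(s.re + (0:ℕ))) := by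
          push_cast; ring_nf
  | succ k ih =>
    have hks' : 0 ≤ (s+1).re + k := by simp only [Complex.add_re, Complex.one_re]; push_cast at hks ⊢; linarith
    set B : ℝ := ‖s‖ + (k+1) with hB
    have hB0 : 0 ≤ B := by positivity
    have hcx : 0 < c * (1 + x) := by positivity
    set C : ℝ := ‖s‖ * (Real.exp (Real.pi * B) * B ^ k * (c * (1 + x)) ^ (-(s.re + (k+1)))) with hC
    have key : ‖AA k s w (x+1) - AA k s w x‖ ≤ C * ‖(x+1) - x‖ := by
      apply Convex.norm_image_sub_le_of_norm_hasDerivWithin_le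
        (f := fun t => AA k s w t) (f' := fun t => -s * AA k (s+1) w t)
        (s := Set.Icc x (x+1)) ?_ ?_ (convex_Icc _ _) ?_ ?_
      · intro t ht
        exact (AA_hasDerivAt k s w hw t (le_trans hx ht.1)).hasDerivWithinAt
      · intro t ht
        have ht0 : 0 ≤ t := le_trans hx ht.1
        have ihb := ih (s+1) t ht0 hks'
        have hnorm : ‖(-s) * AA k (s+1) w t‖ = ‖s‖ * ‖AA k (s+1) w t‖ := by
          rw [norm_mul, norm_neg]
        rw [hnorm]
        have hs1 : ‖s+1‖ ≤ ‖s‖ + 1 := by simpa using norm_add_le s 1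
        have hstep1 : Real.exp (Real.pi * (‖s+1‖ + k)) * (‖s+1‖ + k) ^ k * (c * (1+t)) ^ (-((s+1).re + k))
            ≤ Real.exp (Real.pi * B) * B ^ k * (c * (1 + x)) ^ (-(s.re + (k+1))) := by
          have e1 : Real.exp (Real.pi * (‖s+1‖ + k)) ≤ Real.exp (Real.pi * B) := by
            apply Real.exp_le_exp.2
            apply mul_le_mul_of_nonneg_left ?_ Real.pi_pos.le
            rw [hB]; linarith
          have e2 : (‖s+1‖ + (k:ℝ)) ^ k ≤ B ^ k := by
            apply pow_le_pow_left₀ (by positivity) ?_ k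
            rw [hB]; linarith
          have e3 : (c * (1+t)) ^ (-((s+1).re + k)) ≤ (c * (1 + x)) ^ (-(s.re + (k+1))) := by
            have hexp : -((s+1).re + (k:ℝ)) = -(s.re + ((k:ℝ)+1)) := by
              simp only [Complex.add_re, Complex.one_re]; ring
            rw [hexp]
            apply Real.rpow_le_rpow_of_nonpos hcx
            · have : (1:ℝ) + x ≤ 1 + t := by linarith [ht.1]
              nlinarith
            · push_cast at hks; linarith
          calc Real.exp (Real.pi * (‖s+1‖ + k)) * (‖s+1‖ + k) ^ k * (c * (1+t)) ^ (-((s+1).re + k))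
              ≤ Real.exp (Real.pi * B) * B ^ k * (c * (1+t)) ^ (-((s+1).re + k)) := by
                apply mul_le_mul_of_nonneg_right ?_ (Real.rpow_nonneg (by positivity) _)
                apply mul_le_mul e1 e2 (by positivity) (Real.exp_pos _).le
            _ ≤ Real.exp (Real.pi * B) * B ^ k * (c * (1 + x)) ^ (-(s.re + (k+1))) := by
                apply mul_le_mul_of_nonneg_left e3 (by positivity)
        calc ‖s‖ * ‖AA k (s+1) w t‖
            ≤ ‖s‖ * (Real.exp (Real.pi * (‖s+1‖ + k)) * (‖s+1‖ + k) ^ k * (c * (1+t)) ^ (-((s+1).re + k))) := by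
              apply mul_le_mul_of_nonneg_left ihb (norm_nonneg _)
          _ ≤ C := by rw [hC]; exact mul_le_mul_of_nonneg_left hstep1 (norm_nonneg _)
      · exact ⟨le_refl x, by linarith⟩
      · exact ⟨by linarith, le_refl _⟩
    have hnorm1 : ‖(x+1) - x‖ = 1 := by norm_num
    rw [hnorm1, mul_one] at key
    show ‖AA k s w (x+1) - AA k s w x‖ ≤ _
    refine le_trans key ?_
    rw [hC]
    have hcast : (((k+1:ℕ)):ℝ) = (k:ℝ) + 1 := by push_cast; ring
    rw [hcast]
    have hfac : ‖s‖ * (Real.exp (Real.pi * B) * B ^ k * (c * (1 + x)) ^ (-(s.re + ((k:ℝ)+1))))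
        ≤ B * (Real.exp (Real.pi * B) * B ^ k * (c * (1 + x)) ^ (-(s.re + ((k:ℝ)+1)))) := by
      apply mul_le_mul_of_nonneg_right ?_ (by positivity)
      rw [hB]; linarith [Nat.cast_nonneg (α := ℝ) k]
    refine le_trans hfac (le_of_eq ?_)
    rw [hB]
    ring

lemma AA_diff_s (k : ℕ) (w : ℂ) (hw : w ∉ negRay) (x : ℝ) (hx : 0 ≤ x) (s : ℂ) :
    DifferentiableAt ℂ (fun s' => AA k s' w x) s := by
  induction k generalizing x with
  | zero =>
    show DifferentiableAt ℂ (fun s' => ((x:ℂ) + w) ^ (-s')) s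
    apply DifferentiableAt.const_cpow (differentiableAt_id.neg)
    exact Or.inl (Complex.slitPlane_ne_zero (slit_add hw hx))
  | succ k ih =>
    exact (ih (x+1) (by linarith)).sub (ih x hx)

lemma AA_diff_w (k : ℕ) (s : ℂ) (x : ℝ) (hx : 0 ≤ x) (w : ℂ) (hw : w ∉ negRay) :
    DifferentiableAt ℂ (fun w' => AA k s w' x) w := by
  induction k generalizing x with
  | zero =>
    show DifferentiableAt ℂ (fun w' => ((x:ℂ) + w') ^ (-s)) w
    have h := ((hasDerivAt_id w).const_add (x:ℂ)).cpow_const (c := -s) (slit_add hw hx)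
    exact h.differentiableAt
  | succ k ih =>
    exact (ih (x+1) (by linarith)).sub (ih x hx)

/-- The `k`-fold Abel-summed series. -/
noncomputable def SS (z : ℂ) (k : ℕ) (s w : ℂ) : ℂ := ∑' n : ℕ, z ^ n * AA k s w n

lemma summable_aux {p : ℝ} (hp : 1 < p) : Summable (fun n : ℕ => (1 + (n:ℝ)) ^ (-p)) := by
  have h := Real.summable_nat_rpow.2 (show -p < -1 by linarith)
  have h2 := (summable_nat_add_iff 1).2 h
  apply h2.congr
  intro n
  push_cast
  rw [add_comm]

lemma norm_term_le {z : ℂ} (hz1 : ‖z‖ = 1) (k : ℕ) (s w : ℂ) (hw : w ∉ negRay)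
    {c : ℝ} (hc0 : 0 < c) (hc1 : c ≤ 1)
    (hcle : ∀ y : ℝ, 0 ≤ y → c * (1 + y) ≤ ‖(y : ℂ) + w‖)
    (hks : 0 ≤ s.re + k) (n : ℕ) :
    ‖z ^ n * AA k s w n‖ ≤
      (Real.exp (Real.pi * (‖s‖ + k)) * (‖s‖ + k) ^ k * c ^ (-(s.re + k))) * (1 + (n:ℝ)) ^ (-(s.re + k)) := by
  have hb := AA_bound k s w hw hc0 hcle n (Nat.cast_nonneg n) hks
  have h1 : ‖z ^ n * AA k s w n‖ = ‖AA k s w n‖ := by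
    rw [norm_mul, norm_pow]
    show ‖z‖ ^ n * _ = _
    rw [hz1, one_pow, one_mul]
  rw [h1]
  refine le_trans hb (le_of_eq ?_)
  rw [Real.mul_rpow hc0.le (by positivity)]
  ring

lemma summable_SS {z : ℂ} (hz1 : ‖z‖ = 1) (k : ℕ) (s w : ℂ) (hw : w ∉ negRay)
    (hk : 1 < s.re + k) : Summable (fun n : ℕ => z ^ n * AA k s w n) := by
  obtain ⟨c, hc0, hc1, hcle⟩ := exists_c hw
  apply Summable.of_norm_bounded ((summable_aux hk).mul_left
    (Real.exp (Real.pi * (‖s‖ + k)) * (‖s‖ + k) ^ k * c ^ (-(s.re + k))))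
  intro n
  exact norm_term_le hz1 k s w hw hc0 hc1 hcle (by linarith) n

lemma SS_rec {z : ℂ} (hz1 : ‖z‖ = 1) (k : ℕ) (s w : ℂ) (hw : w ∉ negRay)
    (hk : 1 < s.re + k) :
    (1 - z) * SS z k s w = AA k s w 0 + z * SS z (k+1) s w := by
  have h0 : Summable (fun n : ℕ => z ^ n * AA k s w n) := summable_SS hz1 k s w hw hk
  have h1 : Summable (fun n : ℕ => z ^ n * AA (k+1) s w n) := by
    apply summable_SS hz1 (k+1) s w hw
    push_cast at hk ⊢; linarith
  have hsh : Summable (fun n : ℕ => z ^ (n+1) * AA k s w ((n:ℝ)+1)) := by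
    have := (summable_nat_add_iff 1).2 h0
    apply this.congr
    intro n; push_cast; ring_nf
  have hb : Summable (fun n : ℕ => z ^ (n+1) * AA k s w n) := by
    apply (h0.mul_left z).congr
    intro n; rw [pow_succ]; ring
  have hsplit : SS z k s w = AA k s w 0 + ∑' n : ℕ, z ^ (n+1) * AA k s w ((n:ℝ)+1) := by
    rw [SS, h0.tsum_eq_zero_add]
    congr 1
    · simp
    · apply tsum_congr; intro n; push_cast; ring_nf
  have hzS : z * SS z k s w = ∑' n : ℕ, z ^ (n+1) * AA k s w n := by
    rw [SS, ← tsum_mul_left]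
    apply tsum_congr; intro n; rw [pow_succ]; ring
  have hzS1 : z * SS z (k+1) s w = ∑' n : ℕ, z ^ (n+1) * AA (k+1) s w n := by
    rw [SS, ← tsum_mul_left]
    apply tsum_congr; intro n; rw [pow_succ]; ring
  have hdiff : (∑' n : ℕ, z ^ (n+1) * AA k s w ((n:ℝ)+1)) - ∑' n : ℕ, z ^ (n+1) * AA k s w n
      = ∑' n : ℕ, z ^ (n+1) * AA (k+1) s w n := by
    rw [← hsh.tsum_sub hb]
    apply tsum_congr
    intro n
    show z ^ (n+1) * AA k s w ((n:ℝ)+1) - z ^ (n+1) * AA k s w n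
        = z ^ (n+1) * (AA k s w ((n:ℝ)+1) - AA k s w n)
    ring
  have : (1 - z) * SS z k s w = SS z k s w - z * SS z k s w := by ring
  rw [this, hzS, hsplit, hzS1, ← hdiff]
  ring

noncomputable def GG (z : ℂ) (k : ℕ) (s w : ℂ) : ℂ :=
  (∑ i ∈ Finset.range k, z ^ i * AA i s w 0 / (1 - z) ^ (i+1)) + z ^ k * SS z k s w / (1 - z) ^ k

lemma GG_succ {z : ℂ} (hz1 : ‖z‖ = 1) (hz2 : z ≠ 1) (k : ℕ) (s w : ℂ)
    (hw : w ∉ negRay) (hk : 1 < s.re + k) : GG z (k+1) s w = GG z k s w := by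
  have h1z : (1:ℂ) - z ≠ 0 := sub_ne_zero.2 (Ne.symm hz2)
  have hrec := SS_rec hz1 k s w hw hk
  rw [GG, GG, Finset.sum_range_succ]
  have hpow : ((1:ℂ) - z) ^ (k+1) ≠ 0 := pow_ne_zero _ h1z
  have hpowk : ((1:ℂ) - z) ^ k ≠ 0 := pow_ne_zero _ h1z
  field_simp
  linear_combination (-1 * z ^ k * (1-z) ^ k) * hrec

lemma GG_mono {z : ℂ} (hz1 : ‖z‖ = 1) (hz2 : z ≠ 1) {k m : ℕ} (hkm : k ≤ m) (s w : ℂ)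
    (hw : w ∉ negRay) (hk : 1 < s.re + k) : GG z m s w = GG z k s w := by
  induction m, hkm using Nat.le_induction with
  | base => rfl
  | succ m hm ih =>
    rw [GG_succ hz1 hz2 m s w hw (by have : (k:ℝ) ≤ m := Nat.cast_le.2 hm; linarith), ih]

lemma SS_diff_s {z : ℂ} (hz1 : ‖z‖ = 1) (K : ℕ) (w : ℂ) (hw : w ∉ negRay)
    (s₀ : ℂ) (hbig : 3 ≤ s₀.re + K) :
    DifferentiableAt ℂ (fun s => SS z K s w) s₀ := by
  obtain ⟨c, hc0, hc1, hcle⟩ := exists_c hw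
  set R : ℝ := ‖s₀‖ + 1 with hR
  have hR0 : 0 < R := by positivity
  have hRK : (0:ℝ) < R + K := by positivity
  set Q : ℝ := Real.exp (Real.pi * (R + K)) * (R + K) ^ K * c ^ (-(R + K)) with hQ
  have hQ0 : 0 ≤ Q := by positivity
  have hdiff : DifferentiableOn ℂ (fun s => ∑' n : ℕ, z ^ n * AA K s w n) (Metric.ball s₀ 1) := by
    apply differentiableOn_tsum_of_summable_norm
      (u := fun n : ℕ => Q * (1 + (n:ℝ)) ^ (-(2:ℝ)))
      ((summable_aux (by norm_num)).mul_left Q)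
      (fun n => fun s _ => ((AA_diff_s K w hw n (Nat.cast_nonneg n) s).const_mul (z ^ n)).differentiableWithinAt)
      Metric.isOpen_ball
    intro n s hs
    have hsR : ‖s‖ ≤ R := by
      have := norm_sub_norm_le s s₀
      rw [Metric.mem_ball, dist_eq_norm] at hs
      rw [hR]; linarith
    have hsre : 2 ≤ s.re + K := by
      have h1 : s₀.re - s.re ≤ 1 := by
        have h2 : |(s - s₀).re| ≤ ‖s - s₀‖ := Complex.abs_re_le_norm _
        rw [Metric.mem_ball, dist_eq_norm] at hs
        have : (s - s₀).re = s.re - s₀.re := by simp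
        rw [this] at h2
        calc s₀.re - s.re ≤ |s.re - s₀.re| := by rw [abs_sub_comm]; exact le_abs_self _
          _ ≤ ‖s - s₀‖ := h2
          _ ≤ 1 := hs.le
      linarith
    have hsreR : s.re + K ≤ R + K := by
      have := Complex.abs_re_le_norm s
      have h3 : s.re ≤ ‖s‖ := le_trans (le_abs_self _) this
      linarith
    have hb := AA_bound K s w hw hc0 hcle n (Nat.cast_nonneg n) (by linarith)
    have h1 : ‖z ^ n * AA K s w n‖ = ‖AA K s w n‖ := by
      rw [norm_mul, norm_pow]
      show ‖z‖ ^ n * _ = _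
      rw [hz1, one_pow, one_mul]
    rw [h1]
    refine le_trans hb ?_
    rw [Real.mul_rpow hc0.le (by positivity)]
    have e1 : Real.exp (Real.pi * (‖s‖ + K)) ≤ Real.exp (Real.pi * (R + K)) := by
      apply Real.exp_le_exp.2
      apply mul_le_mul_of_nonneg_left (by linarith) Real.pi_pos.le
    have e2 : (‖s‖ + (K:ℝ)) ^ K ≤ (R + K) ^ K := by
      apply pow_le_pow_left₀ (by positivity) (by linarith)
    have e3 : c ^ (-(s.re + K)) ≤ c ^ (-(R + K)) :=
      Real.rpow_le_rpow_of_exponent_ge hc0 hc1 (by linarith)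
    have e4 : (1 + (n:ℝ)) ^ (-(s.re + K)) ≤ (1 + (n:ℝ)) ^ (-(2:ℝ)) := by
      apply Real.rpow_le_rpow_of_exponent_le (by have : (0:ℝ) ≤ (n:ℝ) := Nat.cast_nonneg n; linarith) (by linarith)
    calc Real.exp (Real.pi * (‖s‖ + K)) * (‖s‖ + K) ^ K * (c ^ (-(s.re + K)) * (1 + (n:ℝ)) ^ (-(s.re + K)))
        ≤ Real.exp (Real.pi * (R + K)) * (R + K) ^ K * (c ^ (-(R + K)) * (1 + (n:ℝ)) ^ (-(2:ℝ))) := by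
          apply mul_le_mul
          · exact mul_le_mul e1 e2 (by positivity) (Real.exp_pos _).le
          · exact mul_le_mul e3 e4 (by positivity) (by positivity)
          · positivity
          · positivity
      _ = Q * (1 + (n:ℝ)) ^ (-(2:ℝ)) := by rw [hQ]; ring
  exact (hdiff.differentiableAt (Metric.ball_mem_nhds s₀ one_pos))

lemma SS_diff_w {z : ℂ} (hz1 : ‖z‖ = 1) (K : ℕ) (s : ℂ) (hsK : 2 ≤ s.re + K)
    (w₀ : ℂ) (hw₀ : w₀ ∉ negRay) :
    DifferentiableAt ℂ (fun w => SS z K s w) w₀ := by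
  obtain ⟨c, hc0, hc1, hcle⟩ := exists_c hw₀
  set δ : ℝ := c / 2 with hδ
  have hδ0 : 0 < δ := by positivity
  -- uniform lower bound on the ball
  have hball : ∀ w ∈ Metric.ball w₀ δ, ∀ y : ℝ, 0 ≤ y →
      (c/2) * (1 + y) ≤ ‖(y : ℂ) + w‖ := by
    intro w hw y hy
    rw [Metric.mem_ball, dist_eq_norm] at hw
    have htri : ‖(y:ℂ) + w₀‖ ≤ ‖(y:ℂ) + w‖ + ‖w₀ - w‖ := by
      have : (y:ℂ) + w₀ = ((y:ℂ) + w) + (w₀ - w) := by ring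
      rw [this]
      exact norm_add_le _ _
    have h2 : ‖w₀ - w‖ < δ := by rw [norm_sub_rev]; exact hw
    have h3 := hcle y hy
    have h4 : c * (1 + y) - δ ≤ ‖(y:ℂ) + w‖ := by linarith
    have h5 : (c/2) * (1 + y) ≥ δ * 1 := by rw [hδ]; nlinarith
    nlinarith
  have hmem : ∀ w ∈ Metric.ball w₀ δ, w ∉ negRay := by
    intro w hw hneg
    obtain ⟨t, ht, rfl⟩ := hneg
    have := hball _ hw (-t) (by linarith)
    push_cast at this
    simp only [neg_add_cancel, map_zero, norm_zero] at this
    nlinarith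
  set Q : ℝ := Real.exp (Real.pi * (‖s‖ + K)) * (‖s‖ + K) ^ K * (c/2) ^ (-(s.re + K)) with hQ
  have hp1 : (1:ℝ) < s.re + K := by linarith
  have hdiff : DifferentiableOn ℂ (fun w => ∑' n : ℕ, z ^ n * AA K s w n) (Metric.ball w₀ δ) := by
    apply differentiableOn_tsum_of_summable_norm
      (u := fun n : ℕ => Q * (1 + (n:ℝ)) ^ (-(s.re + K)))
      ((summable_aux hp1).mul_left Q)
      (fun n => fun w hw => ((AA_diff_w K s n (Nat.cast_nonneg n) w (hmem w hw)).const_mul (z ^ n)).differentiableWithinAt)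
      Metric.isOpen_ball
    intro n w hw
    have hb := AA_bound K s w (hmem w hw) (by positivity : (0:ℝ) < c/2) (hball w hw) n
      (Nat.cast_nonneg n) (by linarith)
    have h1 : ‖z ^ n * AA K s w n‖ = ‖AA K s w n‖ := by
      rw [norm_mul, norm_pow]
      show ‖z‖ ^ n * _ = _
      rw [hz1, one_pow, one_mul]
    rw [h1]
    refine le_trans hb (le_of_eq ?_)
    rw [Real.mul_rpow (by positivity) (by positivity)]
    rw [hQ]; ring
  exact hdiff.differentiableAt (Metric.ball_mem_nhds w₀ hδ0)

lemma ceil_prop (s : ℂ) : 1 < s.re + (⌈2 - s.re⌉₊ : ℝ) := by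
  have := Nat.le_ceil (2 - s.re); linarith

lemma GG_diff_s {z : ℂ} (hz1 : ‖z‖ = 1) (hz2 : z ≠ 1) (K : ℕ) (w : ℂ)
    (hw : w ∉ negRay) (s₀ : ℂ) (hbig : 3 ≤ s₀.re + K) :
    DifferentiableAt ℂ (fun s => GG z K s w) s₀ := by
  apply DifferentiableAt.add
  · apply DifferentiableAt.fun_sum
    intro i _
    exact ((AA_diff_s i w hw 0 le_rfl s₀).const_mul (z ^ i)).div_const _
  · exact (((SS_diff_s hz1 K w hw s₀ hbig).const_mul (z ^ K)).div_const _)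

lemma GG_diff_w {z : ℂ} (hz1 : ‖z‖ = 1) (hz2 : z ≠ 1) (K : ℕ) (s : ℂ)
    (hsK : 2 ≤ s.re + K) (w₀ : ℂ) (hw₀ : w₀ ∉ negRay) :
    DifferentiableAt ℂ (fun w => GG z K s w) w₀ := by
  apply DifferentiableAt.add
  · apply DifferentiableAt.fun_sum
    intro i _
    exact ((AA_diff_w i s 0 le_rfl w₀ hw₀).const_mul (z ^ i)).div_const _
  · exact (((SS_diff_w hz1 K s hsK w₀ hw₀).const_mul (z ^ K)).div_const _)

theorem lerch_continuation_unit_circle (z : ℂ) (hz1 : ‖z‖ = 1) (hz2 : z ≠ 1) :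
    ∃ G : ℂ → ℂ → ℂ,
      (∀ s : ℂ, ∀ w ∉ negRay,
        DifferentiableAt ℂ (fun s' => G s' w) s ∧
        DifferentiableAt ℂ (fun w' => G s w') w) ∧
      (∀ s w : ℂ, 1 < s.re → w ∉ negRay → G s w = lerch z s w) := by

  refine ⟨fun s w => GG z (⌈2 - s.re⌉₊) s w, ?_, ?_⟩
  · intro s₀ w hw
    constructor
    · -- differentiability in s
      set K : ℕ := ⌈3 - s₀.re⌉₊ + 1 with hK
      have hbig : 3 ≤ s₀.re + K := by
        have := Nat.le_ceil (3 - s₀.re)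
        have hK1 : (3 - s₀.re) ≤ (K:ℝ) := by rw [hK]; push_cast; linarith
        linarith
      have heq : (fun s' => GG z (⌈2 - s'.re⌉₊) s' w) =ᶠ[nhds s₀] (fun s' => GG z K s' w) := by
        filter_upwards [Metric.ball_mem_nhds s₀ one_pos] with s hs
        have hle : ⌈2 - s.re⌉₊ ≤ K := by
          refine le_trans (Nat.ceil_le_ceil ?_) (by rw [hK]; exact Nat.le_succ _)
          have h2 : |(s - s₀).re| ≤ ‖s - s₀‖ := Complex.abs_re_le_norm _
          rw [Metric.mem_ball, dist_eq_norm] at hs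
          have h3 : (s - s₀).re = s.re - s₀.re := by simp
          rw [h3] at h2
          have h4 : s₀.re - s.re ≤ 1 := by
            calc s₀.re - s.re ≤ |s.re - s₀.re| := by rw [abs_sub_comm]; exact le_abs_self _
              _ ≤ ‖s - s₀‖ := h2
              _ ≤ 1 := hs.le
          linarith
        exact (GG_mono hz1 hz2 hle s w hw (ceil_prop s)).symm
      rw [Filter.EventuallyEq.differentiableAt_iff heq]
      exact GG_diff_s hz1 hz2 K w hw s₀ hbig
    · -- differentiability in w
      apply GG_diff_w hz1 hz2 _ s₀ ?_ w hw
      have := Nat.le_ceil (2 - s₀.re)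
      linarith
  · intro s w hs hw
    have h0 : GG z (⌈2 - s.re⌉₊) s w = GG z 0 s w :=
      GG_mono hz1 hz2 (Nat.zero_le _) s w hw (by simpa using hs)
    show GG z (⌈2 - s.re⌉₊) s w = lerch z s w
    rw [h0]
    have h1 : GG z 0 s w = SS z 0 s w := by
      simp [GG]
    rw [h1, SS, lerch]
    apply tsum_congr
    intro n
    show z ^ n * ((((n:ℕ):ℝ):ℂ) + w) ^ (-s) = z ^ n * (((n:ℕ):ℂ) + w) ^ (-s)
    norm_num
end

section
/- Let z ∈ ℂ with |z| < 1, let w ∈ ℂ, and let r be a positive integer. Then ∑_{n=0}^∞ z^n (n+w)^{r−1} = −𝓑_r(z,w)/r (the series on the left converging absolutely). -/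
open Complex

/-- Apostol's function `𝓑_r(z,w)`: `r!` times the `r`-th Taylor coefficient at `t = 0`
of `t ↦ t·e^{tw}/(z·e^t − 1)`, i.e. the `r`-th derivative at `0`. -/
noncomputable def apostolB (r : ℕ) (z w : ℂ) : ℂ :=
  iteratedDeriv r (fun t : ℂ => t * Complex.exp (t * w) / (z * Complex.exp t - 1)) 0

namespace LerchAux

noncomputable def S (z w : ℂ) (m : ℕ) : ℂ := ∑' n : ℕ, z ^ n * ((n : ℂ) + w) ^ m

noncomputable def c (z w : ℂ) : ℕ → ℂ := fun k =>
  match k with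
  | 0 => 0
  | m + 1 => -(S z w m) / m.factorial

lemma summable_aux (z : ℂ) (hz : ‖z‖ < 1) (w : ℂ) (m : ℕ) :
    Summable fun n : ℕ => ‖z ^ n * ((n : ℂ) + w) ^ m‖ := by
  have hz' : ‖(‖z‖)‖ < 1 := by rwa [Real.norm_eq_abs, _root_.abs_of_nonneg (norm_nonneg z)]
  have hsum : Summable fun n : ℕ =>
      (‖w‖ + 1) ^ m * ∑ j ∈ Finset.range (m + 1), ((n : ℝ) ^ j * ‖z‖ ^ n * (m.choose j : ℝ)) := by
    refine Summable.mul_left _ (summable_sum fun j _ => ?_)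
    exact (summable_pow_mul_geometric_of_norm_lt_one j hz').mul_right _
  refine Summable.of_nonneg_of_le (fun n => norm_nonneg _) (fun n => ?_) hsum
  have h1 : ‖z ^ n * ((n : ℂ) + w) ^ m‖ = ‖z‖ ^ n * ‖(n : ℂ) + w‖ ^ m := by
    rw [norm_mul, norm_pow, norm_pow]
  have h2 : ‖(n : ℂ) + w‖ ≤ (n : ℝ) + ‖w‖ := by
    calc ‖(n : ℂ) + w‖ ≤ ‖(n : ℂ)‖ + ‖w‖ := norm_add_le _ _
    _ = (n : ℝ) + ‖w‖ := by simp
  have h3 : (n : ℝ) + ‖w‖ ≤ (‖w‖ + 1) * ((n : ℝ) + 1) := by nlinarith [norm_nonneg w, Nat.cast_nonneg (α := ℝ) n]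
  have h4 : ‖(n : ℂ) + w‖ ^ m ≤ ((‖w‖ + 1) * ((n : ℝ) + 1)) ^ m :=
    pow_le_pow_left₀ (norm_nonneg _) (h2.trans h3) m
  have h5 : ((n : ℝ) + 1) ^ m = ∑ j ∈ Finset.range (m + 1), (n : ℝ) ^ j * (m.choose j : ℝ) := by
    simpa using add_pow (n : ℝ) 1 m
  calc ‖z ^ n * ((n : ℂ) + w) ^ m‖ = ‖z‖ ^ n * ‖(n : ℂ) + w‖ ^ m := h1
    _ ≤ ‖z‖ ^ n * ((‖w‖ + 1) * ((n : ℝ) + 1)) ^ m := by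
        exact mul_le_mul_of_nonneg_left h4 (by positivity)
    _ = (‖w‖ + 1) ^ m * ∑ j ∈ Finset.range (m + 1), ((n : ℝ) ^ j * ‖z‖ ^ n * (m.choose j : ℝ)) := by
        rw [mul_pow, h5]
        simp only [Finset.mul_sum]
        apply Finset.sum_congr rfl
        intro j _
        ring



lemma norm_F (z w t : ℂ) (n m : ℕ) :
    ‖z ^ n * ((n : ℂ) + w) ^ m * t ^ (m + 1) / (m.factorial : ℂ)‖
      = (‖z‖ ^ n * ‖t‖) * ((‖(n : ℂ) + w‖ * ‖t‖) ^ m / (m.factorial : ℝ)) := by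
  rw [norm_div, norm_mul, norm_mul, norm_pow, norm_pow, norm_pow, Complex.norm_natCast,
    pow_succ, mul_pow]
  ring

lemma summable_F (z w : ℂ) {ρ : ℝ} (hρ : ‖z‖ * Real.exp ρ < 1) {t : ℂ} (ht : ‖t‖ ≤ ρ) :
    Summable fun q : ℕ × ℕ =>
      ‖z ^ q.1 * ((q.1 : ℂ) + w) ^ q.2 * t ^ (q.2 + 1) / (q.2.factorial : ℂ)‖ := by
  have hrow : ∀ n : ℕ, HasSum
      (fun m => (‖z‖ ^ n * ‖t‖) * ((‖(n : ℂ) + w‖ * ‖t‖) ^ m / (m.factorial : ℝ)))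
      ((‖z‖ ^ n * ‖t‖) * Real.exp (‖(n : ℂ) + w‖ * ‖t‖)) := fun n => by
    have h := NormedSpace.expSeries_div_hasSum_exp (‖(n : ℂ) + w‖ * ‖t‖)
    rw [← Real.exp_eq_exp_ℝ] at h
    exact h.mul_left _
  rw [summable_prod_of_nonneg (fun q => norm_nonneg _)]
  constructor
  · intro n
    simp only [norm_F]
    exact (hrow n).summable
  · have htsum : ∀ n : ℕ, (∑' m : ℕ, ‖z ^ n * ((n:ℂ)+w) ^ m * t ^ (m+1) / (m.factorial : ℂ)‖)
        = (‖z‖ ^ n * ‖t‖) * Real.exp (‖(n : ℂ) + w‖ * ‖t‖) := fun n => by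
      simp only [norm_F]; exact (hrow n).tsum_eq
    simp only [htsum]
    have hq0 : 0 ≤ ‖z‖ * Real.exp ρ := by positivity
    refine Summable.of_nonneg_of_le (fun n => by positivity) (fun n => ?_)
      ((summable_geometric_of_lt_one hq0 hρ).mul_right (‖t‖ * Real.exp (‖w‖ * ρ)))
    have h2 : ‖(n : ℂ) + w‖ ≤ (n : ℝ) + ‖w‖ := by
      calc ‖(n : ℂ) + w‖ ≤ ‖(n : ℂ)‖ + ‖w‖ := norm_add_le _ _
      _ = (n : ℝ) + ‖w‖ := by simp
    have ht0 : (0:ℝ) ≤ ρ := le_trans (norm_nonneg t) ht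
    have hexp : Real.exp (‖(n : ℂ) + w‖ * ‖t‖) ≤ Real.exp (((n : ℝ) + ‖w‖) * ρ) := by
      apply Real.exp_le_exp.mpr
      exact mul_le_mul h2 ht (norm_nonneg t) (by positivity)
    calc ‖z‖ ^ n * ‖t‖ * Real.exp (‖(n : ℂ) + w‖ * ‖t‖)
        ≤ ‖z‖ ^ n * ‖t‖ * Real.exp (((n : ℝ) + ‖w‖) * ρ) := by
          exact mul_le_mul_of_nonneg_left hexp (by positivity)
      _ = (‖z‖ ^ n * Real.exp ((n : ℝ) * ρ)) * (‖t‖ * Real.exp (‖w‖ * ρ)) := by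
          rw [add_mul, Real.exp_add]; ring
      _ = (‖z‖ * Real.exp ρ) ^ n * (‖t‖ * Real.exp (‖w‖ * ρ)) := by
          rw [mul_pow, Real.exp_nat_mul]

lemma hasSum_key (z w : ℂ) (hz : ‖z‖ < 1) {ρ : ℝ} (hρ : ‖z‖ * Real.exp ρ < 1) {t : ℂ}
    (ht : ‖t‖ ≤ ρ) :
    HasSum (fun k : ℕ => c z w k • t ^ k)
      (t * Complex.exp (t * w) / (z * Complex.exp t - 1)) := by
  set F : ℕ × ℕ → ℂ :=
    fun q => z ^ q.1 * ((q.1 : ℂ) + w) ^ q.2 * t ^ (q.2 + 1) / (q.2.factorial : ℂ) with hFdef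
  have hF : Summable F := (summable_F z w hρ ht).of_norm
  -- norm bound for geometric series
  have hlt : ‖z * Complex.exp t‖ < 1 := by
    rw [norm_mul]
    refine lt_of_le_of_lt ?_ hρ
    refine mul_le_mul_of_nonneg_left ?_ (norm_nonneg z)
    rw [Complex.norm_exp]
    exact Real.exp_le_exp.mpr ((Complex.re_le_norm t).trans ht)
  have hne : z * Complex.exp t - 1 ≠ 0 := by
    intro h
    have : z * Complex.exp t = 1 := by linear_combination h
    rw [this] at hlt; simp at hlt
  -- row sums
  have hrows : ∀ n : ℕ, HasSum (fun m => F (n, m))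
      ((z ^ n * t) * Complex.exp (((n : ℂ) + w) * t)) := fun n => by
    have h := NormedSpace.expSeries_div_hasSum_exp (((n : ℂ) + w) * t)
    rw [← Complex.exp_eq_exp_ℂ] at h
    have h2 := h.mul_left (z ^ n * t)
    refine h2.congr_fun fun m => ?_
    simp only [hFdef, mul_pow, pow_succ]
    ring
  have hgeo : HasSum (fun n : ℕ => (z ^ n * t) * Complex.exp (((n : ℂ) + w) * t))
      (-(t * Complex.exp (t * w) / (z * Complex.exp t - 1))) := by
    have h := (hasSum_geometric_of_norm_lt_one hlt).mul_left (t * Complex.exp (t * w))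
    have hval : (t * Complex.exp (t * w)) * (1 - z * Complex.exp t)⁻¹
        = -(t * Complex.exp (t * w) / (z * Complex.exp t - 1)) := by
      have hne' : (1 : ℂ) - z * Complex.exp t ≠ 0 := by
        intro h'; apply hne; linear_combination -h'
      field_simp
      ring
    rw [hval] at h
    refine h.congr_fun fun n => ?_
    rw [add_mul, Complex.exp_add, Complex.exp_nat_mul, mul_pow]
    ring
  have htot : HasSum F (-(t * Complex.exp (t * w) / (z * Complex.exp t - 1))) := by
    have h1 := hF.hasSum.prod_fiberwise (fun n => (hF.prod_factor n).hasSum)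
    have h2 : ∀ n : ℕ, (∑' m, F (n, m)) = (z ^ n * t) * Complex.exp (((n : ℂ) + w) * t) :=
      fun n => (hrows n).tsum_eq
    have h3 : HasSum (fun n : ℕ => (z ^ n * t) * Complex.exp (((n : ℂ) + w) * t)) (∑' q, F q) := by
      refine h1.congr_fun fun n => (h2 n).symm
    have := h3.unique hgeo
    rw [← this]
    exact hF.hasSum
  -- column sums
  have hcols : ∀ m : ℕ, HasSum (fun n => F (n, m)) (S z w m * (t ^ (m + 1) / (m.factorial : ℂ))) :=
    fun m => by
      have h := ((summable_aux z hz w m).of_norm.hasSum).mul_right (t ^ (m + 1) / (m.factorial : ℂ))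
      refine h.congr_fun fun n => ?_
      simp only [hFdef]
      ring
  have hswap : HasSum (fun q : ℕ × ℕ => F q.swap)
      (-(t * Complex.exp (t * w) / (z * Complex.exp t - 1))) :=
    ((Equiv.prodComm ℕ ℕ).hasSum_iff).mpr htot
  have hcolsum : HasSum (fun m => S z w m * (t ^ (m + 1) / (m.factorial : ℂ)))
      (-(t * Complex.exp (t * w) / (z * Complex.exp t - 1))) :=
    hswap.prod_fiberwise hcols
  have hshift : HasSum (fun m : ℕ => c z w (m + 1) • t ^ (m + 1))
      (t * Complex.exp (t * w) / (z * Complex.exp t - 1)) := by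
    have h := hcolsum.neg
    rw [neg_neg] at h
    refine h.congr_fun fun m => ?_
    show c z w (m + 1) • t ^ (m + 1) = -(S z w m * (t ^ (m + 1) / (m.factorial : ℂ)))
    rw [c]
    simp only [smul_eq_mul]
    ring
  have := (hasSum_nat_add_iff (f := fun k : ℕ => c z w k • t ^ k) 1).mp hshift
  simpa [c] using this


lemma norm_F' (z w t : ℂ) (n m : ℕ) :
    ‖z ^ n * ((n : ℂ) + w) ^ m * t ^ (m + 1) / (m.factorial : ℂ)‖
      = ‖z ^ n * ((n : ℂ) + w) ^ m‖ * (‖t‖ ^ (m + 1) / (m.factorial : ℝ)) := by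
  rw [norm_div, norm_mul, norm_pow, Complex.norm_natCast, mul_div_assoc]

lemma summable_c (z w : ℂ) (hz : ‖z‖ < 1) {ρ : ℝ} (hρpos : 0 < ρ)
    (hρ : ‖z‖ * Real.exp ρ < 1) :
    Summable fun k : ℕ => ‖c z w k‖ * ρ ^ k := by
  rw [← summable_nat_add_iff 1]
  have hts : ‖((ρ : ℝ) : ℂ)‖ = ρ := by
    rw [Complex.norm_real, Real.norm_eq_abs, _root_.abs_of_pos hρpos]
  have hFρ := summable_F z w hρ (t := ((ρ : ℝ) : ℂ)) (le_of_eq hts)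
  have hswap : Summable fun q : ℕ × ℕ =>
      ‖z ^ q.2 * ((q.2 : ℂ) + w) ^ q.1 * ((ρ : ℝ) : ℂ) ^ (q.1 + 1) / (q.1.factorial : ℂ)‖ :=
    hFρ.prod_symm
  have hcol : Summable fun m : ℕ => ∑' n : ℕ,
      ‖z ^ n * ((n : ℂ) + w) ^ m * ((ρ : ℝ) : ℂ) ^ (m + 1) / (m.factorial : ℂ)‖ :=
    (hswap.hasSum.prod_fiberwise fun m => (hswap.prod_factor m).hasSum).summable
  refine Summable.of_nonneg_of_le (fun m => by positivity) (fun m => ?_) hcol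
  have hT : Summable fun n : ℕ => ‖z ^ n * ((n : ℂ) + w) ^ m‖ := summable_aux z hz w m
  have htsum : (∑' n : ℕ, ‖z ^ n * ((n : ℂ) + w) ^ m * ((ρ : ℝ) : ℂ) ^ (m + 1) / (m.factorial : ℂ)‖)
      = (∑' n : ℕ, ‖z ^ n * ((n : ℂ) + w) ^ m‖) * (ρ ^ (m + 1) / (m.factorial : ℝ)) := by
    rw [← tsum_mul_right]
    exact tsum_congr fun n => by rw [norm_F', hts]
  rw [htsum]
  have hnorm_c : ‖c z w (m + 1)‖ = ‖S z w m‖ / (m.factorial : ℝ) := by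
    rw [c]
    rw [norm_div, norm_neg, Complex.norm_natCast]
  have hSle : ‖S z w m‖ ≤ ∑' n : ℕ, ‖z ^ n * ((n : ℂ) + w) ^ m‖ := norm_tsum_le_tsum_norm hT
  calc ‖c z w (m + 1)‖ * ρ ^ (m + 1) = ‖S z w m‖ * (ρ ^ (m + 1) / (m.factorial : ℝ)) := by
        rw [hnorm_c]; ring
    _ ≤ (∑' n : ℕ, ‖z ^ n * ((n : ℂ) + w) ^ m‖) * (ρ ^ (m + 1) / (m.factorial : ℝ)) := by
        refine mul_le_mul_of_nonneg_right hSle (by positivity)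

end LerchAux


theorem lerch_special_values_series (z : ℂ) (hz : ‖z‖ < 1) (w : ℂ)
    (r : ℕ) (hr : 0 < r) :
    (Summable fun n : ℕ => ‖z ^ n * ((n : ℂ) + w) ^ (r - 1)‖) ∧
    ∑' n : ℕ, z ^ n * ((n : ℂ) + w) ^ (r - 1) = -apostolB r z w / r := by
  have hz' : ‖z‖ < 1 := hz
  refine ⟨LerchAux.summable_aux z hz' w (r - 1), ?_⟩
  obtain ⟨ρ, hρpos, hρ⟩ : ∃ ρ : ℝ, 0 < ρ ∧ ‖z‖ * Real.exp ρ < 1 := by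
    have hopen : IsOpen {x : ℝ | ‖z‖ * Real.exp x < 1} :=
      isOpen_lt (by continuity) continuous_const
    rcases Metric.isOpen_iff.mp hopen 0 (by simpa using hz') with ⟨ε, hε, hball⟩
    refine ⟨ε / 2, by positivity, hball ?_⟩
    simp only [Metric.mem_ball, Real.dist_eq, sub_zero]
    rw [_root_.abs_of_pos (by positivity)]
    linarith
  have hball : HasFPowerSeriesOnBall
      (fun t : ℂ => t * Complex.exp (t * w) / (z * Complex.exp t - 1))
      (FormalMultilinearSeries.ofScalars ℂ (LerchAux.c z w)) 0 (ENNReal.ofReal ρ) := by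
    refine ⟨?_, by simp [ENNReal.ofReal_pos, hρpos], ?_⟩
    · rw [ENNReal.ofReal]
      apply FormalMultilinearSeries.le_radius_of_summable
      refine (LerchAux.summable_c z w hz' hρpos hρ).congr fun k => ?_
      rw [FormalMultilinearSeries.ofScalars_norm, Real.coe_toNNReal _ hρpos.le]
    · intro y hy
      rw [mem_emetric_ball_zero_iff, ENNReal.ofReal] at hy
      have hy1 : ‖y‖₊ < ρ.toNNReal := ENNReal.coe_lt_coe.mp hy
      have hy' : ‖y‖ ≤ ρ := by
        have := NNReal.coe_lt_coe.mpr hy1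
        rw [coe_nnnorm, Real.coe_toNNReal _ hρpos.le] at this
        exact this.le
      have hk := LerchAux.hasSum_key z w hz' hρ hy'
      rw [zero_add]
      refine hk.congr_fun fun n => ?_
      rw [FormalMultilinearSeries.ofScalars_apply_eq]
  have hap : apostolB r z w = (r.factorial : ℂ) * LerchAux.c z w r := by
    rw [apostolB, iteratedDeriv_eq_iteratedFDeriv, ← hball.factorial_smul 1 r,
      FormalMultilinearSeries.ofScalars_apply_eq]
    simp [smul_eq_mul]
  obtain ⟨m, rfl⟩ : ∃ m, r = m + 1 := ⟨r - 1, (Nat.succ_pred_eq_of_pos hr).symm⟩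
  simp only [Nat.add_sub_cancel]
  have hc : LerchAux.c z w (m + 1) = -(LerchAux.S z w m) / (m.factorial : ℂ) := rfl
  rw [hap, hc]
  have hfac : (((m + 1).factorial : ℕ) : ℂ) = ((m : ℂ) + 1) * (m.factorial : ℂ) := by
    rw [Nat.factorial_succ]
    push_cast
    ring
  have h1 : ((m.factorial : ℕ) : ℂ) ≠ 0 := Nat.cast_ne_zero.mpr m.factorial_ne_zero
  have h2 : ((m : ℂ) + 1) ≠ 0 := by
    have := Nat.cast_ne_zero (R := ℂ).mpr (Nat.succ_ne_zero m)
    simpa [Nat.succ_eq_add_one] using this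
  have hS : LerchAux.S z w m = ∑' n : ℕ, z ^ n * ((n : ℂ) + w) ^ m := rfl
  rw [← hS, hfac]
  push_cast
  field_simp
end

section
/- Let z ∈ ℂ with |z| ≤ 1, let s ∈ ℂ with Re(s) > 1, and let w ∈ ℂ with Re(w) > 0. Then the integral ∫_0^∞ t^{s−1} e^{−tw}/(1 − z·e^{−t}) dt converges absolutely and Γ(s)·Φ₀(z,s,w) = ∫_0^∞ t^{s−1} e^{−tw}/(1 − z·e^{−t}) dt, where Γ is the complex Gamma function and for t > 0, t^{s−1} = exp((s−1)·ln t) with ln the real natural logarithm. -/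
open Complex MeasureTheory

open Set Filter Metric

lemma aux_integrable {s : ℂ} (hs : 0 < s.re) {a : ℂ} (ha : 0 < a.re) :
    IntegrableOn (fun t : ℝ => (t : ℂ) ^ (s - 1) * Complex.exp (-(a * t))) (Ioi 0) := by
  have h₁ : IntegrableOn (fun t : ℝ => t ^ (s.re - 1) * Real.exp (-a.re * t)) (Ioi 0) := by
    have := integrableOn_rpow_mul_exp_neg_mul_rpow (p := 1) (s := s.re - 1) (b := a.re)
      (by linarith) one_pos ha
    simpa [Real.rpow_one] using this
  refine h₁.mono' ?_ ?_
  · apply ContinuousOn.aestronglyMeasurable ?_ measurableSet_Ioi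
    apply ContinuousOn.mul
    · exact fun t ht =>
        (Complex.continuousAt_ofReal_cpow_const t (s - 1) (Or.inr (ne_of_gt ht))).continuousWithinAt
    · exact (Complex.continuous_exp.comp ((continuous_const.mul Complex.continuous_ofReal).neg)).continuousOn
  · filter_upwards [self_mem_ae_restrict measurableSet_Ioi] with t ht
    rw [norm_mul,
      Complex.norm_cpow_eq_rpow_re_of_pos ht, Complex.norm_exp]
    simp [Complex.sub_re, Complex.one_re, Complex.neg_re, Complex.mul_re]

lemma gamma_integral_complex {s : ℂ} (hs : 0 < s.re) {a : ℂ} (ha : 0 < a.re) :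
    ∫ t : ℝ in Ioi 0, (t : ℂ) ^ (s - 1) * Complex.exp (-(a * t)) =
      Complex.Gamma s * a ^ (-s) := by
  set U : Set ℂ := {a : ℂ | 0 < a.re} with hU
  have hUo : IsOpen U := isOpen_lt continuous_const Complex.continuous_re
  set G : ℂ → ℂ := fun a => ∫ t : ℝ in Ioi 0, (t : ℂ) ^ (s - 1) * Complex.exp (-(a * t)) with hGdef
  set g : ℂ → ℂ := fun a => Complex.Gamma s * a ^ (-s) with hgdef
  -- G differentiable on U
  have hG : DifferentiableOn ℂ G U := by
    intro a₀ ha₀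
    have ha₀' : 0 < a₀.re := ha₀
    set ε := a₀.re / 2 with hε
    have hεpos : 0 < ε := by positivity
    have key := hasDerivAt_integral_of_dominated_loc_of_deriv_le (μ := volume.restrict (Ioi 0))
      (F := fun (x : ℂ) (t : ℝ) => (t : ℂ) ^ (s - 1) * Complex.exp (-(x * t)))
      (F' := fun (x : ℂ) (t : ℝ) => (t : ℂ) ^ (s - 1) * (-(t : ℂ) * Complex.exp (-(x * t))))
      (x₀ := a₀) (bound := fun t : ℝ => t ^ s.re * Real.exp (-ε * t))
      (Metric.ball_mem_nhds a₀ hεpos) ?_ (aux_integrable hs ha₀') ?_ ?_ ?_ ?_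
    · exact (key.2.differentiableAt).differentiableWithinAt
    · -- measurability of F x for x near a₀
      filter_upwards with x
      apply ContinuousOn.aestronglyMeasurable ?_ measurableSet_Ioi
      apply ContinuousOn.mul
      · exact fun t ht =>
          (Complex.continuousAt_ofReal_cpow_const t (s - 1) (Or.inr (ne_of_gt ht))).continuousWithinAt
      · exact (Complex.continuous_exp.comp ((continuous_const.mul Complex.continuous_ofReal).neg)).continuousOn
    · -- measurability of F' a₀
      apply ContinuousOn.aestronglyMeasurable ?_ measurableSet_Ioi
      apply ContinuousOn.mul
      · exact fun t ht =>
          (Complex.continuousAt_ofReal_cpow_const t (s - 1) (Or.inr (ne_of_gt ht))).continuousWithinAt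
      · exact (Complex.continuous_ofReal.neg.mul
          (Complex.continuous_exp.comp ((continuous_const.mul Complex.continuous_ofReal).neg))).continuousOn
    · -- bound
      filter_upwards [self_mem_ae_restrict measurableSet_Ioi] with t ht x hx
      have ht' : (0:ℝ) < t := ht
      have hxre : ε ≤ x.re := by
        have : ‖x - a₀‖ < ε := by simpa [Complex.dist_eq] using hx
        have h2 : |(x - a₀).re| ≤ ‖x - a₀‖ := Complex.abs_re_le_norm _
        have : |x.re - a₀.re| < ε := by
          simpa [Complex.sub_re] using lt_of_le_of_lt h2 this
        have := abs_lt.mp this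
        have := this.1
        simp only [hε] at *
        linarith
      rw [norm_mul, norm_mul,
        Complex.norm_cpow_eq_rpow_re_of_pos ht', Complex.norm_exp]
      have h1 : ‖-(t:ℂ)‖ = t := by
        simpa using abs_of_pos ht'
      rw [h1]
      have h2 : (-(x * (t:ℂ))).re = -(x.re * t) := by
        simp [Complex.mul_re]
      rw [h2]
      have hσ : t ^ (s.re - 1) * (t * Real.exp (-(x.re * t))) = t ^ ((s.re - 1) + 1) * Real.exp (-(x.re * t)) := by
        rw [Real.rpow_add ht', Real.rpow_one]; ring
      rw [Complex.sub_re, Complex.one_re, mul_comm (t ^ (s.re - 1)) _]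
      calc t * Real.exp (-(x.re * t)) * t ^ (s.re - 1)
          = t ^ s.re * Real.exp (-(x.re * t)) := by
            rw [show s.re = (s.re - 1) + 1 by ring, Real.rpow_add ht', Real.rpow_one]; ring
        _ ≤ t ^ s.re * Real.exp (-ε * t) := by
            apply mul_le_mul_of_nonneg_left _ (Real.rpow_nonneg ht'.le _)
            apply Real.exp_le_exp.mpr
            nlinarith
    · -- bound integrable
      have := integrableOn_rpow_mul_exp_neg_mul_rpow (p := 1) (s := s.re) (b := ε)
        (by linarith) one_pos hεpos
      simpa [Real.rpow_one, IntegrableOn] using this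
    · -- derivative
      filter_upwards [self_mem_ae_restrict measurableSet_Ioi] with t ht x hx
      have : HasDerivAt (fun x : ℂ => Complex.exp (-(x * t))) (-(t:ℂ) * Complex.exp (-(x * t))) x := by
        have h3 : HasDerivAt (fun x : ℂ => -(x * (t:ℂ))) (-(t:ℂ)) x := by
          exact (hasDerivAt_mul_const (t:ℂ)).neg
        simpa [mul_comm] using h3.cexp
      exact this.const_mul _
  -- g differentiable on U
  have hg : DifferentiableOn ℂ g U := by
    intro x hx
    have hx' : 0 < x.re := hx
    apply DifferentiableAt.differentiableWithinAt
    exact ((differentiableAt_id.cpow (differentiableAt_const _) (Or.inl hx'))).const_mul _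
  -- equality on positive reals
  have hreal : ∀ r : ℝ, 0 < r → G r = g r := by
    intro r hr
    have := Complex.integral_cpow_mul_exp_neg_mul_Ioi (a := s) (r := r) hs hr
    simp only [hGdef, hgdef]
    rw [this, mul_comm]
    congr 1
    rw [Complex.cpow_neg, ← Complex.inv_cpow _ _ (by
      rw [Complex.arg_ofReal_of_nonneg hr.le]; exact Real.pi_pos.ne), one_div]
  -- frequently
  have hfreq : ∃ᶠ x in nhdsWithin (1 : ℂ) {(1:ℂ)}ᶜ, G x = g x := by
    have htend : Tendsto (fun n : ℕ => ((1 + (n+1:ℝ)⁻¹ : ℝ) : ℂ)) atTop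
        (nhdsWithin (1 : ℂ) {(1:ℂ)}ᶜ) := by
      apply tendsto_nhdsWithin_of_tendsto_nhds_of_eventually_within
      · have h0 : Tendsto (fun n : ℕ => ((n:ℝ)+1)⁻¹) atTop (nhds 0) := by
          simpa only [one_div] using tendsto_one_div_add_atTop_nhds_zero_nat (𝕜 := ℝ)
        have h1 : Tendsto (fun n : ℕ => (1 + ((n:ℝ)+1)⁻¹ : ℝ)) atTop (nhds (1 + 0)) :=
          tendsto_const_nhds.add h0
        have h2 : Tendsto (fun n : ℕ => ((1 + ((n:ℝ)+1)⁻¹ : ℝ) : ℂ)) atTop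
            (nhds ((1 + 0 : ℝ) : ℂ)) := (Complex.continuous_ofReal.tendsto _).comp h1
        simpa using h2
      · filter_upwards with n
        simp only [mem_compl_iff, mem_singleton_iff]
        intro h
        have : (1 + (n+1:ℝ)⁻¹ : ℝ) = 1 := by exact_mod_cast h
        have hpos : (0:ℝ) < (n+1:ℝ)⁻¹ := by positivity
        linarith
    apply htend.frequently
    apply Frequently.of_forall
    intro n
    exact hreal _ (by positivity)
  have heq := ((hG.analyticOnNhd hUo).eqOn_of_preconnected_of_frequently_eq
    (hg.analyticOnNhd hUo) (convex_halfSpace_re_gt 0).isPreconnected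
    (by simp [hU] : (1:ℂ) ∈ U) hfreq) ha
  exact heq

theorem lerch_integral_representation (z : ℂ) (hz : ‖z‖ ≤ 1)
    (s : ℂ) (hs : 1 < s.re) (w : ℂ) (hw : 0 < w.re) :
    IntegrableOn (fun t : ℝ =>
        Complex.exp ((s - 1) * (Real.log t : ℂ)) * Complex.exp (-(t : ℂ) * w) /
          (1 - z * Complex.exp (-(t : ℂ)))) (Set.Ioi 0) ∧
    Complex.Gamma s * lerch z s w =
      ∫ t in Set.Ioi (0 : ℝ),
        Complex.exp ((s - 1) * (Real.log t : ℂ)) * Complex.exp (-(t : ℂ) * w) /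
          (1 - z * Complex.exp (-(t : ℂ))) := by
  have hs0 : 0 < s.re := by linarith
  set F : ℝ → ℂ := fun t => Complex.exp ((s - 1) * (Real.log t : ℂ)) *
      Complex.exp (-(t : ℂ) * w) / (1 - z * Complex.exp (-(t : ℂ))) with hFdef
  have hcpow : ∀ t : ℝ, 0 < t →
      Complex.exp ((s - 1) * (Real.log t : ℂ)) = (t : ℂ) ^ (s - 1) := by
    intro t ht
    rw [Complex.cpow_def_of_ne_zero (Complex.ofReal_ne_zero.mpr ht.ne'),
      ← Complex.ofReal_log ht.le, mul_comm]
  have habs_exp : ∀ t : ℝ, ‖Complex.exp (-(t : ℂ))‖ = Real.exp (-t) := by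
    intro t; rw [Complex.norm_exp]; norm_num
  have hlt : ∀ t : ℝ, 0 < t → ‖z * Complex.exp (-(t : ℂ))‖ < 1 := by
    intro t ht
    rw [norm_mul, habs_exp]
    calc ‖z‖ * Real.exp (-t) ≤ 1 * Real.exp (-t) :=
          mul_le_mul_of_nonneg_right hz (Real.exp_nonneg _)
      _ = Real.exp (-t) := one_mul _
      _ < 1 := Real.exp_lt_one_iff.mpr (by linarith)
  have hne : ∀ t : ℝ, 0 < t → 1 - z * Complex.exp (-(t : ℂ)) ≠ 0 := by
    intro t ht h
    have h2 := hlt t ht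
    rw [sub_eq_zero] at h
    rw [← h] at h2
    simp at h2
  have hdenom : ∀ t : ℝ, 0 < t →
      1 - Real.exp (-t) ≤ ‖1 - z * Complex.exp (-(t : ℂ))‖ := by
    intro t ht
    have h1 : ‖z * Complex.exp (-(t : ℂ))‖ ≤ Real.exp (-t) := by
      rw [norm_mul, habs_exp]
      calc ‖z‖ * Real.exp (-t) ≤ 1 * Real.exp (-t) :=
            mul_le_mul_of_nonneg_right hz (Real.exp_nonneg _)
        _ = Real.exp (-t) := one_mul _
    calc 1 - Real.exp (-t) ≤ 1 - ‖z * Complex.exp (-(t : ℂ))‖ := by linarith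
      _ = ‖(1 : ℂ)‖ - ‖z * Complex.exp (-(t : ℂ))‖ := by rw [norm_one]
      _ ≤ ‖1 - z * Complex.exp (-(t : ℂ))‖ := norm_sub_norm_le _ _
      _ = ‖1 - z * Complex.exp (-(t : ℂ))‖ := rfl
  have hnormF : ∀ t : ℝ, 0 < t → ‖F t‖ =
      t ^ (s.re - 1) * Real.exp (-(w.re * t)) /
        ‖1 - z * Complex.exp (-(t : ℂ))‖ := by
    intro t ht
    have e1 : ‖(t : ℂ) ^ (s - 1)‖ = t ^ (s.re - 1) := by
      rw [Complex.norm_cpow_eq_rpow_re_of_pos ht, Complex.sub_re, Complex.one_re]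
    have e2 : ‖Complex.exp (-(t : ℂ) * w)‖ = Real.exp (-(w.re * t)) := by
      rw [Complex.norm_exp]
      congr 1
      simp only [Complex.mul_re, Complex.neg_re, Complex.neg_im, Complex.ofReal_re,
        Complex.ofReal_im]
      ring
    rw [hFdef]
    simp only [norm_div, norm_mul]
    rw [hcpow t ht, e1, e2]
  have hFmeas : Measurable F := by
    apply Measurable.div
    · exact (Complex.measurable_exp.comp
        ((Complex.measurable_ofReal.comp Real.measurable_log).const_mul _)).mul
        (Complex.measurable_exp.comp (Complex.measurable_ofReal.neg.mul_const w))
    · exact measurable_const.sub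
        ((Complex.measurable_exp.comp Complex.measurable_ofReal.neg).const_mul z)
  have hInt : IntegrableOn F (Set.Ioi 0) := by
    rw [show Set.Ioi (0:ℝ) = Set.Ioc 0 1 ∪ Set.Ioi 1 from
      (Set.Ioc_union_Ioi_eq_Ioi zero_le_one).symm]
    apply IntegrableOn.union
    · -- Ioc 0 1
      have hbound_int : IntegrableOn (fun t : ℝ => Real.exp 1 * t ^ (s.re - 2)) (Set.Ioc 0 1) := by
        apply Integrable.const_mul
        have h := intervalIntegral.intervalIntegrable_rpow' (a := (0:ℝ)) (b := 1)
          (by linarith : (-1:ℝ) < s.re - 2)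
        rwa [intervalIntegrable_iff_integrableOn_Ioc_of_le zero_le_one] at h
      apply hbound_int.mono' hFmeas.aestronglyMeasurable
      filter_upwards [self_mem_ae_restrict measurableSet_Ioc] with t ht
      obtain ⟨ht0, ht1⟩ := ht
      rw [hnormF t ht0]
      have key : (t + 1) * Real.exp (-t) ≤ 1 := by
        have h2 := mul_le_mul_of_nonneg_right (Real.add_one_le_exp t) (Real.exp_nonneg (-t))
        rwa [← Real.exp_add, add_neg_cancel, Real.exp_zero] at h2
      have hd : t * Real.exp (-t) ≤ ‖1 - z * Complex.exp (-(t : ℂ))‖ := by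
        have h3 : t * Real.exp (-t) + Real.exp (-t) ≤ 1 := by
          have h4 := key; rw [add_mul, one_mul] at h4; linarith
        have h5 := hdenom t ht0
        linarith
      have hte : (0:ℝ) < t * Real.exp (-t) := by positivity
      have hA : (0:ℝ) ≤ t ^ (s.re - 1) * Real.exp (-(w.re * t)) := by positivity
      calc t ^ (s.re - 1) * Real.exp (-(w.re * t)) /
            ‖1 - z * Complex.exp (-(t : ℂ))‖
          ≤ t ^ (s.re - 1) * Real.exp (-(w.re * t)) / (t * Real.exp (-t)) :=
            div_le_div_of_nonneg_left hA hte hd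
        _ ≤ Real.exp 1 * t ^ (s.re - 2) := by
            rw [div_le_iff₀ hte]
            have h1 : t ^ (s.re - 1) = t ^ (s.re - 2) * t := by
              rw [show s.re - 1 = (s.re - 2) + 1 by ring, Real.rpow_add ht0, Real.rpow_one]
            rw [h1]
            calc t ^ (s.re - 2) * t * Real.exp (-(w.re * t))
                ≤ t ^ (s.re - 2) * t * Real.exp (1 + -t) := by
                  apply mul_le_mul_of_nonneg_left _ (by positivity)
                  apply Real.exp_le_exp.mpr
                  nlinarith
              _ = Real.exp 1 * t ^ (s.re - 2) * (t * Real.exp (-t)) := by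
                  rw [Real.exp_add]; ring
    · -- Ioi 1
      have hc0 : (0:ℝ) < 1 - Real.exp (-1) := by
        have h : Real.exp (-1 : ℝ) < 1 := Real.exp_lt_one_iff.mpr (by norm_num)
        linarith
      have hbound_int : IntegrableOn
          (fun t : ℝ => (1 - Real.exp (-1))⁻¹ * (t ^ (s.re - 1) * Real.exp (-(w.re * t))))
          (Set.Ioi 1) := by
        apply Integrable.const_mul
        apply IntegrableOn.mono_set _ (Set.Ioi_subset_Ioi zero_le_one)
        have h := integrableOn_rpow_mul_exp_neg_mul_rpow (p := 1) (s := s.re - 1) (b := w.re)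
          (by linarith) one_pos hw
        simpa [Real.rpow_one, neg_mul] using h
      apply hbound_int.mono' hFmeas.aestronglyMeasurable
      filter_upwards [self_mem_ae_restrict measurableSet_Ioi] with t ht
      have ht1 : (1:ℝ) < t := ht
      have ht0 : (0:ℝ) < t := lt_trans one_pos ht1
      rw [hnormF t ht0]
      have hd : 1 - Real.exp (-1) ≤ ‖1 - z * Complex.exp (-(t : ℂ))‖ := by
        have h1 : Real.exp (-t) ≤ Real.exp (-1 : ℝ) := Real.exp_le_exp.mpr (by linarith)
        have h2 := hdenom t ht0
        linarith
      have hA : (0:ℝ) ≤ t ^ (s.re - 1) * Real.exp (-(w.re * t)) := by positivity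
      calc t ^ (s.re - 1) * Real.exp (-(w.re * t)) /
            ‖1 - z * Complex.exp (-(t : ℂ))‖
          ≤ t ^ (s.re - 1) * Real.exp (-(w.re * t)) / (1 - Real.exp (-1)) :=
            div_le_div_of_nonneg_left hA hc0 hd
        _ = (1 - Real.exp (-1))⁻¹ * (t ^ (s.re - 1) * Real.exp (-(w.re * t))) := by
            rw [div_eq_mul_inv]; ring
  refine ⟨hInt, ?_⟩
  -- Series part
  set Fn : ℕ → ℝ → ℂ := fun n t =>
    (t : ℂ) ^ (s - 1) * (z ^ n * Complex.exp (-(((n : ℂ) + w) * t))) with hFndef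
  have hare : ∀ n : ℕ, ((n : ℂ) + w).re = n + w.re := by
    intro n; simp [Complex.add_re]
  have hapos : ∀ n : ℕ, 0 < ((n : ℂ) + w).re := by
    intro n; rw [hare]; positivity
  have hFn_int : ∀ n : ℕ, Integrable (Fn n) (volume.restrict (Set.Ioi 0)) := by
    intro n
    have h := (aux_integrable hs0 (hapos n)).const_mul (z ^ n)
    exact h.congr (Eventually.of_forall fun t => by simp only [hFndef]; ring)
  have hFn_norm : ∀ n : ℕ, ∀ t : ℝ, 0 < t → ‖Fn n t‖ =
      ‖z‖ ^ n * (t ^ (s.re - 1) * Real.exp (-(((n : ℝ) + w.re) * t))) := by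
    intro n t ht
    simp only [hFndef, norm_mul, norm_pow]
    rw [Complex.norm_cpow_eq_rpow_re_of_pos ht, Complex.norm_exp]
    have e : (-(((n : ℂ) + w) * t)).re = -(((n : ℝ) + w.re) * t) := by
      simp only [Complex.neg_re, Complex.mul_re, Complex.add_re, Complex.add_im,
        Complex.natCast_re, Complex.natCast_im, Complex.ofReal_re, Complex.ofReal_im]
      ring
    rw [e, Complex.sub_re, Complex.one_re]
    ring
  have hFn_norm_int : ∀ n : ℕ, ∫ t in Set.Ioi (0:ℝ), ‖Fn n t‖ =
      ‖z‖ ^ n * ((1 / ((n : ℝ) + w.re)) ^ s.re * Real.Gamma s.re) := by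
    intro n
    rw [setIntegral_congr_fun measurableSet_Ioi (fun t ht => hFn_norm n t ht),
      MeasureTheory.integral_const_mul]
    congr 1
    exact Real.integral_rpow_mul_exp_neg_mul_Ioi hs0 (by positivity)
  have hsummable : Summable fun n : ℕ => ∫ t in Set.Ioi (0:ℝ), ‖Fn n t‖ := by
    set c : ℝ := min 1 w.re with hcdef
    have hc0 : 0 < c := lt_min one_pos hw
    have hΓ : (0:ℝ) ≤ Real.Gamma s.re := (Real.Gamma_pos_of_pos hs0).le
    have hsumg : Summable (fun n : ℕ =>
        ((1/c) ^ s.re * Real.Gamma s.re) * (1 / ((n:ℝ) + 1)) ^ s.re) := by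
      apply Summable.mul_left
      have h := Real.summable_one_div_nat_rpow.mpr hs
      have h2 := (summable_nat_add_iff (f := fun n : ℕ => 1 / (n:ℝ) ^ s.re) 1).mpr h
      refine h2.congr fun n => ?_
      push_cast
      rw [Real.div_rpow zero_le_one (by positivity), Real.one_rpow]
    refine Summable.of_nonneg_of_le
      (fun n => integral_nonneg fun t => norm_nonneg _) (fun n => ?_) hsumg
    rw [hFn_norm_int n]
    have h1 : ‖z‖ ^ n ≤ 1 := pow_le_one₀ (norm_nonneg z) hz
    have h2 : (1 / ((n : ℝ) + w.re)) ^ s.re ≤ (1/c) ^ s.re * (1 / ((n:ℝ) + 1)) ^ s.re := by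
      rw [← Real.mul_rpow (by positivity) (by positivity)]
      apply Real.rpow_le_rpow (by positivity) _ hs0.le
      rw [div_mul_div_comm, one_mul]
      apply one_div_le_one_div_of_le (by positivity)
      have hc1 : c ≤ 1 := min_le_left _ _
      have hcw : c ≤ w.re := min_le_right _ _
      have hn : (0:ℝ) ≤ n := Nat.cast_nonneg n
      nlinarith
    calc ‖z‖ ^ n * ((1 / ((n : ℝ) + w.re)) ^ s.re * Real.Gamma s.re)
        ≤ 1 * ((1/c) ^ s.re * (1 / ((n:ℝ) + 1)) ^ s.re * Real.Gamma s.re) := by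
          apply mul_le_mul h1 (mul_le_mul_of_nonneg_right h2 hΓ) (by positivity) one_pos.le
      _ = ((1/c) ^ s.re * Real.Gamma s.re) * (1 / ((n:ℝ) + 1)) ^ s.re := by ring
  have hhasSum_t : ∀ t ∈ Set.Ioi (0:ℝ), HasSum (fun n => Fn n t) (F t) := by
    intro t ht
    have ht' : (0:ℝ) < t := ht
    have hgeo := hasSum_geometric_of_norm_lt_one (ξ := z * Complex.exp (-(t:ℂ)))
      (hlt t ht')
    have h2 := hgeo.mul_left ((t:ℂ) ^ (s-1) * Complex.exp (-(w * t)))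
    have heq : (fun n : ℕ => (t:ℂ) ^ (s-1) * Complex.exp (-(w * t)) *
        (z * Complex.exp (-(t:ℂ))) ^ n) = fun n => Fn n t := by
      funext n
      simp only [hFndef]
      rw [mul_pow, ← Complex.exp_nat_mul,
        show -(((n:ℂ) + w) * (t:ℂ)) = (n:ℂ) * -(t:ℂ) + -(w * t) by ring, Complex.exp_add]
      ring
    have hFt : F t = (t:ℂ) ^ (s-1) * Complex.exp (-(w * t)) *
        (1 - z * Complex.exp (-(t:ℂ)))⁻¹ := by
      rw [hFdef]
      simp only
      rw [hcpow t ht', div_eq_mul_inv]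
      congr 2
      ring_nf
    rw [hFt]
    exact heq ▸ h2
  have hkey := MeasureTheory.hasSum_integral_of_summable_integral_norm
    (μ := volume.restrict (Set.Ioi 0)) hFn_int hsummable
  have hint_eq : ∫ t in Set.Ioi (0:ℝ), (∑' n, Fn n t) = ∫ t in Set.Ioi (0:ℝ), F t :=
    setIntegral_congr_fun measurableSet_Ioi (fun t ht => (hhasSum_t t ht).tsum_eq)
  have hint_n : ∀ n : ℕ, ∫ t in Set.Ioi (0:ℝ), Fn n t =
      Complex.Gamma s * (z ^ n * ((n:ℂ) + w) ^ (-s)) := by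
    intro n
    have h3 : ∫ t in Set.Ioi (0:ℝ), Fn n t =
        z ^ n * ∫ t in Set.Ioi (0:ℝ), (t:ℂ) ^ (s-1) * Complex.exp (-((((n:ℂ) + w)) * t)) := by
      rw [← MeasureTheory.integral_const_mul]
      apply setIntegral_congr_fun measurableSet_Ioi (fun t ht => ?_)
      simp only [hFndef]; ring
    rw [h3, gamma_integral_complex hs0 (hapos n)]
    ring
  have hkey2 : HasSum (fun n : ℕ => Complex.Gamma s * (z ^ n * ((n:ℂ) + w) ^ (-s)))
      (∫ t in Set.Ioi (0:ℝ), F t) := by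
    rw [← hint_eq]
    exact (funext hint_n) ▸ hkey
  calc Complex.Gamma s * lerch z s w
      = ∑' n : ℕ, Complex.Gamma s * (z ^ n * ((n:ℂ) + w) ^ (-s)) := by
        rw [lerch, ← tsum_mul_left]
    _ = ∫ t in Set.Ioi (0:ℝ), F t := hkey2.tsum_eq
end

section
/- Let α ∈ ℝ with α ≥ 1 and let N be a non-negative integer. Then the function H(z,s,w) = ∫_α^∞ t^{s−1} e^{−t(N+w)}/(1 − z·e^{−t}) dt (with t^{s−1} = exp((s−1)·ln t) for t > 0) is well defined (the integral converges absolutely) and is holomorphic in each of the variables z, s, w separately on the domain {z ∈ ℂ : |z| < e^α} × ℂ × {w ∈ ℂ : Re(w) > −N}. -/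
open Complex MeasureTheory

private lemma int_exp_log (α A B : ℝ) (hα : 1 ≤ α) (hB : 0 < B) :
    IntegrableOn (fun t : ℝ => Real.exp (A * Real.log t) * Real.exp (-B * t)) (Set.Ioi α) := by
  have h0 : (0:ℝ) < α := lt_of_lt_of_le zero_lt_one hα
  have h1 : IntegrableOn (fun t : ℝ => t ^ |A| * Real.exp (-B * t)) (Set.Ioi α) := by
    have h2 := integrableOn_rpow_mul_exp_neg_mul_rpow (s := |A|) (p := 1) (b := B)
      (by linarith [abs_nonneg A]) one_pos hB
    simp only [Real.rpow_one] at h2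
    exact h2.mono_set (Set.Ioi_subset_Ioi h0.le)
  refine h1.mono' ?_ ?_
  · apply Measurable.aestronglyMeasurable
    exact ((Real.measurable_log.const_mul A).exp).mul ((measurable_id.const_mul (-B)).exp)
  · refine (ae_restrict_iff' measurableSet_Ioi).2 (ae_of_all _ fun t ht => ?_)
    have ht1 : (1:ℝ) ≤ t := le_trans hα (le_of_lt ht)
    have htpos : (0:ℝ) < t := lt_of_lt_of_le zero_lt_one ht1
    have hle : Real.exp (A * Real.log t) ≤ t ^ |A| := by
      rw [Real.rpow_def_of_pos htpos, mul_comm (Real.log t)]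
      exact Real.exp_le_exp.2 (mul_le_mul_of_nonneg_right (le_abs_self A) (Real.log_nonneg ht1))
    have hnn : 0 ≤ Real.exp (A * Real.log t) * Real.exp (-B * t) := by positivity
    rw [Real.norm_of_nonneg hnn]
    exact mul_le_mul_of_nonneg_right hle (Real.exp_pos _).le

private lemma norm_aux (σ ζ ω : ℂ) (n : ℕ) (t : ℝ) :
    ‖Complex.exp ((σ-1)*(Real.log t:ℂ)) * Complex.exp (-(t:ℂ)*((n:ℂ)+ω)) /
      (1 - ζ*Complex.exp (-(t:ℂ)))‖
    = Real.exp ((σ.re-1)*Real.log t) * Real.exp (-(t*(n+ω.re))) /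
      ‖(1 - ζ*Complex.exp (-(t:ℂ)))‖ := by
  rw [norm_div, norm_mul]
  simp only [Complex.norm_exp]
  congr 2
  · congr 1
    simp [Complex.mul_re, Complex.sub_re, Complex.sub_im]
  · congr 1
    simp [Complex.mul_re, Complex.add_re, Complex.add_im, Complex.neg_re, Complex.neg_im]

private lemma norm_cexp (x : ℂ) : ‖Complex.exp x‖ = Real.exp x.re := by
  simp [Complex.norm_exp]

private lemma re1 (σ : ℂ) (L : ℝ) : ((σ-1)*(L:ℂ)).re = (σ.re - 1) * L := by
  simp [Complex.mul_re, Complex.sub_re, Complex.sub_im]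

private lemma re2 (ω : ℂ) (n : ℕ) (t : ℝ) : (-(t:ℂ)*((n:ℂ)+ω)).re = -(t*(n+ω.re)) := by
  simp [Complex.mul_re, Complex.add_re, Complex.add_im, Complex.neg_re, Complex.neg_im]

private lemma denom_lb (α R : ℝ) (ζ : ℂ) (hζ : ‖ζ‖ ≤ R)
    (t : ℝ) (ht : α ≤ t) :
    1 - R * Real.exp (-α) ≤ ‖(1 - ζ * Complex.exp (-(t:ℂ)))‖ := by
  have hR0 : 0 ≤ R := le_trans (norm_nonneg ζ) hζ
  have h1 : ‖(ζ * Complex.exp (-(t:ℂ)))‖ ≤ R * Real.exp (-α) := by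
    rw [norm_mul, Complex.norm_exp]
    have hre : (-(t:ℂ)).re = -t := by simp
    rw [hre]
    exact mul_le_mul hζ (Real.exp_le_exp.2 (by linarith)) (Real.exp_pos _).le hR0
  calc 1 - R * Real.exp (-α) ≤ 1 - ‖(ζ * Complex.exp (-(t:ℂ)))‖ := by linarith
    _ ≤ ‖(1 - ζ * Complex.exp (-(t:ℂ)))‖ := by
        have h2 := abs_norm_sub_norm_le 1 (ζ * Complex.exp (-(t:ℂ)))
        simp only [norm_one] at h2
        exact le_trans (le_abs_self _) h2

private lemma denom_pos (α R : ℝ) (hR : R < Real.exp α) :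
    0 < 1 - R * Real.exp (-α) := by
  have h := Real.exp_pos (-α)
  have h2 : R * Real.exp (-α) < Real.exp α * Real.exp (-α) := mul_lt_mul_of_pos_right hR h
  rw [← Real.exp_add] at h2
  simp at h2
  linarith

private lemma meas_e1 (σ : ℂ) : Measurable fun t : ℝ => Complex.exp ((σ-1)*(Real.log t:ℂ)) :=
  Complex.measurable_exp.comp ((Complex.measurable_ofReal.comp Real.measurable_log).const_mul _)

private lemma meas_e2 (ω : ℂ) (n : ℕ) :
    Measurable fun t : ℝ => Complex.exp (-(t:ℂ)*((n:ℂ)+ω)) :=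
  Complex.measurable_exp.comp ((Complex.measurable_ofReal.neg).mul_const _)

private lemma meas_den (ζ : ℂ) : Measurable fun t : ℝ => (1 - ζ*Complex.exp (-(t:ℂ))) :=
  measurable_const.sub ((Complex.measurable_exp.comp Complex.measurable_ofReal.neg).const_mul ζ)

theorem H_integral_holomorphic (α : ℝ) (hα : 1 ≤ α) (N : ℕ) :
    ∀ z s w : ℂ, ‖z‖ < Real.exp α → -(N : ℝ) < w.re →
      IntegrableOn (fun t : ℝ =>
          Complex.exp ((s - 1) * (Real.log t : ℂ)) *
            Complex.exp (-(t : ℂ) * ((N : ℂ) + w)) /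
            (1 - z * Complex.exp (-(t : ℂ)))) (Set.Ioi α) ∧
      DifferentiableAt ℂ (fun z' => ∫ t in Set.Ioi α,
          Complex.exp ((s - 1) * (Real.log t : ℂ)) *
            Complex.exp (-(t : ℂ) * ((N : ℂ) + w)) /
            (1 - z' * Complex.exp (-(t : ℂ)))) z ∧
      DifferentiableAt ℂ (fun s' => ∫ t in Set.Ioi α,
          Complex.exp ((s' - 1) * (Real.log t : ℂ)) *
            Complex.exp (-(t : ℂ) * ((N : ℂ) + w)) /
            (1 - z * Complex.exp (-(t : ℂ)))) s ∧
      DifferentiableAt ℂ (fun w' => ∫ t in Set.Ioi α,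
          Complex.exp ((s - 1) * (Real.log t : ℂ)) *
            Complex.exp (-(t : ℂ) * ((N : ℂ) + w')) /
            (1 - z * Complex.exp (-(t : ℂ)))) w := by
  intro z s w hz hw
  set b₀ : ℝ := (N:ℝ) + w.re with hb₀def
  have hb₀ : 0 < b₀ := by simp only [hb₀def]; linarith
  set R : ℝ := (‖z‖ + Real.exp α) / 2 with hRdef
  have hzR : ‖z‖ ≤ R := by simp only [hRdef]; linarith
  have hR : R < Real.exp α := by simp only [hRdef]; linarith
  set c : ℝ := 1 - R * Real.exp (-α) with hcdef
  have hc : 0 < c := denom_pos α R hR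
  -- membership helper
  have hball : ∀ ζ' ∈ Metric.ball z ((Real.exp α - ‖z‖)/2), ‖ζ'‖ ≤ R := by
    intro ζ' hζ'
    rw [Metric.mem_ball, Complex.dist_eq] at hζ'
    have h2 : ‖ζ'‖ - ‖z‖ ≤ ‖(ζ' - z)‖ :=
      le_trans (le_abs_self _) (abs_norm_sub_norm_le ζ' z)
    simp only [hRdef]
    linarith
  -- denominator bounds
  have hden : ∀ ζ' : ℂ, ‖ζ'‖ ≤ R → ∀ t : ℝ, t ∈ Set.Ioi α →
      c ≤ ‖(1 - ζ' * Complex.exp (-(t:ℂ)))‖ :=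
    fun ζ' hζ' t ht => denom_lb α R ζ' hζ' t (le_of_lt ht)
  have hdne : ∀ ζ' : ℂ, ‖ζ'‖ ≤ R → ∀ t : ℝ, t ∈ Set.Ioi α →
      (1 - ζ' * Complex.exp (-(t:ℂ))) ≠ 0 := by
    intro ζ' hζ' t ht h0
    have h1 := hden ζ' hζ' t ht
    rw [h0, norm_zero] at h1
    linarith
  have measF : ∀ σ ζ ω : ℂ, AEStronglyMeasurable (fun t : ℝ =>
      Complex.exp ((σ-1)*(Real.log t:ℂ)) * Complex.exp (-(t:ℂ)*((N:ℂ)+ω)) /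
        (1 - ζ * Complex.exp (-(t:ℂ)))) (volume.restrict (Set.Ioi α)) :=
    fun σ ζ ω => (((meas_e1 σ).mul (meas_e2 ω N)).div (meas_den ζ)).aestronglyMeasurable
  have hcm : ∀ t : ℝ, -(t * ((N:ℝ) + w.re)) = -b₀ * t := by
    intro t; rw [hb₀def]; ring
  -- Part 1 (general in σ, ζ)
  have hInt : ∀ (σ ζ : ℂ), ‖ζ‖ ≤ R → IntegrableOn (fun t : ℝ =>
      Complex.exp ((σ-1)*(Real.log t:ℂ)) * Complex.exp (-(t:ℂ)*((N:ℂ)+w)) /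
        (1 - ζ * Complex.exp (-(t:ℂ)))) (Set.Ioi α) := by
    intro σ ζ hζ
    refine ((int_exp_log α (σ.re - 1) b₀ hα hb₀).div_const c).mono' (measF σ ζ w) ?_
    refine (ae_restrict_iff' measurableSet_Ioi).2 (ae_of_all _ fun t ht => ?_)
    rw [norm_aux, hcm t]
    exact div_le_div₀ (by positivity) le_rfl hc (hden ζ hζ t ht)
  have hεz : 0 < (Real.exp α - ‖z‖)/2 := by linarith
  -- Part 2 : differentiability in z
  have hz_part := hasDerivAt_integral_of_dominated_loc_of_deriv_le
    (μ := volume.restrict (Set.Ioi α)) (x₀ := z)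
    (F := fun ζ' t => Complex.exp ((s-1)*(Real.log t:ℂ)) * Complex.exp (-(t:ℂ)*((N:ℂ)+w)) /
      (1 - ζ' * Complex.exp (-(t:ℂ))))
    (F' := fun ζ' t => Complex.exp ((s-1)*(Real.log t:ℂ)) * Complex.exp (-(t:ℂ)*((N:ℂ)+w)) *
      Complex.exp (-(t:ℂ)) / (1 - ζ' * Complex.exp (-(t:ℂ)))^2)
    (bound := fun t => Real.exp ((s.re-1) * Real.log t) * Real.exp (-b₀ * t) / c^2)
    (Metric.ball_mem_nhds z hεz) (Filter.Eventually.of_forall fun ζ' => measF s ζ' w) (hInt s z hzR)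
    ((((((meas_e1 s).mul (meas_e2 w N)).mul
        (Complex.measurable_exp.comp Complex.measurable_ofReal.neg)).div
        ((meas_den z).pow_const 2))).aestronglyMeasurable)
    ?_ ((int_exp_log α (s.re - 1) b₀ hα hb₀).div_const (c^2)) ?_
  rotate_left
  · -- bound for z-derivative
    refine (ae_restrict_iff' measurableSet_Ioi).2 (ae_of_all _ fun t ht => ?_)
    intro ζ' hζ'
    have ht0 : (0:ℝ) < t := lt_of_lt_of_le (lt_of_lt_of_le zero_lt_one hα) (le_of_lt ht)
    simp only [norm_div, norm_mul, norm_pow, Complex.norm_exp, re1, re2,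
      Complex.neg_re, Complex.ofReal_re]
    rw [hcm t]
    refine div_le_div₀ (by positivity) ?_ (by positivity)
      (pow_le_pow_left₀ hc.le (hden ζ' (hball ζ' hζ') t ht) 2)
    have h1 : Real.exp (-t) ≤ 1 := Real.exp_le_one_iff.2 (by linarith)
    exact mul_le_of_le_one_right (by positivity) h1
  · -- derivative for z
    refine (ae_restrict_iff' measurableSet_Ioi).2 (ae_of_all _ fun t ht => ?_)
    intro ζ' hζ'
    have hne := hdne ζ' (hball ζ' hζ') t ht
    have h := HasDerivAt.div (hasDerivAt_const ζ'
        (Complex.exp ((s-1)*(Real.log t:ℂ)) * Complex.exp (-(t:ℂ)*((N:ℂ)+w))))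
      (((hasDerivAt_id ζ').mul_const (Complex.exp (-(t:ℂ)))).const_sub 1) hne
    simp only [id_eq] at h
    refine h.congr_deriv ?_
    ring
  -- Part 3 : differentiability in s
  have hs_part := hasDerivAt_integral_of_dominated_loc_of_deriv_le
    (μ := volume.restrict (Set.Ioi α)) (x₀ := s)
    (F := fun σ' t => Complex.exp ((σ'-1)*(Real.log t:ℂ)) * Complex.exp (-(t:ℂ)*((N:ℂ)+w)) /
      (1 - z * Complex.exp (-(t:ℂ))))
    (F' := fun σ' t => (Real.log t : ℂ) * (Complex.exp ((σ'-1)*(Real.log t:ℂ)) *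
      Complex.exp (-(t:ℂ)*((N:ℂ)+w)) / (1 - z * Complex.exp (-(t:ℂ)))))
    (bound := fun t => Real.exp ((s.re+1) * Real.log t) * Real.exp (-b₀ * t) / c)
    (Metric.ball_mem_nhds s one_pos) (Filter.Eventually.of_forall fun σ' => measF σ' z w) (hInt s z hzR)
    (((Complex.measurable_ofReal.comp Real.measurable_log).mul
      (((meas_e1 s).mul (meas_e2 w N)).div (meas_den z))).aestronglyMeasurable)
    ?_ ((int_exp_log α (s.re + 1) b₀ hα hb₀).div_const c) ?_
  rotate_left
  · -- bound for s-derivative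
    refine (ae_restrict_iff' measurableSet_Ioi).2 (ae_of_all _ fun t ht => ?_)
    intro σ' hσ'
    have ht1 : (1:ℝ) ≤ t := le_trans hα (le_of_lt ht)
    have ht0 : (0:ℝ) < t := lt_of_lt_of_le zero_lt_one ht1
    have hL0 : 0 ≤ Real.log t := Real.log_nonneg ht1
    rw [norm_mul, norm_aux, hcm t, Complex.norm_real, Real.norm_eq_abs,
      _root_.abs_of_nonneg hL0, ← mul_div_assoc]
    refine div_le_div₀ (by positivity) ?_ hc (hden z hzR t ht)
    rw [← mul_assoc]
    refine mul_le_mul_of_nonneg_right ?_ (Real.exp_pos _).le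
    have hre : σ'.re - 1 ≤ s.re := by
      rw [Metric.mem_ball, Complex.dist_eq] at hσ'
      have h2 : |(σ' - s).re| ≤ ‖(σ' - s)‖ := Complex.abs_re_le_norm _
      rw [Complex.sub_re] at h2
      have := le_trans (le_abs_self _) h2
      linarith
    calc Real.log t * Real.exp ((σ'.re-1) * Real.log t)
        ≤ Real.exp (Real.log t) * Real.exp (s.re * Real.log t) := by
          refine mul_le_mul ?_ (Real.exp_le_exp.2 (mul_le_mul_of_nonneg_right hre hL0))
            (Real.exp_pos _).le (Real.exp_pos _).le
          linarith [Real.add_one_le_exp (Real.log t)]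
      _ = Real.exp ((s.re+1) * Real.log t) := by
          rw [← Real.exp_add]; congr 1; ring
  · -- derivative for s
    refine ae_of_all _ fun t => ?_
    intro σ' hσ'
    have h := ((((hasDerivAt_id σ').sub_const 1).mul_const ((Real.log t : ℂ))).cexp.mul_const
      (Complex.exp (-(t:ℂ)*((N:ℂ)+w)))).div_const (1 - z * Complex.exp (-(t:ℂ)))
    simp only [id_eq] at h
    refine h.congr_deriv ?_
    ring
  -- Part 4 : differentiability in w
  have hεw : 0 < b₀ / 2 := by linarith
  have hw_part := hasDerivAt_integral_of_dominated_loc_of_deriv_le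
    (μ := volume.restrict (Set.Ioi α)) (x₀ := w)
    (F := fun ω' t => Complex.exp ((s-1)*(Real.log t:ℂ)) * Complex.exp (-(t:ℂ)*((N:ℂ)+ω')) /
      (1 - z * Complex.exp (-(t:ℂ))))
    (F' := fun ω' t => Complex.exp ((s-1)*(Real.log t:ℂ)) *
      (Complex.exp (-(t:ℂ)*((N:ℂ)+ω')) * (-(t:ℂ))) / (1 - z * Complex.exp (-(t:ℂ))))
    (bound := fun t => Real.exp (s.re * Real.log t) * Real.exp (-(b₀/2) * t) / c)
    (Metric.ball_mem_nhds w hεw) (Filter.Eventually.of_forall fun ω' => measF s z ω') (hInt s z hzR)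
    ((((meas_e1 s).mul ((meas_e2 w N).mul Complex.measurable_ofReal.neg)).div
      (meas_den z)).aestronglyMeasurable)
    ?_ ((int_exp_log α s.re (b₀/2) hα hεw).div_const c) ?_
  rotate_left
  · -- bound for w-derivative
    refine (ae_restrict_iff' measurableSet_Ioi).2 (ae_of_all _ fun t ht => ?_)
    intro ω' hω'
    have ht1 : (1:ℝ) ≤ t := le_trans hα (le_of_lt ht)
    have ht0 : (0:ℝ) < t := lt_of_lt_of_le zero_lt_one ht1
    simp only [norm_div, norm_mul, norm_neg, Complex.norm_exp, re1, re2,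
      Complex.norm_real, Real.norm_eq_abs, abs_of_pos ht0]
    have hw' : b₀ / 2 ≤ (N:ℝ) + ω'.re := by
      rw [Metric.mem_ball, Complex.dist_eq] at hω'
      have h2 : |(ω' - w).re| ≤ ‖(ω' - w)‖ := Complex.abs_re_le_norm _
      rw [Complex.sub_re] at h2
      have h3 : -|ω'.re - w.re| ≤ ω'.re - w.re := neg_abs_le _
      have h4 := hb₀def
      linarith
    refine div_le_div₀ (by positivity) ?_ hc (hden z hzR t ht)
    calc Real.exp ((s.re-1) * Real.log t) * (Real.exp (-(t * ((N:ℝ) + ω'.re))) * t)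
        ≤ Real.exp ((s.re-1) * Real.log t) *
            (Real.exp (-(b₀/2) * t) * Real.exp (Real.log t)) := by
          refine mul_le_mul_of_nonneg_left (mul_le_mul ?_ ?_ ht0.le (Real.exp_pos _).le)
            (Real.exp_pos _).le
          · refine Real.exp_le_exp.2 ?_
            nlinarith
          · rw [Real.exp_log ht0]
      _ = Real.exp (s.re * Real.log t) * Real.exp (-(b₀/2) * t) := by
          rw [show Real.exp ((s.re-1) * Real.log t) *
              (Real.exp (-(b₀/2) * t) * Real.exp (Real.log t)) =
              (Real.exp ((s.re-1) * Real.log t) * Real.exp (Real.log t)) *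
              Real.exp (-(b₀/2) * t) by ring, ← Real.exp_add]
          congr 2
          ring
  · -- derivative for w
    refine ae_of_all _ fun t => ?_
    intro ω' hω'
    have h := ((((hasDerivAt_id ω').const_add ((N:ℂ))).const_mul (-(t:ℂ))).cexp.const_mul
      (Complex.exp ((s-1)*(Real.log t:ℂ)))).div_const (1 - z * Complex.exp (-(t:ℂ)))
    simp only [id_eq] at h
    refine h.congr_deriv ?_
    ring
  exact ⟨hInt s z hzR, hz_part.2.differentiableAt, hs_part.2.differentiableAt,
    hw_part.2.differentiableAt⟩
end

section
/- Let α ∈ ℝ with α ≥ 1 and let m, N be non-negative integers. Define I(z,s,w) = ∫_0^α ( t·e^{−t(N+w)}/(1 − z·e^{−t}) − ∑_{r=0}^m 𝓑_r(z, N+w)·(−1)^r t^r/r! ) · t^{s−2} dt, where t^{s−2} = exp((s−2)·ln t) for t > 0. Then the integral converges absolutely and I is holomorphic in each of the variables z, s, w separately on the domain {z ∈ ℂ : z ∉ [1, e^α]} × {s ∈ ℂ : Re(s) > −m} × {w ∈ ℂ : Re(w) > −N}. -/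
open Complex MeasureTheory Metric

/-- The closed real interval `[1, e^α]` viewed inside `ℂ`. -/
def segOneExp (α : ℝ) : Set ℂ :=
  {z : ℂ | ∃ x : ℝ, 1 ≤ x ∧ x ≤ Real.exp α ∧ (x : ℂ) = z}

noncomputable def Hf (z c u : ℂ) : ℂ := u * Complex.exp (u * c) / (z * Complex.exp u - 1)
noncomputable def Hz (z c u : ℂ) : ℂ :=
  -(u * Complex.exp (u * c) * Complex.exp u / (z * Complex.exp u - 1) ^ 2)
noncomputable def Hcc (z c u : ℂ) : ℂ := u ^ 2 * Complex.exp (u * c) / (z * Complex.exp u - 1)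

noncomputable def Rm (m : ℕ) (h : ℂ → ℂ) (u : ℂ) : ℂ :=
  h u - ∑ r ∈ Finset.range (m+1), (r.factorial : ℂ)⁻¹ • (u ^ r • iteratedDeriv r h 0)

noncomputable def Ef (s' : ℂ) (t : ℝ) : ℂ := Complex.exp ((s' - 2) * (Real.log t : ℂ))

lemma apostolB_eq (r : ℕ) (z c : ℂ) : apostolB r z c = iteratedDeriv r (Hf z c) 0 := rfl

lemma hasDerivAt_Hf_z {z c u : ℂ} (h : z * Complex.exp u - 1 ≠ 0) :
    HasDerivAt (fun z' => Hf z' c u) (Hz z c u) z := by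
  have h1 : HasDerivAt (fun z' : ℂ => z' * Complex.exp u - 1) (Complex.exp u) z := by
    simpa using ((hasDerivAt_id z).mul_const (Complex.exp u)).sub_const 1
  have := (hasDerivAt_const z (u * Complex.exp (u * c))).div h1 h
  refine this.congr_deriv ?_
  unfold Hz; ring

lemma hasDerivAt_Hf_c (z c u : ℂ) :
    HasDerivAt (fun c' => Hf z c' u) (Hcc z c u) c := by
  have h1 : HasDerivAt (fun c' : ℂ => u * Complex.exp (u * c')) (u * (Complex.exp (u * c) * u)) c := by
    simpa using (((hasDerivAt_id c).const_mul u).cexp).const_mul u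
  have := h1.div_const (z * Complex.exp u - 1)
  refine this.congr_deriv ?_
  unfold Hcc; ring

lemma diffOn_Hf {z c : ℂ} {S : Set ℂ} (h : ∀ u ∈ S, z * Complex.exp u - 1 ≠ 0) :
    DifferentiableOn ℂ (Hf z c) S := by
  apply DifferentiableOn.div
  · exact (differentiable_id.mul ((differentiable_id.mul_const c).cexp)).differentiableOn
  · exact ((differentiable_const z |>.mul differentiable_exp).sub_const 1).differentiableOn
  · exact h

lemma diffOn_Hz {z c : ℂ} {S : Set ℂ} (h : ∀ u ∈ S, z * Complex.exp u - 1 ≠ 0) :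
    DifferentiableOn ℂ (Hz z c) S := by
  apply DifferentiableOn.neg
  apply DifferentiableOn.div
  · exact ((differentiable_id.mul ((differentiable_id.mul_const c).cexp)).mul
      differentiable_exp).differentiableOn
  · exact (((differentiable_const z |>.mul differentiable_exp).sub_const 1).pow 2).differentiableOn
  · exact fun u hu => pow_ne_zero 2 (h u hu)

lemma diffOn_Hcc {z c : ℂ} {S : Set ℂ} (h : ∀ u ∈ S, z * Complex.exp u - 1 ≠ 0) :
    DifferentiableOn ℂ (Hcc z c) S := by
  apply DifferentiableOn.div
  · exact ((differentiable_id.pow 2).mul ((differentiable_id.mul_const c).cexp)).differentiableOn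
  · exact ((differentiable_const z |>.mul differentiable_exp).sub_const 1).differentiableOn
  · exact h

lemma coeff_bound {ρ : ℝ} (hρ : 0 < ρ) {g : ℂ → ℂ}
    (hd : DifferentiableOn ℂ g (closedBall 0 ρ)) {M : ℝ}
    (hM : ∀ ζ ∈ sphere (0:ℂ) ρ, ‖g ζ‖ ≤ M) (n : ℕ) :
    ‖iteratedDeriv n g 0‖ ≤ (n.factorial : ℝ) * M / ρ ^ n := by
  lift ρ to NNReal using hρ.le with R hR
  have hR0 : (0 : NNReal) < R := by exact_mod_cast hρ
  have hp : HasFPowerSeriesOnBall g (cauchyPowerSeries g 0 R) 0 R :=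
    hd.hasFPowerSeriesOnBall hR0
  have key : (n.factorial) • (cauchyPowerSeries g 0 R n fun _ => (1:ℂ)) =
      iteratedFDeriv ℂ n g 0 fun _ => (1:ℂ) := hp.factorial_smul (y := 1) n
  have h1 : iteratedDeriv n g 0 = (n.factorial) • (cauchyPowerSeries g 0 R n fun _ => (1:ℂ)) := by
    rw [key, iteratedDeriv_eq_iteratedFDeriv]
  rw [h1]
  have h2 : ‖cauchyPowerSeries g 0 R n fun _ => (1:ℂ)‖ ≤ ‖cauchyPowerSeries g 0 R n‖ := by
    simpa using (cauchyPowerSeries g 0 R n).le_opNorm fun _ => (1:ℂ)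
  have h3 : ‖cauchyPowerSeries g 0 R n‖ ≤
      ((2 * Real.pi)⁻¹ * ∫ θ : ℝ in (0)..2 * Real.pi, ‖g (circleMap 0 R θ)‖) * |(R:ℝ)|⁻¹ ^ n :=
    norm_cauchyPowerSeries_le g 0 R n
  have hcont : Continuous fun θ : ℝ => ‖g (circleMap 0 R θ)‖ := by
    apply Continuous.norm
    apply hd.continuousOn.comp_continuous (continuous_circleMap 0 R)
    exact fun θ => sphere_subset_closedBall (circleMap_mem_sphere 0 (by exact_mod_cast hρ.le) θ)
  have h4 : (∫ θ : ℝ in (0)..2 * Real.pi, ‖g (circleMap 0 R θ)‖) ≤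
      ∫ _ : ℝ in (0)..2 * Real.pi, M := by
    apply intervalIntegral.integral_mono_on Real.two_pi_pos.le
      (hcont.intervalIntegrable _ _) (intervalIntegrable_const)
    intro θ _
    exact hM _ (circleMap_mem_sphere 0 (by exact_mod_cast hρ.le) θ)
  have hM0 : 0 ≤ M := le_trans (norm_nonneg _) (hM ((R:ℝ) : ℂ) (by
    simp [_root_.abs_of_nonneg (R.coe_nonneg)]))
  have h5 : (∫ _ : ℝ in (0)..2 * Real.pi, M) = 2 * Real.pi * M := by
    simp [mul_comm]
  rw [h5] at h4
  have h6 : ‖(n.factorial) • (cauchyPowerSeries g 0 R n fun _ => (1:ℂ))‖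
      = (n.factorial : ℝ) * ‖cauchyPowerSeries g 0 R n fun _ => (1:ℂ)‖ := by
    rw [nsmul_eq_mul, norm_mul]
    simp
  rw [h6]
  have hint_nonneg : (0:ℝ) ≤ (2 * Real.pi)⁻¹ := by positivity
  calc (n.factorial : ℝ) * ‖cauchyPowerSeries g 0 R n fun _ => (1:ℂ)‖
      ≤ (n.factorial : ℝ) * (((2 * Real.pi)⁻¹ * (2 * Real.pi * M)) * |(R:ℝ)|⁻¹ ^ n) := by
        apply mul_le_mul_of_nonneg_left _ (by positivity)
        refine le_trans (h2.trans h3) ?_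
        apply mul_le_mul_of_nonneg_right _ (by positivity)
        exact mul_le_mul_of_nonneg_left h4 hint_nonneg
    _ = (n.factorial : ℝ) * M / (R:ℝ) ^ n := by
        rw [_root_.abs_of_nonneg (R.coe_nonneg)]
        have hRne : ((R:ℝ)) ^ n ≠ 0 := pow_ne_zero _ (by exact_mod_cast hρ.ne')
        have hpi : (2 * Real.pi) ≠ 0 := by positivity
        field_simp
        rw [one_div, inv_pow, mul_assoc, inv_mul_cancel₀ hRne, mul_one]

lemma tail_bound {ρ : ℝ} (hρ : 0 < ρ) {g : ℂ → ℂ}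
    (hd : DifferentiableOn ℂ g (closedBall 0 ρ)) {M : ℝ}
    (hM : ∀ ζ ∈ sphere (0:ℂ) ρ, ‖g ζ‖ ≤ M) (m : ℕ) {u : ℂ} (hu : ‖u‖ ≤ ρ/2) :
    ‖g u - ∑ r ∈ Finset.range (m+1), (r.factorial : ℂ)⁻¹ • (u ^ r • iteratedDeriv r g 0)‖ ≤
      2 * M * (‖u‖/ρ)^(m+1) := by
  set q : ℝ := ‖u‖/ρ with hqdef
  have hq : 0 ≤ q := by positivity
  have hq2 : q ≤ 1/2 := by
    rw [hqdef, div_le_div_iff₀ hρ (by norm_num)]; linarith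
  have hM0 : 0 ≤ M := le_trans (norm_nonneg _) (hM ((ρ:ℝ) : ℂ) (by
    simp [_root_.abs_of_nonneg hρ.le]))
  set f : ℕ → ℂ := fun n => (n.factorial : ℂ)⁻¹ • (u ^ n • iteratedDeriv n g 0) with hfdef
  have hball : u ∈ ball (0:ℂ) ρ := by
    rw [mem_ball_zero_iff]; linarith
  have hsum : HasSum f (g u) := by
    have := Complex.hasSum_taylorSeries_on_ball (hd.mono ball_subset_closedBall) hball
    simpa [hfdef] using this
  have htail : HasSum (fun n => f (n + (m+1))) (g u - ∑ r ∈ Finset.range (m+1), f r) := by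
    refine (hasSum_nat_add_iff (m+1)).2 ?_
    simpa using hsum
  have hb : ∀ n, ‖f (n + (m+1))‖ ≤ (M * q^(m+1)) * (1/2)^n := by
    intro n
    set K := n + (m+1) with hK
    have hcb := coeff_bound hρ hd hM K
    have e0 : ‖f K‖ = ‖u‖^K / (K.factorial:ℝ) * ‖iteratedDeriv K g 0‖ := by
      simp [hfdef, norm_smul, norm_pow, div_eq_inv_mul]
      ring
    have step : ‖u‖^K / (K.factorial:ℝ) * ‖iteratedDeriv K g 0‖ ≤
        ‖u‖^K / (K.factorial:ℝ) * ((K.factorial:ℝ) * M / ρ^K) :=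
      mul_le_mul_of_nonneg_left hcb (by positivity)
    have e1 : ‖u‖^K / (K.factorial:ℝ) * ((K.factorial:ℝ) * M / ρ^K) = M * q^K := by
      have hf0 : ((K.factorial:ℝ)) ≠ 0 := by exact_mod_cast K.factorial_ne_zero
      rw [hqdef, div_pow]
      field_simp
    have e2 : q ^ K = q^(m+1) * q^n := by
      rw [hK, pow_add]; ring
    rw [e0]
    refine le_trans (step.trans_eq e1) ?_
    rw [e2]
    have : q ^ n ≤ (1/2:ℝ)^n := pow_le_pow_left₀ hq hq2 n
    calc M * (q^(m+1) * q^n) ≤ M * (q^(m+1) * (1/2)^n) := by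
          apply mul_le_mul_of_nonneg_left _ hM0
          exact mul_le_mul_of_nonneg_left this (by positivity)
      _ = M * q^(m+1) * (1/2)^n := by ring
  have hgeo : HasSum (fun n : ℕ => (M * q^(m+1)) * (1/2)^n) ((M * q^(m+1)) * 2) := by
    have h2 : HasSum (fun n : ℕ => (1/2:ℝ)^n) 2 := by
      have := hasSum_geometric_of_lt_one (by norm_num : (0:ℝ) ≤ 1/2) (by norm_num)
      norm_num at this
      exact this
    exact h2.mul_left _
  have hsf : Summable fun n => ‖f (n + (m+1))‖ :=
    Summable.of_nonneg_of_le (fun n => norm_nonneg _) hb hgeo.summable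
  rw [← htail.tsum_eq]
  calc ‖∑' n, f (n + (m+1))‖ ≤ ∑' n, ‖f (n + (m+1))‖ := norm_tsum_le_tsum_norm hsf
    _ ≤ ∑' n : ℕ, (M * q^(m+1)) * (1/2)^n := Summable.tsum_le_tsum hb hsf hgeo.summable
    _ = (M * q^(m+1)) * 2 := hgeo.tsum_eq
    _ = 2 * M * q^(m+1) := by ring

lemma iteratedDeriv_eq_circle {ρ : ℝ} (hρ : 0 < ρ) {h : ℂ → ℂ}
    (hd : DifferentiableOn ℂ h (closedBall 0 ρ)) (r : ℕ) :
    iteratedDeriv r h 0 = (r.factorial : ℂ) *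
      ((2 * (Real.pi : ℂ) * Complex.I)⁻¹ * ∮ ζ in C(0, ρ), ζ⁻¹ ^ r • ζ⁻¹ • h ζ) := by
  lift ρ to NNReal using hρ.le with R hR
  have hR0 : (0 : NNReal) < R := by exact_mod_cast hρ
  have hp : HasFPowerSeriesOnBall h (cauchyPowerSeries h 0 R) 0 R :=
    hd.hasFPowerSeriesOnBall hR0
  have key : (r.factorial) • (cauchyPowerSeries h 0 R r fun _ => (1:ℂ)) =
      iteratedFDeriv ℂ r h 0 fun _ => (1:ℂ) := hp.factorial_smul (y := 1) r
  rw [iteratedDeriv_eq_iteratedFDeriv, ← key, cauchyPowerSeries_apply]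
  simp only [sub_zero, one_div, smul_eq_mul, nsmul_eq_mul]

lemma hasDerivAt_param_iteratedDeriv {ρ ε : ℝ} (hρ : 0 < ρ) (hε : 0 < ε)
    {g g' : ℂ → ℂ → ℂ} {z₀ : ℂ} (r : ℕ)
    (hg : ∀ z ∈ ball z₀ ε, DifferentiableOn ℂ (g z) (closedBall 0 ρ))
    (hg' : DifferentiableOn ℂ (g' z₀) (closedBall 0 ρ))
    (hderiv : ∀ ζ ∈ sphere (0:ℂ) ρ, ∀ z ∈ ball z₀ ε, HasDerivAt (fun z => g z ζ) (g' z ζ) z)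
    {C : ℝ} (hbound : ∀ ζ ∈ sphere (0:ℂ) ρ, ∀ z ∈ ball z₀ ε, ‖g' z ζ‖ ≤ C) :
    HasDerivAt (fun z => iteratedDeriv r (g z) 0) (iteratedDeriv r (g' z₀) 0) z₀ := by
  set K : ℂ := (r.factorial : ℂ) * (2 * (Real.pi : ℂ) * Complex.I)⁻¹ with hK
  set F : ℂ → ℝ → ℂ := fun z θ => (circleMap 0 ρ θ * Complex.I) •
      ((circleMap 0 ρ θ)⁻¹ ^ r • ((circleMap 0 ρ θ)⁻¹ • g z (circleMap 0 ρ θ))) with hF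
  set F' : ℂ → ℝ → ℂ := fun z θ => (circleMap 0 ρ θ * Complex.I) •
      ((circleMap 0 ρ θ)⁻¹ ^ r • ((circleMap 0 ρ θ)⁻¹ • g' z (circleMap 0 ρ θ))) with hF'
  have hsphere : ∀ θ : ℝ, circleMap 0 ρ θ ∈ sphere (0:ℂ) ρ :=
    circleMap_mem_sphere 0 hρ.le
  have hcball : ∀ θ : ℝ, circleMap 0 ρ θ ∈ closedBall (0:ℂ) ρ :=
    fun θ => sphere_subset_closedBall (hsphere θ)
  have hcm_ne : ∀ θ : ℝ, circleMap 0 ρ θ ≠ 0 := fun θ => circleMap_ne_center hρ.ne'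
  have hcont_aux : ∀ h₁ : ℂ → ℂ, DifferentiableOn ℂ h₁ (closedBall 0 ρ) →
      Continuous fun θ : ℝ => (circleMap 0 ρ θ * Complex.I) •
        ((circleMap 0 ρ θ)⁻¹ ^ r • ((circleMap 0 ρ θ)⁻¹ • h₁ (circleMap 0 ρ θ))) := by
    intro h₁ hd₁
    have hc1 : Continuous fun θ : ℝ => h₁ (circleMap 0 ρ θ) :=
      hd₁.continuousOn.comp_continuous (continuous_circleMap 0 ρ) hcball
    have hinv : Continuous fun θ : ℝ => (circleMap 0 ρ θ)⁻¹ :=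
      ((continuous_circleMap 0 ρ).inv₀ hcm_ne)
    exact ((continuous_circleMap 0 ρ).mul continuous_const).smul
      ((hinv.pow r).smul (hinv.smul hc1))
  have hC0 : 0 ≤ C := le_trans (norm_nonneg _)
    (hbound _ (hsphere 0) z₀ (mem_ball_self hε))
  have key := intervalIntegral.hasDerivAt_integral_of_dominated_loc_of_deriv_le
      (F := F) (F' := F') (x₀ := z₀) (a := 0) (b := 2 * Real.pi) (μ := volume)
      (bound := fun _ => ρ * (ρ⁻¹ ^ r * (ρ⁻¹ * C))) (ball_mem_nhds z₀ hε)
      ?_ ?_ ?_ ?_ ?_ ?_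
  · have hcirc : ∀ h₁ : ℂ → ℂ, (∮ ζ in C(0, ρ), ζ⁻¹ ^ r • ζ⁻¹ • h₁ ζ) =
        ∫ θ in (0:ℝ)..(2 * Real.pi), (circleMap 0 ρ θ * Complex.I) •
          ((circleMap 0 ρ θ)⁻¹ ^ r • ((circleMap 0 ρ θ)⁻¹ • h₁ (circleMap 0 ρ θ))) := by
      intro h₁
      simp only [circleIntegral, deriv_circleMap, smul_smul]
    have hderiv2 : HasDerivAt (fun z => K * ∫ θ in (0:ℝ)..(2 * Real.pi), F z θ)
        (K * ∫ θ in (0:ℝ)..(2 * Real.pi), F' z₀ θ) z₀ := key.2.const_mul K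
    have heq : (fun z => iteratedDeriv r (g z) 0) =ᶠ[nhds z₀]
        (fun z => K * ∫ θ in (0:ℝ)..(2 * Real.pi), F z θ) := by
      filter_upwards [ball_mem_nhds z₀ hε] with z hz
      rw [iteratedDeriv_eq_circle hρ (hg z hz) r, hcirc, hK]
      ring
    have hval : iteratedDeriv r (g' z₀) 0 = K * ∫ θ in (0:ℝ)..(2 * Real.pi), F' z₀ θ := by
      rw [iteratedDeriv_eq_circle hρ hg' r, hcirc, hK]
      ring
    rw [hval]
    exact hderiv2.congr_of_eventuallyEq heq
  · filter_upwards [ball_mem_nhds z₀ hε] with z hz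
    exact (hcont_aux (g z) (hg z hz)).aestronglyMeasurable
  · exact (hcont_aux (g z₀) (hg z₀ (mem_ball_self hε))).intervalIntegrable _ _
  · exact (hcont_aux (g' z₀) hg').aestronglyMeasurable
  · refine Filter.Eventually.of_forall fun θ _ => fun z hz => ?_
    rw [hF']
    simp only [norm_smul, norm_mul, Complex.norm_I, mul_one, norm_pow, norm_inv]
    have h1 : ‖circleMap 0 ρ θ‖ = ρ := by
      simp [_root_.abs_of_nonneg hρ.le]
    rw [h1]
    have := hbound _ (hsphere θ) z hz
    gcongr
  · exact intervalIntegrable_const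
  · refine Filter.Eventually.of_forall fun θ _ => fun z hz => ?_
    exact (((hderiv _ (hsphere θ) z hz).const_smul ((circleMap 0 ρ θ)⁻¹)).const_smul ((circleMap 0 ρ θ)⁻¹ ^ r)).const_smul (circleMap 0 ρ θ * Complex.I)

lemma bound_integrable_aux {α : ℝ} (hα : 0 < α) {a C1 C2 : ℝ} (ha : (-1:ℝ) < a) :
    Integrable (fun t : ℝ => C1 * t ^ a + C2) (volume.restrict (Set.Ioc 0 α)) := by
  apply Integrable.add
  · have h1 : IntervalIntegrable (fun t : ℝ => t ^ a) volume 0 α :=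
      intervalIntegral.intervalIntegrable_rpow' ha
    have h2 : IntegrableOn (fun t : ℝ => t ^ a) (Set.Ioc 0 α) volume := by
      rw [← intervalIntegrable_iff_integrableOn_Ioc_of_le hα.le]
      exact h1
    exact h2.const_mul C1
  · exact integrableOn_const measure_Ioc_lt_top.ne

lemma core {α ρ : ℝ} (hα : 1 ≤ α) (hρ : 0 < ρ) (hρ1 : ρ ≤ 1) (m : ℕ)
    {h : ℂ → ℂ} (hd : DifferentiableOn ℂ h (closedBall 0 ρ))
    (hhcont : ContinuousOn (fun t : ℝ => h (-(t:ℂ))) (Set.Icc 0 α))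
    {M M' : ℝ} (hM : ∀ ζ ∈ sphere (0:ℂ) ρ, ‖h ζ‖ ≤ M)
    (hM' : ∀ t ∈ Set.Icc (ρ/2) α, ‖h (-(t:ℂ))‖ ≤ M')
    {e : ℝ → ℂ} (hecont : ContinuousOn e (Set.Ioc 0 α))
    {a Ca Ce : ℝ} (hCa : 0 ≤ Ca) (ha : (-1:ℝ) < ((m:ℝ)+1) + a)
    (hea : ∀ t : ℝ, t ∈ Set.Ioc 0 (ρ/2) → ‖e t‖ ≤ Ca * t ^ a)
    (hee : ∀ t : ℝ, t ∈ Set.Icc (ρ/2) α → ‖e t‖ ≤ Ce) :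
    IntegrableOn (fun t : ℝ => Rm m h (-(t:ℂ)) * e t) (Set.Ioc 0 α) volume ∧
    ∀ t : ℝ, t ∈ Set.Ioc 0 α → ‖Rm m h (-(t:ℂ)) * e t‖ ≤
      (2*M*Ca/ρ^(m+1)) * t ^ (((m:ℝ)+1) + a) +
        (M' + M * (∑ r ∈ Finset.range (m+1), (α/ρ)^r)) * Ce := by
  have hρ2 : 0 < ρ/2 := by positivity
  have hρ2α : ρ/2 ≤ α := by linarith
  have hM0 : 0 ≤ M := le_trans (norm_nonneg _) (hM ((ρ:ℝ):ℂ)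
    (by simp [_root_.abs_of_nonneg hρ.le]))
  have hM'0 : 0 ≤ M' := le_trans (norm_nonneg _) (hM' (ρ/2) ⟨le_refl _, hρ2α⟩)
  have hCe0 : 0 ≤ Ce := le_trans (norm_nonneg _) (hee (ρ/2) ⟨le_refl _, hρ2α⟩)
  have hS0 : 0 ≤ ∑ r ∈ Finset.range (m+1), (α/ρ)^r :=
    Finset.sum_nonneg fun r _ => pow_nonneg (by positivity) r
  have hbnd : ∀ t : ℝ, t ∈ Set.Ioc 0 α → ‖Rm m h (-(t:ℂ)) * e t‖ ≤
      (2*M*Ca/ρ^(m+1)) * t ^ (((m:ℝ)+1) + a) +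
        (M' + M * (∑ r ∈ Finset.range (m+1), (α/ρ)^r)) * Ce := by
    rintro t ⟨ht0, htα⟩
    have hnu : ‖(-(t:ℂ))‖ = t := by
      rw [norm_neg, Complex.norm_real, Real.norm_eq_abs, _root_.abs_of_pos ht0]
    rw [norm_mul]
    rcases le_or_gt t (ρ/2) with hle | hlt
    · have h1 : ‖Rm m h (-(t:ℂ))‖ ≤ 2 * M * (t/ρ)^(m+1) := by
        have := tail_bound hρ hd hM m (u := -(t:ℂ)) (by rw [hnu]; exact hle)
        rw [hnu] at this
        exact this
      have h2 : ‖e t‖ ≤ Ca * t ^ a := hea t ⟨ht0, hle⟩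
      have hmain : ‖Rm m h (-(t:ℂ))‖ * ‖e t‖ ≤
          (2*M*Ca/ρ^(m+1)) * t ^ (((m:ℝ)+1) + a) := by
        have hstep : ‖Rm m h (-(t:ℂ))‖ * ‖e t‖ ≤ (2 * M * (t/ρ)^(m+1)) * (Ca * t ^ a) :=
          mul_le_mul h1 h2 (norm_nonneg _) (by positivity)
        refine hstep.trans_eq ?_
        rw [Real.rpow_add ht0 ((m:ℝ)+1) a,
          show t ^ (((m:ℝ))+1) = t ^ (m+1) by
            rw [← Real.rpow_natCast t (m+1)]; norm_num,
          div_pow]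
        field_simp
      refine le_trans (hmain.trans_eq rfl) ?_
      have : 0 ≤ (M' + M * (∑ r ∈ Finset.range (m+1), (α/ρ)^r)) * Ce := by positivity
      linarith
    · have h1 : ‖Rm m h (-(t:ℂ))‖ ≤ M' + M * (∑ r ∈ Finset.range (m+1), (α/ρ)^r) := by
        rw [Rm]
        refine le_trans (norm_sub_le _ _) ?_
        have hh : ‖h (-(t:ℂ))‖ ≤ M' := hM' t ⟨hlt.le, htα⟩
        have hsum : ‖∑ r ∈ Finset.range (m+1), (r.factorial : ℂ)⁻¹ •
            ((-(t:ℂ)) ^ r • iteratedDeriv r h 0)‖ ≤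
            M * (∑ r ∈ Finset.range (m+1), (α/ρ)^r) := by
          refine le_trans (norm_sum_le _ _) ?_
          rw [Finset.mul_sum]
          apply Finset.sum_le_sum
          intro r _
          have hcb := coeff_bound hρ hd hM r
          have e1 : ‖(r.factorial : ℂ)⁻¹ • ((-(t:ℂ)) ^ r • iteratedDeriv r h 0)‖ =
              t ^ r / (r.factorial : ℝ) * ‖iteratedDeriv r h 0‖ := by
            rw [norm_smul, norm_smul, norm_pow, hnu, norm_inv]
            simp [div_eq_inv_mul, mul_assoc]
          rw [e1]
          have hfac : (0:ℝ) < (r.factorial : ℝ) := by exact_mod_cast r.factorial_pos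
          calc t ^ r / (r.factorial : ℝ) * ‖iteratedDeriv r h 0‖
              ≤ t ^ r / (r.factorial : ℝ) * ((r.factorial : ℝ) * M / ρ ^ r) :=
                mul_le_mul_of_nonneg_left hcb (by positivity)
            _ = M * (t/ρ)^r := by rw [div_pow]; field_simp
            _ ≤ M * (α/ρ)^r := by gcongr
        linarith
      have h2 : ‖e t‖ ≤ Ce := hee t ⟨hlt.le, htα⟩
      have hmain : ‖Rm m h (-(t:ℂ))‖ * ‖e t‖ ≤
          (M' + M * (∑ r ∈ Finset.range (m+1), (α/ρ)^r)) * Ce :=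
        mul_le_mul h1 h2 (norm_nonneg _) (by positivity)
      have hpos : 0 ≤ (2*M*Ca/ρ^(m+1)) * t ^ (((m:ℝ)+1) + a) := by
        apply mul_nonneg (by positivity)
        exact Real.rpow_nonneg ht0.le _
      linarith
  refine ⟨?_, hbnd⟩
  have hcontG : ContinuousOn (fun t : ℝ => Rm m h (-(t:ℂ)) * e t) (Set.Ioc 0 α) := by
    apply ContinuousOn.mul _ hecont
    apply ContinuousOn.sub
    · exact hhcont.mono Set.Ioc_subset_Icc_self
    · apply Continuous.continuousOn
      apply continuous_finset_sum
      intro r _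
      exact (by fun_prop)
  have hmeas : AEStronglyMeasurable (fun t : ℝ => Rm m h (-(t:ℂ)) * e t)
      (volume.restrict (Set.Ioc 0 α)) :=
    hcontG.aestronglyMeasurable measurableSet_Ioc
  have hα0 : (0:ℝ) < α := lt_of_lt_of_le one_pos hα
  refine Integrable.mono' (bound_integrable_aux hα0
    (C1 := 2*M*Ca/ρ^(m+1))
    (C2 := (M' + M * (∑ r ∈ Finset.range (m+1), (α/ρ)^r)) * Ce) ha) hmeas ?_
  rw [ae_restrict_iff' measurableSet_Ioc]
  exact Filter.Eventually.of_forall hbnd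

lemma contOn_Hf_unc {S : Set (ℂ × ℂ × ℂ)} (hden : ∀ p ∈ S, p.1 * Complex.exp p.2.2 - 1 ≠ 0) :
    ContinuousOn (fun p : ℂ × ℂ × ℂ => Hf p.1 p.2.1 p.2.2) S := by
  have h1 : Continuous fun p : ℂ × ℂ × ℂ => p.1 := continuous_fst
  have h21 : Continuous fun p : ℂ × ℂ × ℂ => p.2.1 := continuous_fst.comp continuous_snd
  have h22 : Continuous fun p : ℂ × ℂ × ℂ => p.2.2 := continuous_snd.comp continuous_snd
  exact ContinuousOn.div
    ((h22.mul ((h22.mul h21).cexp)).continuousOn)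
    (((h1.mul (h22.cexp)).sub continuous_const).continuousOn) hden

lemma contOn_Hz_unc {S : Set (ℂ × ℂ × ℂ)} (hden : ∀ p ∈ S, p.1 * Complex.exp p.2.2 - 1 ≠ 0) :
    ContinuousOn (fun p : ℂ × ℂ × ℂ => Hz p.1 p.2.1 p.2.2) S := by
  have h1 : Continuous fun p : ℂ × ℂ × ℂ => p.1 := continuous_fst
  have h21 : Continuous fun p : ℂ × ℂ × ℂ => p.2.1 := continuous_fst.comp continuous_snd
  have h22 : Continuous fun p : ℂ × ℂ × ℂ => p.2.2 := continuous_snd.comp continuous_snd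
  exact (ContinuousOn.div
    (((h22.mul ((h22.mul h21).cexp)).mul (h22.cexp)).continuousOn)
    ((((h1.mul (h22.cexp)).sub continuous_const).pow 2).continuousOn)
    (fun p hp => pow_ne_zero 2 (hden p hp))).neg

lemma contOn_Hcc_unc {S : Set (ℂ × ℂ × ℂ)} (hden : ∀ p ∈ S, p.1 * Complex.exp p.2.2 - 1 ≠ 0) :
    ContinuousOn (fun p : ℂ × ℂ × ℂ => Hcc p.1 p.2.1 p.2.2) S := by
  have h1 : Continuous fun p : ℂ × ℂ × ℂ => p.1 := continuous_fst
  have h21 : Continuous fun p : ℂ × ℂ × ℂ => p.2.1 := continuous_fst.comp continuous_snd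
  have h22 : Continuous fun p : ℂ × ℂ × ℂ => p.2.2 := continuous_snd.comp continuous_snd
  exact ContinuousOn.div
    (((h22.pow 2).mul ((h22.mul h21).cexp)).continuousOn)
    (((h1.mul (h22.cexp)).sub continuous_const).continuousOn) hden

theorem I_integral_holomorphic (α : ℝ) (hα : 1 ≤ α) (m N : ℕ) :
    ∀ z s w : ℂ, z ∉ segOneExp α → -(m : ℝ) < s.re → -(N : ℝ) < w.re →
      IntegrableOn (fun t : ℝ =>
          ((t : ℂ) * Complex.exp (-(t : ℂ) * ((N : ℂ) + w)) /
              (1 - z * Complex.exp (-(t : ℂ))) -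
            ∑ r ∈ Finset.range (m + 1),
              apostolB r z ((N : ℂ) + w) * (-1 : ℂ) ^ r * (t : ℂ) ^ r / (r.factorial : ℂ)) *
          Complex.exp ((s - 2) * (Real.log t : ℂ))) (Set.Ioc 0 α) ∧
      DifferentiableAt ℂ (fun z' => ∫ t in Set.Ioc (0 : ℝ) α,
          ((t : ℂ) * Complex.exp (-(t : ℂ) * ((N : ℂ) + w)) /
              (1 - z' * Complex.exp (-(t : ℂ))) -
            ∑ r ∈ Finset.range (m + 1),
              apostolB r z' ((N : ℂ) + w) * (-1 : ℂ) ^ r * (t : ℂ) ^ r / (r.factorial : ℂ)) *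
          Complex.exp ((s - 2) * (Real.log t : ℂ))) z ∧
      DifferentiableAt ℂ (fun s' => ∫ t in Set.Ioc (0 : ℝ) α,
          ((t : ℂ) * Complex.exp (-(t : ℂ) * ((N : ℂ) + w)) /
              (1 - z * Complex.exp (-(t : ℂ))) -
            ∑ r ∈ Finset.range (m + 1),
              apostolB r z ((N : ℂ) + w) * (-1 : ℂ) ^ r * (t : ℂ) ^ r / (r.factorial : ℂ)) *
          Complex.exp ((s' - 2) * (Real.log t : ℂ))) s ∧
      DifferentiableAt ℂ (fun w' => ∫ t in Set.Ioc (0 : ℝ) α,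
          ((t : ℂ) * Complex.exp (-(t : ℂ) * ((N : ℂ) + w')) /
              (1 - z * Complex.exp (-(t : ℂ))) -
            ∑ r ∈ Finset.range (m + 1),
              apostolB r z ((N : ℂ) + w') * (-1 : ℂ) ^ r * (t : ℂ) ^ r / (r.factorial : ℂ)) *
          Complex.exp ((s - 2) * (Real.log t : ℂ))) w := by
  intro z s w hz hs hw
  set c : ℂ := (N:ℂ) + w with hc
  -- geometry
  have hsegc : IsCompact (segOneExp α) := by
    have himg : segOneExp α = (fun x : ℝ => (x:ℂ)) '' Set.Icc 1 (Real.exp α) := by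
      ext ζ
      simp only [segOneExp, Set.mem_setOf_eq, Set.mem_image, Set.mem_Icc]
      constructor
      · rintro ⟨x, h1, h2, h3⟩; exact ⟨x, ⟨h1, h2⟩, h3⟩
      · rintro ⟨x, ⟨h1, h2⟩, h3⟩; exact ⟨x, h1, h2, h3⟩
    rw [himg]; exact isCompact_Icc.image Complex.continuous_ofReal
  have hne : (segOneExp α).Nonempty :=
    ⟨1, 1, le_refl 1, Real.one_le_exp (by linarith), by norm_num⟩
  set d : ℝ := Metric.infDist z (segOneExp α) with hdd
  have hd : 0 < d := (hsegc.isClosed.notMem_iff_infDist_pos hne).1 hz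
  have hdist : ∀ x ∈ segOneExp α, d ≤ dist z x := fun x hx => Metric.infDist_le_dist_of_mem hx
  set ρ : ℝ := min 1 (d/8) with hρdef
  have hρ : 0 < ρ := lt_min one_pos (by linarith)
  have hρ1 : ρ ≤ 1 := min_le_left _ _
  have hρd : ρ ≤ d/8 := min_le_right _ _
  have hρ2 : 0 < ρ/2 := by linarith
  have hα0 : (0:ℝ) < α := lt_of_lt_of_le one_pos hα
  have hρ2α : ρ/2 ≤ α := by linarith
  have hmem1 : (1:ℂ) ∈ segOneExp α := ⟨1, le_refl 1, Real.one_le_exp (by linarith), by norm_num⟩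
  have hmemexp : ∀ t : ℝ, t ∈ Set.Icc 0 α → ((Real.exp t : ℝ) : ℂ) ∈ segOneExp α := by
    rintro t ⟨h0, h1⟩
    exact ⟨Real.exp t, Real.one_le_exp h0, Real.exp_le_exp.2 h1, rfl⟩
  -- nonvanishing of denominators
  have N1 : ∀ z' ∈ closedBall z (d/4), ∀ ζ ∈ closedBall (0:ℂ) ρ, z' * Complex.exp ζ - 1 ≠ 0 := by
    intro z' hz' ζ hζ h0
    have h0' : z' * Complex.exp ζ = 1 := by rwa [sub_eq_zero] at h0
    have hzne := Complex.exp_ne_zero ζ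
    have hz'e : z' = Complex.exp (-ζ) := by
      have h1 : z' = (Complex.exp ζ)⁻¹ := by
        field_simp
        linear_combination h0'
      rw [h1, ← Complex.exp_neg]
    have hb : ‖ζ‖ ≤ 1 := le_trans (mem_closedBall_zero_iff.1 hζ) hρ1
    have hbρ : ‖ζ‖ ≤ ρ := mem_closedBall_zero_iff.1 hζ
    have hexp1 : ‖z' - 1‖ ≤ 2 * ρ := by
      rw [hz'e]
      have h2 := Complex.norm_exp_sub_one_le (x := -ζ)
        (by rw [norm_neg]; exact hb)
      rw [norm_neg] at h2
      calc ‖Complex.exp (-ζ) - 1‖ ≤ 2 * ‖ζ‖ := h2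
        _ ≤ 2 * ρ := by
            have : ‖ζ‖ ≤ ρ := hbρ
            linarith
    have h1d : d ≤ dist z 1 := hdist 1 hmem1
    have htri : dist z (1:ℂ) ≤ dist z z' + dist z' 1 := dist_triangle _ _ _
    have h2 : dist z z' ≤ d/4 := by rw [dist_comm]; exact mem_closedBall.1 hz'
    have h3 : dist z' 1 ≤ 2*ρ := by rw [dist_eq_norm]; exact hexp1
    linarith
  have N2 : ∀ z' ∈ closedBall z (d/4), ∀ t : ℝ, t ∈ Set.Icc 0 α →
      z' * Complex.exp (-(t:ℂ)) - 1 ≠ 0 := by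
    intro z' hz' t ht h0
    have h0' : z' * Complex.exp (-(t:ℂ)) = 1 := by rwa [sub_eq_zero] at h0
    have hzne := Complex.exp_ne_zero (-(t:ℂ))
    have hz'e : z' = ((Real.exp t : ℝ):ℂ) := by
      have h1 : z' = (Complex.exp (-(t:ℂ)))⁻¹ := by
        field_simp
        linear_combination h0'
      rw [h1, ← Complex.exp_neg, neg_neg, Complex.ofReal_exp]
    have hmem : ((Real.exp t : ℝ):ℂ) ∈ segOneExp α := hmemexp t ht
    have h1d : d ≤ dist z z' := by rw [hz'e]; exact hdist _ hmem
    have h2 : dist z z' ≤ d/4 := by rw [dist_comm]; exact mem_closedBall.1 hz'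
    linarith
  have hzself : z ∈ closedBall z (d/4) := mem_closedBall_self (by linarith)
  have hcself : c ∈ closedBall c 1 := mem_closedBall_self one_pos.le
  -- compact bounds
  set SB : Set (ℂ × ℂ × ℂ) :=
    (closedBall z (d/4)) ×ˢ ((closedBall c 1) ×ˢ (sphere (0:ℂ) ρ)) with hSB
  have hSBcomp : IsCompact SB :=
    (isCompact_closedBall _ _).prod ((isCompact_closedBall _ _).prod (isCompact_sphere _ _))
  set J : Set ℂ := (fun t : ℝ => -(t:ℂ)) '' Set.Icc 0 α with hJ
  have hJcomp : IsCompact J := isCompact_Icc.image (Complex.continuous_ofReal.neg)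
  set SR : Set (ℂ × ℂ × ℂ) := (closedBall z (d/4)) ×ˢ ((closedBall c 1) ×ˢ J) with hSR
  have hSRcomp : IsCompact SR :=
    (isCompact_closedBall _ _).prod ((isCompact_closedBall _ _).prod hJcomp)
  have hSBden : ∀ p ∈ SB, p.1 * Complex.exp p.2.2 - 1 ≠ 0 := by
    rintro ⟨z', c', ζ⟩ ⟨h1, _, h3⟩
    exact N1 z' h1 ζ (sphere_subset_closedBall h3)
  have hSRden : ∀ p ∈ SR, p.1 * Complex.exp p.2.2 - 1 ≠ 0 := by
    rintro ⟨z', c', u⟩ ⟨h1, _, t, ht, rfl⟩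
    exact N2 z' h1 t ht
  obtain ⟨M₁, hM₁⟩ := hSBcomp.exists_bound_of_continuousOn (contOn_Hf_unc hSBden)
  obtain ⟨M₂, hM₂⟩ := hSBcomp.exists_bound_of_continuousOn (contOn_Hz_unc hSBden)
  obtain ⟨M₃, hM₃⟩ := hSBcomp.exists_bound_of_continuousOn (contOn_Hcc_unc hSBden)
  obtain ⟨M₁', hM₁'⟩ := hSRcomp.exists_bound_of_continuousOn (contOn_Hf_unc hSRden)
  obtain ⟨M₂', hM₂'⟩ := hSRcomp.exists_bound_of_continuousOn (contOn_Hz_unc hSRden)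
  obtain ⟨M₃', hM₃'⟩ := hSRcomp.exists_bound_of_continuousOn (contOn_Hcc_unc hSRden)
  have hM₁u : ∀ z' ∈ closedBall z (d/4), ∀ c' ∈ closedBall c 1, ∀ ζ ∈ sphere (0:ℂ) ρ,
      ‖Hf z' c' ζ‖ ≤ M₁ := fun z' h1 c' h2 ζ h3 => hM₁ (z', c', ζ) ⟨h1, h2, h3⟩
  have hM₂u : ∀ z' ∈ closedBall z (d/4), ∀ c' ∈ closedBall c 1, ∀ ζ ∈ sphere (0:ℂ) ρ,
      ‖Hz z' c' ζ‖ ≤ M₂ := fun z' h1 c' h2 ζ h3 => hM₂ (z', c', ζ) ⟨h1, h2, h3⟩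
  have hM₃u : ∀ z' ∈ closedBall z (d/4), ∀ c' ∈ closedBall c 1, ∀ ζ ∈ sphere (0:ℂ) ρ,
      ‖Hcc z' c' ζ‖ ≤ M₃ := fun z' h1 c' h2 ζ h3 => hM₃ (z', c', ζ) ⟨h1, h2, h3⟩
  have hM₁'u : ∀ z' ∈ closedBall z (d/4), ∀ c' ∈ closedBall c 1, ∀ t : ℝ, t ∈ Set.Icc 0 α →
      ‖Hf z' c' (-(t:ℂ))‖ ≤ M₁' :=
    fun z' h1 c' h2 t ht => hM₁' (z', c', -(t:ℂ)) ⟨h1, h2, t, ht, rfl⟩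
  have hM₂'u : ∀ z' ∈ closedBall z (d/4), ∀ c' ∈ closedBall c 1, ∀ t : ℝ, t ∈ Set.Icc 0 α →
      ‖Hz z' c' (-(t:ℂ))‖ ≤ M₂' :=
    fun z' h1 c' h2 t ht => hM₂' (z', c', -(t:ℂ)) ⟨h1, h2, t, ht, rfl⟩
  have hM₃'u : ∀ z' ∈ closedBall z (d/4), ∀ c' ∈ closedBall c 1, ∀ t : ℝ, t ∈ Set.Icc 0 α →
      ‖Hcc z' c' (-(t:ℂ))‖ ≤ M₃' :=
    fun z' h1 c' h2 t ht => hM₃' (z', c', -(t:ℂ)) ⟨h1, h2, t, ht, rfl⟩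
  -- log/E bounds
  set L : ℝ := max (-Real.log (ρ/2)) (Real.log α) with hL
  have hL0 : 0 ≤ L := by
    have : Real.log (ρ/2) ≤ 0 := Real.log_nonpos (by linarith) (by linarith)
    have h2 : 0 ≤ -Real.log (ρ/2) := by linarith
    exact le_trans h2 (le_max_left _ _)
  have hlogL : ∀ t : ℝ, t ∈ Set.Icc (ρ/2) α → |Real.log t| ≤ L := by
    rintro t ⟨h1, h2⟩
    have ht0 : 0 < t := lt_of_lt_of_le hρ2 h1
    rw [abs_le]
    constructor
    · have := Real.log_le_log hρ2 h1
      have hh := le_max_left (-Real.log (ρ/2)) (Real.log α)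
      linarith
    · have := Real.log_le_log ht0 h2
      have hh := le_max_right (-Real.log (ρ/2)) (Real.log α)
      linarith
  have hEnorm : ∀ (σ : ℂ) (t : ℝ), 0 < t → ‖Ef σ t‖ = t ^ (σ.re - 2) := by
    intro σ t ht0
    simp only [Ef]
    rw [Complex.norm_exp, Real.rpow_def_of_pos ht0]
    congr 1
    simp [Complex.mul_re, Complex.sub_re, Complex.ofReal_re, Complex.sub_im, Complex.ofReal_im]
    ring
  set EC : ℝ := Real.exp ((|s.re - 2| + 1) * L) with hEC
  have hEC0 : 0 ≤ EC := (Real.exp_pos _).le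
  have hEout : ∀ σ : ℂ, ‖σ - s‖ ≤ 1 → ∀ t : ℝ, t ∈ Set.Icc (ρ/2) α → ‖Ef σ t‖ ≤ EC := by
    intro σ hσ t ht
    have ht0 : 0 < t := lt_of_lt_of_le hρ2 ht.1
    rw [hEnorm σ t ht0, Real.rpow_def_of_pos ht0, hEC]
    apply Real.exp_le_exp.2
    have hre : |σ.re - 2| ≤ |s.re - 2| + 1 := by
      have h1 : σ.re - 2 = (s.re - 2) + (σ.re - s.re) := by ring
      rw [h1]
      refine le_trans (abs_add_le _ _) ?_
      have h2 : |σ.re - s.re| ≤ 1 := by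
        have h3 := Complex.abs_re_le_norm (σ - s)
        rw [Complex.sub_re] at h3
        calc |σ.re - s.re| ≤ ‖σ - s‖ := h3
          _ ≤ 1 := hσ
      linarith
    calc Real.log t * (σ.re - 2) ≤ |Real.log t * (σ.re - 2)| := le_abs_self _
      _ = |Real.log t| * |σ.re - 2| := abs_mul _ _
      _ ≤ L * (|s.re - 2| + 1) :=
          mul_le_mul (hlogL t ht) hre (abs_nonneg _) hL0
      _ = (|s.re - 2| + 1) * L := mul_comm _ _
  have hEfcont : ∀ σ : ℂ, ContinuousOn (fun t : ℝ => Ef σ t) (Set.Ioc 0 α) := by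
    intro σ t ht
    apply ContinuousAt.continuousWithinAt
    apply Complex.continuous_exp.continuousAt.comp
    exact continuousAt_const.mul
      (Complex.continuous_ofReal.continuousAt.comp (Real.continuousAt_log (ne_of_gt ht.1)))
  -- continuity in t of the H-functions
  have hcontHf_t : ∀ z' ∈ closedBall z (d/4), ∀ c' : ℂ,
      ContinuousOn (fun t : ℝ => Hf z' c' (-(t:ℂ))) (Set.Icc 0 α) := by
    intro z' hz' c'
    have hJden : ∀ u ∈ J, z' * Complex.exp u - 1 ≠ 0 := by
      rintro u ⟨t, ht, rfl⟩; exact N2 z' hz' t ht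
    exact (diffOn_Hf hJden).continuousOn.comp
      (Complex.continuous_ofReal.neg.continuousOn) (fun t ht => Set.mem_image_of_mem _ ht)
  have hcontHz_t : ∀ z' ∈ closedBall z (d/4), ∀ c' : ℂ,
      ContinuousOn (fun t : ℝ => Hz z' c' (-(t:ℂ))) (Set.Icc 0 α) := by
    intro z' hz' c'
    have hJden : ∀ u ∈ J, z' * Complex.exp u - 1 ≠ 0 := by
      rintro u ⟨t, ht, rfl⟩; exact N2 z' hz' t ht
    exact (diffOn_Hz hJden).continuousOn.comp
      (Complex.continuous_ofReal.neg.continuousOn) (fun t ht => Set.mem_image_of_mem _ ht)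
  have hcontHcc_t : ∀ z' ∈ closedBall z (d/4), ∀ c' : ℂ,
      ContinuousOn (fun t : ℝ => Hcc z' c' (-(t:ℂ))) (Set.Icc 0 α) := by
    intro z' hz' c'
    have hJden : ∀ u ∈ J, z' * Complex.exp u - 1 ≠ 0 := by
      rintro u ⟨t, ht, rfl⟩; exact N2 z' hz' t ht
    exact (diffOn_Hcc hJden).continuousOn.comp
      (Complex.continuous_ofReal.neg.continuousOn) (fun t ht => Set.mem_image_of_mem _ ht)
  -- rewriting of the integrand
  have hGeq : ∀ (z' c' σ : ℂ) (t : ℝ),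
      ((t : ℂ) * Complex.exp (-(t : ℂ) * c') / (1 - z' * Complex.exp (-(t : ℂ))) -
        ∑ r ∈ Finset.range (m + 1),
          apostolB r z' c' * (-1 : ℂ) ^ r * (t : ℂ) ^ r / (r.factorial : ℂ)) *
        Complex.exp ((σ - 2) * (Real.log t : ℂ)) = Rm m (Hf z' c') (-(t:ℂ)) * Ef σ t := by
    intro z' c' σ t
    have hX : (t:ℂ) * Complex.exp (-(t:ℂ) * c') / (1 - z' * Complex.exp (-(t:ℂ))) =
        Hf z' c' (-(t:ℂ)) := by
      simp only [Hf]
      rw [show (-(t:ℂ)) * Complex.exp (-(t:ℂ) * c') =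
            -((t:ℂ) * Complex.exp (-(t:ℂ) * c')) by ring,
        show z' * Complex.exp (-(t:ℂ)) - 1 = -(1 - z' * Complex.exp (-(t:ℂ))) by ring,
        neg_div_neg_eq]
    have hS : ∀ r : ℕ, apostolB r z' c' * (-1:ℂ)^r * (t:ℂ)^r / (r.factorial:ℂ) =
        (r.factorial:ℂ)⁻¹ • ((-(t:ℂ))^r • iteratedDeriv r (Hf z' c') 0) := by
      intro r
      rw [smul_eq_mul, smul_eq_mul, apostolB_eq, neg_pow]
      ring
    simp only [Rm, Ef]
    rw [hX]
    congr 2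
    exact Finset.sum_congr rfl fun r _ => hS r
  -- core instantiation for the Hf family
  have haA : (-1:ℝ) < ((m:ℝ)+1) + (s.re - 2) := by linarith
  have hEfsmall : ∀ t : ℝ, t ∈ Set.Ioc 0 (ρ/2) → ‖Ef s t‖ ≤ 1 * t ^ (s.re - 2) := by
    intro t ht; rw [one_mul, hEnorm s t ht.1]
  have hEfout : ∀ t : ℝ, t ∈ Set.Icc (ρ/2) α → ‖Ef s t‖ ≤ EC :=
    hEout s (by simp)
  have coreHf : ∀ z' ∈ closedBall z (d/4), ∀ c' ∈ closedBall c 1,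
      IntegrableOn (fun t : ℝ => Rm m (Hf z' c') (-(t:ℂ)) * Ef s t) (Set.Ioc 0 α) volume ∧
      ∀ t : ℝ, t ∈ Set.Ioc 0 α → ‖Rm m (Hf z' c') (-(t:ℂ)) * Ef s t‖ ≤
        (2*M₁*1/ρ^(m+1)) * t ^ (((m:ℝ)+1) + (s.re - 2)) +
          (M₁' + M₁ * (∑ r ∈ Finset.range (m+1), (α/ρ)^r)) * EC := by
    intro z' hz' c' hc'
    exact core hα hρ hρ1 m (diffOn_Hf (N1 z' hz')) (hcontHf_t z' hz' c')
      (hM₁u z' hz' c' hc') (fun t ht => hM₁'u z' hz' c' hc' t ⟨by linarith [ht.1], ht.2⟩)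
      (hEfcont s) zero_le_one haA hEfsmall hEfout
  refine ⟨?_, ?_, ?_, ?_⟩
  · -- Part A : integrability
    simp only [hGeq]
    exact (coreHf z hzself c hcself).1
  · -- Part B : z-differentiability
    simp only [hGeq]
    have hd8 : (0:ℝ) < d/8 := by linarith
    have hball_sub : ball z (d/8) ⊆ closedBall z (d/4) := fun y hy =>
      mem_closedBall.2 (by have := mem_ball.1 hy; linarith)
    have hy_mem : ∀ z' ∈ ball z (d/8), ∀ y ∈ ball z' (d/8), y ∈ closedBall z (d/4) := by
      intro z' hz' y hy
      have h1 := mem_ball.1 hy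
      have h2 := mem_ball.1 hz'
      exact mem_closedBall.2 (le_trans (dist_triangle y z' z) (by linarith))
    have coreHz : ∀ z' ∈ closedBall z (d/4),
        IntegrableOn (fun t : ℝ => Rm m (Hz z' c) (-(t:ℂ)) * Ef s t) (Set.Ioc 0 α) volume ∧
        ∀ t : ℝ, t ∈ Set.Ioc 0 α → ‖Rm m (Hz z' c) (-(t:ℂ)) * Ef s t‖ ≤
          (2*M₂*1/ρ^(m+1)) * t ^ (((m:ℝ)+1) + (s.re - 2)) +
            (M₂' + M₂ * (∑ r ∈ Finset.range (m+1), (α/ρ)^r)) * EC := by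
      intro z' hz'
      exact core hα hρ hρ1 m (diffOn_Hz (N1 z' hz')) (hcontHz_t z' hz' c)
        (hM₂u z' hz' c hcself) (fun t ht => hM₂'u z' hz' c hcself t ⟨by linarith [ht.1], ht.2⟩)
        (hEfcont s) zero_le_one haA hEfsmall hEfout
    have hcoeffderiv : ∀ z' ∈ ball z (d/8), ∀ r : ℕ,
        HasDerivAt (fun y => iteratedDeriv r (Hf y c) 0) (iteratedDeriv r (Hz z' c) 0) z' := by
      intro z' hz' r
      apply hasDerivAt_param_iteratedDeriv (g := fun y => Hf y c) (g' := fun y => Hz y c)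
        hρ hd8 r (C := M₂)
      · intro y hy
        exact diffOn_Hf (N1 y (hy_mem z' hz' y hy))
      · exact diffOn_Hz (N1 z' (hball_sub hz'))
      · intro ζ hζ y hy
        exact hasDerivAt_Hf_z (N1 y (hy_mem z' hz' y hy) ζ (sphere_subset_closedBall hζ))
      · intro ζ hζ y hy
        exact hM₂u y (hy_mem z' hz' y hy) c hcself ζ hζ
    have hB := hasDerivAt_integral_of_dominated_loc_of_deriv_le
        (μ := volume.restrict (Set.Ioc 0 α)) (x₀ := z) (s := ball z (d/8))
        (F := fun z' t => Rm m (Hf z' c) (-(t:ℂ)) * Ef s t)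
        (F' := fun z' t => Rm m (Hz z' c) (-(t:ℂ)) * Ef s t)
        (bound := fun t => (2*M₂*1/ρ^(m+1)) * t ^ (((m:ℝ)+1) + (s.re - 2)) +
          (M₂' + M₂ * (∑ r ∈ Finset.range (m+1), (α/ρ)^r)) * EC)
        (ball_mem_nhds z hd8) ?_ ?_ ?_ ?_ ?_ ?_
    · exact hB.2.differentiableAt
    · filter_upwards [Metric.ball_mem_nhds z hd8] with z' hz'
      exact (coreHf z' (hball_sub hz') c hcself).1.aestronglyMeasurable
    · exact (coreHf z hzself c hcself).1
    · exact (coreHz z hzself).1.aestronglyMeasurable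
    · filter_upwards [ae_restrict_mem measurableSet_Ioc] with t ht
      intro z' hz'
      exact (coreHz z' (hball_sub hz')).2 t ht
    · exact bound_integrable_aux hα0 haA
    · filter_upwards [ae_restrict_mem measurableSet_Ioc] with t ht
      intro z' hz'
      have h1 : HasDerivAt (fun y => Hf y c (-(t:ℂ))) (Hz z' c (-(t:ℂ))) z' :=
        hasDerivAt_Hf_z (N2 z' (hball_sub hz') t ⟨ht.1.le, ht.2⟩)
      have h2 : HasDerivAt (fun y => ∑ r ∈ Finset.range (m+1),
          (r.factorial:ℂ)⁻¹ • ((-(t:ℂ))^r • iteratedDeriv r (Hf y c) 0))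
          (∑ r ∈ Finset.range (m+1),
          (r.factorial:ℂ)⁻¹ • ((-(t:ℂ))^r • iteratedDeriv r (Hz z' c) 0)) z' :=
        HasDerivAt.fun_sum fun r _ =>
          ((hcoeffderiv z' hz' r).const_smul ((-(t:ℂ))^r)).const_smul ((r.factorial:ℂ)⁻¹)
      have h3 := (h1.sub h2).mul_const (Ef s t)
      simpa only [Rm, Pi.sub_apply] using h3
  · -- Part C : s-differentiability
    simp only [hGeq]
    set η : ℝ := (m:ℝ) + s.re with hη
    have hη0 : 0 < η := by rw [hη]; linarith
    set εs : ℝ := min 1 (η/4) with hεs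
    have hεs0 : 0 < εs := lt_min one_pos (by linarith)
    have hεs1 : εs ≤ 1 := min_le_left _ _
    have hεsη : εs ≤ η/4 := min_le_right _ _
    set β : ℝ := η/4 with hβ
    have hβ0 : 0 < β := by rw [hβ]; linarith
    set aC : ℝ := s.re - εs - 2 - β with haCdef
    have haC : (-1:ℝ) < ((m:ℝ)+1) + aC := by
      rw [haCdef]
      have : εs + β ≤ η/2 := by rw [hβ]; linarith
      have h2 : η = (m:ℝ) + s.re := hη
      linarith
    have hsmallC : ∀ σ ∈ ball s εs, ∀ t : ℝ, t ∈ Set.Ioc 0 (ρ/2) →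
        ‖Ef σ t * (Real.log t : ℂ)‖ ≤ (1/β) * t ^ aC := by
      rintro σ hσ t ⟨ht0, htρ⟩
      have ht1 : t ≤ 1 := by linarith
      rw [norm_mul, hEnorm σ t ht0, Complex.norm_real, Real.norm_eq_abs]
      have hσre : s.re - εs ≤ σ.re := by
        have h1 := Complex.abs_re_le_norm (σ - s)
        rw [Complex.sub_re] at h1
        have h2 : dist σ s < εs := mem_ball.1 hσ
        rw [Complex.dist_eq] at h2
        have h3 : |σ.re - s.re| < εs := lt_of_le_of_lt h1 h2
        have := (abs_lt.1 h3).1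
        linarith
      have hmono : t ^ (σ.re - 2) ≤ t ^ (s.re - εs - 2) :=
        Real.rpow_le_rpow_of_exponent_ge ht0 ht1 (by linarith)
      have hlog : |Real.log t| ≤ t ^ (-β) / β := by
        rw [abs_of_nonpos (Real.log_nonpos ht0.le ht1), ← Real.log_inv]
        calc Real.log t⁻¹ ≤ (t⁻¹) ^ β / β := Real.log_le_rpow_div (inv_nonneg.2 ht0.le) hβ0
          _ = t ^ (-β) / β := by rw [Real.inv_rpow ht0.le, ← Real.rpow_neg ht0.le]
      calc t ^ (σ.re - 2) * |Real.log t| ≤ t ^ (s.re - εs - 2) * (t ^ (-β)/β) :=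
          mul_le_mul hmono hlog (abs_nonneg _) (Real.rpow_nonneg ht0.le _)
        _ = (1/β) * t ^ aC := by
            rw [show aC = (s.re - εs - 2) + (-β) by rw [haCdef]; ring,
              Real.rpow_add ht0]
            ring
    have hbigC : ∀ σ ∈ ball s εs, ∀ t : ℝ, t ∈ Set.Icc (ρ/2) α →
        ‖Ef σ t * (Real.log t:ℂ)‖ ≤ EC * L := by
      intro σ hσ t ht
      rw [norm_mul, Complex.norm_real, Real.norm_eq_abs]
      have hσ1 : ‖σ - s‖ ≤ 1 := by
        have h2 : dist σ s < εs := mem_ball.1 hσ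
        rw [Complex.dist_eq] at h2
        calc ‖σ - s‖ = ‖σ - s‖ := rfl
          _ ≤ 1 := by linarith [lt_of_lt_of_le h2 hεs1]
      exact mul_le_mul (hEout σ hσ1 t ht) (hlogL t ht) (abs_nonneg _) hEC0
    have hElogcont : ∀ σ : ℂ, ContinuousOn (fun t : ℝ => Ef σ t * (Real.log t : ℂ))
        (Set.Ioc 0 α) := by
      intro σ
      apply (hEfcont σ).mul
      intro t ht
      exact ContinuousAt.continuousWithinAt
        (Complex.continuous_ofReal.continuousAt.comp (Real.continuousAt_log (ne_of_gt ht.1)))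
    have coreC : ∀ σ ∈ ball s εs,
        IntegrableOn (fun t : ℝ => Rm m (Hf z c) (-(t:ℂ)) * (Ef σ t * (Real.log t:ℂ)))
          (Set.Ioc 0 α) volume ∧
        ∀ t : ℝ, t ∈ Set.Ioc 0 α →
          ‖Rm m (Hf z c) (-(t:ℂ)) * (Ef σ t * (Real.log t:ℂ))‖ ≤
          (2*M₁*(1/β)/ρ^(m+1)) * t ^ (((m:ℝ)+1) + aC) +
            (M₁' + M₁ * (∑ r ∈ Finset.range (m+1), (α/ρ)^r)) * (EC * L) := by
      intro σ hσ
      exact core hα hρ hρ1 m (diffOn_Hf (N1 z hzself)) (hcontHf_t z hzself c)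
        (hM₁u z hzself c hcself) (fun t ht => hM₁'u z hzself c hcself t ⟨by linarith [ht.1], ht.2⟩)
        (hElogcont σ) (by positivity) haC (hsmallC σ hσ) (hbigC σ hσ)
    have hmeasC : ∀ σ : ℂ, AEStronglyMeasurable (fun t : ℝ => Rm m (Hf z c) (-(t:ℂ)) * Ef σ t)
        (volume.restrict (Set.Ioc 0 α)) := by
      intro σ
      apply ContinuousOn.aestronglyMeasurable _ measurableSet_Ioc
      apply ContinuousOn.mul _ (hEfcont σ)
      simp only [Rm]
      apply ContinuousOn.sub ((hcontHf_t z hzself c).mono Set.Ioc_subset_Icc_self)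
      exact (continuous_finset_sum _ fun r _ => by fun_prop).continuousOn
    have hC := hasDerivAt_integral_of_dominated_loc_of_deriv_le
        (μ := volume.restrict (Set.Ioc 0 α)) (x₀ := s) (s := ball s εs)
        (F := fun σ t => Rm m (Hf z c) (-(t:ℂ)) * Ef σ t)
        (F' := fun σ t => Rm m (Hf z c) (-(t:ℂ)) * (Ef σ t * (Real.log t : ℂ)))
        (bound := fun t => (2*M₁*(1/β)/ρ^(m+1)) * t ^ (((m:ℝ)+1) + aC) +
          (M₁' + M₁ * (∑ r ∈ Finset.range (m+1), (α/ρ)^r)) * (EC * L))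
        (ball_mem_nhds s hεs0) ?_ ?_ ?_ ?_ ?_ ?_
    · exact hC.2.differentiableAt
    · exact Filter.Eventually.of_forall fun σ => hmeasC σ
    · exact (coreHf z hzself c hcself).1
    · exact (coreC s (mem_ball_self hεs0)).1.aestronglyMeasurable
    · filter_upwards [ae_restrict_mem measurableSet_Ioc] with t ht
      intro σ hσ
      exact (coreC σ hσ).2 t ht
    · exact bound_integrable_aux hα0 haC
    · filter_upwards [ae_restrict_mem measurableSet_Ioc] with t ht
      intro σ hσ
      have h0 : HasDerivAt (fun σ : ℂ => (σ - 2) * ((Real.log t:ℝ):ℂ)) ((Real.log t:ℝ):ℂ) σ := by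
        simpa using ((hasDerivAt_id σ).sub_const (2:ℂ)).mul_const ((Real.log t:ℝ):ℂ)
      have hE : HasDerivAt (fun σ => Ef σ t) (Ef σ t * (Real.log t:ℂ)) σ := by
        have := h0.cexp
        simpa only [Ef] using this
      exact hE.const_mul (Rm m (Hf z c) (-(t:ℂ)))
  · -- Part D : w-differentiability
    simp only [hGeq]
    have hhalf : (0:ℝ) < 1/2 := one_half_pos
    have hwball : ∀ w' ∈ ball w (1/2:ℝ), ((N:ℂ) + w') ∈ closedBall c 1 := by
      intro w' hw'
      have h1 : dist ((N:ℂ) + w') ((N:ℂ) + w) = dist w' w := dist_add_left _ _ _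
      rw [mem_closedBall, hc, h1]
      have := mem_ball.1 hw'
      linarith
    have hy_memD : ∀ w' ∈ ball w (1/2:ℝ), ∀ y ∈ ball w' (1/2:ℝ),
        ((N:ℂ) + y) ∈ closedBall c 1 := by
      intro w' hw' y hy
      have h1 : dist ((N:ℂ) + y) ((N:ℂ) + w) = dist y w := dist_add_left _ _ _
      rw [mem_closedBall, hc, h1]
      have h2 := mem_ball.1 hy
      have h3 := mem_ball.1 hw'
      linarith [dist_triangle y w' w]
    have coreHcc : ∀ c' ∈ closedBall c 1,
        IntegrableOn (fun t : ℝ => Rm m (Hcc z c') (-(t:ℂ)) * Ef s t) (Set.Ioc 0 α) volume ∧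
        ∀ t : ℝ, t ∈ Set.Ioc 0 α → ‖Rm m (Hcc z c') (-(t:ℂ)) * Ef s t‖ ≤
          (2*M₃*1/ρ^(m+1)) * t ^ (((m:ℝ)+1) + (s.re - 2)) +
            (M₃' + M₃ * (∑ r ∈ Finset.range (m+1), (α/ρ)^r)) * EC := by
      intro c' hc'
      exact core hα hρ hρ1 m (diffOn_Hcc (N1 z hzself)) (hcontHcc_t z hzself c')
        (hM₃u z hzself c' hc') (fun t ht => hM₃'u z hzself c' hc' t ⟨by linarith [ht.1], ht.2⟩)
        (hEfcont s) zero_le_one haA hEfsmall hEfout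
    have hderivC : ∀ (y : ℂ) (ζ : ℂ),
        HasDerivAt (fun y => Hf z ((N:ℂ)+y) ζ) (Hcc z ((N:ℂ)+y) ζ) y := by
      intro y ζ
      have hbase := hasDerivAt_Hf_c z ((N:ℂ)+y) ζ
      have haff : HasDerivAt (fun y : ℂ => (N:ℂ)+y) 1 y := by
        simpa using (hasDerivAt_id y).const_add ((N:ℂ))
      have := HasDerivAt.comp y hbase haff
      rw [mul_one] at this; exact this
    have hcoeffderivD : ∀ w' ∈ ball w (1/2:ℝ), ∀ r : ℕ,
        HasDerivAt (fun y => iteratedDeriv r (Hf z ((N:ℂ)+y)) 0)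
          (iteratedDeriv r (Hcc z ((N:ℂ)+w')) 0) w' := by
      intro w' hw' r
      apply hasDerivAt_param_iteratedDeriv (g := fun y => Hf z ((N:ℂ)+y))
        (g' := fun y => Hcc z ((N:ℂ)+y)) hρ hhalf r (C := M₃)
      · intro y _
        exact diffOn_Hf (N1 z hzself)
      · exact diffOn_Hcc (N1 z hzself)
      · intro ζ _ y _
        exact hderivC y ζ
      · intro ζ hζ y hy
        exact hM₃u z hzself ((N:ℂ)+y) (hy_memD w' hw' y hy) ζ hζ
    have hD := hasDerivAt_integral_of_dominated_loc_of_deriv_le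
        (μ := volume.restrict (Set.Ioc 0 α)) (x₀ := w) (s := ball w (1/2))
        (F := fun w' t => Rm m (Hf z ((N:ℂ)+w')) (-(t:ℂ)) * Ef s t)
        (F' := fun w' t => Rm m (Hcc z ((N:ℂ)+w')) (-(t:ℂ)) * Ef s t)
        (bound := fun t => (2*M₃*1/ρ^(m+1)) * t ^ (((m:ℝ)+1) + (s.re - 2)) +
          (M₃' + M₃ * (∑ r ∈ Finset.range (m+1), (α/ρ)^r)) * EC)
        (ball_mem_nhds w hhalf) ?_ ?_ ?_ ?_ ?_ ?_
    · exact hD.2.differentiableAt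
    · filter_upwards [Metric.ball_mem_nhds w hhalf] with w' hw'
      exact (coreHf z hzself ((N:ℂ)+w') (hwball w' hw')).1.aestronglyMeasurable
    · have := (coreHf z hzself c hcself).1
      rw [hc] at this
      exact this
    · have := (coreHcc c hcself).1.aestronglyMeasurable
      rw [hc] at this
      exact this
    · filter_upwards [ae_restrict_mem measurableSet_Ioc] with t ht
      intro w' hw'
      exact (coreHcc ((N:ℂ)+w') (hwball w' hw')).2 t ht
    · exact bound_integrable_aux hα0 haA
    · filter_upwards [ae_restrict_mem measurableSet_Ioc] with t ht
      intro w' hw'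
      have h1 : HasDerivAt (fun y => Hf z ((N:ℂ)+y) (-(t:ℂ))) (Hcc z ((N:ℂ)+w') (-(t:ℂ))) w' :=
        hderivC w' (-(t:ℂ))
      have h2 : HasDerivAt (fun y => ∑ r ∈ Finset.range (m+1),
          (r.factorial:ℂ)⁻¹ • ((-(t:ℂ))^r • iteratedDeriv r (Hf z ((N:ℂ)+y)) 0))
          (∑ r ∈ Finset.range (m+1),
          (r.factorial:ℂ)⁻¹ • ((-(t:ℂ))^r • iteratedDeriv r (Hcc z ((N:ℂ)+w')) 0)) w' :=
        HasDerivAt.fun_sum fun r _ =>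
          ((hcoeffderivD w' hw' r).const_smul ((-(t:ℂ))^r)).const_smul ((r.factorial:ℂ)⁻¹)
      have h3 := (h1.sub h2).mul_const (Ef s t)
      simpa only [Rm, Pi.sub_apply] using h3
end
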